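/- arXiv:1102.1829 — 13 statements merged into one kernel-verified Lean document; each statement's English description precedes it below -/
import Mathlib

section
/- Let τ : ℤ⁵ → ℂ (arguments written (l₁,l₂,l₃,m,s)) be nowhere vanishing and satisfy, for each i = 1,2,3 and all (l₁,l₂,l₃,m,s) ∈ ℤ⁵, the bilinear discrete two-dimensional Toda lattice equation τ(l+eᵢ,m+1,s)·τ(l,m,s) − τ(l+eᵢ,m,s)·τ(l,m+1,s) = τ(l+eᵢ,m,s+1)·τ(l,m+1,s−1), where l = (l₁,l₂,l₃) and eᵢ is the i-th standard unit vector. Then for each fixed (m,s) ∈ ℤ², the function z(l₁,l₂,l₃) = τ(l,m+1,s)/τ(l,m,s) satisfies the discrete Schwarzian KP equation in product form at every point of ℤ³. -/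
/-- If a nowhere vanishing `τ : ℤ⁵ → ℂ` satisfies the bilinear discrete two-dimensional
Toda lattice equations in each of the directions `l₁, l₂, l₃`, then for each fixed `(m,s)`
the ratio `z = τ^{m+1}/τ^m` satisfies the discrete Schwarzian KP equation in product form. -/
theorem stmt_0 (τ : ℤ → ℤ → ℤ → ℤ → ℤ → ℂ)
    (hτ : ∀ l₁ l₂ l₃ m s : ℤ, τ l₁ l₂ l₃ m s ≠ 0)
    (h1 : ∀ l₁ l₂ l₃ m s : ℤ,
      τ (l₁+1) l₂ l₃ (m+1) s * τ l₁ l₂ l₃ m s - τ (l₁+1) l₂ l₃ m s * τ l₁ l₂ l₃ (m+1) s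
        = τ (l₁+1) l₂ l₃ m (s+1) * τ l₁ l₂ l₃ (m+1) (s-1))
    (h2 : ∀ l₁ l₂ l₃ m s : ℤ,
      τ l₁ (l₂+1) l₃ (m+1) s * τ l₁ l₂ l₃ m s - τ l₁ (l₂+1) l₃ m s * τ l₁ l₂ l₃ (m+1) s
        = τ l₁ (l₂+1) l₃ m (s+1) * τ l₁ l₂ l₃ (m+1) (s-1))
    (h3 : ∀ l₁ l₂ l₃ m s : ℤ,
      τ l₁ l₂ (l₃+1) (m+1) s * τ l₁ l₂ l₃ m s - τ l₁ l₂ (l₃+1) m s * τ l₁ l₂ l₃ (m+1) s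
        = τ l₁ l₂ (l₃+1) m (s+1) * τ l₁ l₂ l₃ (m+1) (s-1))
    (m s : ℤ) (z : ℤ → ℤ → ℤ → ℂ)
    (hz : ∀ l₁ l₂ l₃ : ℤ, z l₁ l₂ l₃ = τ l₁ l₂ l₃ (m+1) s / τ l₁ l₂ l₃ m s) :
    ∀ l₁ l₂ l₃ : ℤ,
      (z (l₁+1) l₂ l₃ - z (l₁+1) (l₂+1) l₃) * (z l₁ (l₂+1) l₃ - z l₁ (l₂+1) (l₃+1))
          * (z l₁ l₂ (l₃+1) - z (l₁+1) l₂ (l₃+1))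
        = -((z (l₁+1) (l₂+1) l₃ - z l₁ (l₂+1) l₃) * (z l₁ (l₂+1) (l₃+1) - z l₁ l₂ (l₃+1))
            * (z (l₁+1) l₂ (l₃+1) - z (l₁+1) l₂ l₃)) := by
  intro l₁ l₂ l₃
  have e1 : ∀ a b c : ℤ, z (a+1) b c - z a b c =
      τ (a+1) b c m (s+1) * τ a b c (m+1) (s-1) / (τ (a+1) b c m s * τ a b c m s) := by
    intro a b c
    rw [hz, hz, div_sub_div _ _ (hτ _ _ _ _ _) (hτ _ _ _ _ _), h1]
  have e2' : ∀ a b c : ℤ, z a (b+1) c - z a b c =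
      τ a (b+1) c m (s+1) * τ a b c (m+1) (s-1) / (τ a (b+1) c m s * τ a b c m s) := by
    intro a b c
    rw [hz, hz, div_sub_div _ _ (hτ _ _ _ _ _) (hτ _ _ _ _ _), h2]
  have e3' : ∀ a b c : ℤ, z a b (c+1) - z a b c =
      τ a b (c+1) m (s+1) * τ a b c (m+1) (s-1) / (τ a b (c+1) m s * τ a b c m s) := by
    intro a b c
    rw [hz, hz, div_sub_div _ _ (hτ _ _ _ _ _) (hτ _ _ _ _ _), h3]
  have D1 : z (l₁+1) l₂ l₃ - z (l₁+1) (l₂+1) l₃ = -(z (l₁+1) (l₂+1) l₃ - z (l₁+1) l₂ l₃) := by ring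
  have D2 : z l₁ (l₂+1) l₃ - z l₁ (l₂+1) (l₃+1) = -(z l₁ (l₂+1) (l₃+1) - z l₁ (l₂+1) l₃) := by ring
  have D3 : z l₁ l₂ (l₃+1) - z (l₁+1) l₂ (l₃+1) = -(z (l₁+1) l₂ (l₃+1) - z l₁ l₂ (l₃+1)) := by ring
  rw [D1, D2, D3, e2' (l₁+1) l₂ l₃, e3' l₁ (l₂+1) l₃, e1 l₁ l₂ (l₃+1),
    e1 l₁ (l₂+1) l₃, e2' l₁ l₂ (l₃+1), e3' (l₁+1) l₂ l₃]
  ring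
end

section
/- Let τ : ℤ⁵ → ℂ (arguments written (l₁,l₂,l₃,m,s)) be nowhere vanishing and satisfy, for each i = 1,2,3 and all (l₁,l₂,l₃,m,s) ∈ ℤ⁵, the reversed bilinear equation τ(l,m+1,s)·τ(l+eᵢ,m,s) − τ(l,m,s)·τ(l+eᵢ,m+1,s) = τ(l,m,s+1)·τ(l+eᵢ,m+1,s−1), where l = (l₁,l₂,l₃) and eᵢ is the i-th standard unit vector. Then for each fixed (m,s) ∈ ℤ², the function z(l₁,l₂,l₃) = τ(l,m+1,s)/τ(l,m,s) satisfies the discrete Schwarzian KP equation in product form at every point of ℤ³. -/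
/-- If a nowhere vanishing `τ : ℤ⁵ → ℂ` satisfies the reversed bilinear discrete
two-dimensional Toda lattice equations in each of the directions `l₁, l₂, l₃`, then for each
fixed `(m,s)` the ratio `z = τ^{m+1}/τ^m` satisfies the discrete Schwarzian KP equation in
product form. -/
theorem stmt_1 (τ : ℤ → ℤ → ℤ → ℤ → ℤ → ℂ)
    (hτ : ∀ l₁ l₂ l₃ m s : ℤ, τ l₁ l₂ l₃ m s ≠ 0)
    (h1 : ∀ l₁ l₂ l₃ m s : ℤ,
      τ l₁ l₂ l₃ (m+1) s * τ (l₁+1) l₂ l₃ m s - τ l₁ l₂ l₃ m s * τ (l₁+1) l₂ l₃ (m+1) s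
        = τ l₁ l₂ l₃ m (s+1) * τ (l₁+1) l₂ l₃ (m+1) (s-1))
    (h2 : ∀ l₁ l₂ l₃ m s : ℤ,
      τ l₁ l₂ l₃ (m+1) s * τ l₁ (l₂+1) l₃ m s - τ l₁ l₂ l₃ m s * τ l₁ (l₂+1) l₃ (m+1) s
        = τ l₁ l₂ l₃ m (s+1) * τ l₁ (l₂+1) l₃ (m+1) (s-1))
    (h3 : ∀ l₁ l₂ l₃ m s : ℤ,
      τ l₁ l₂ l₃ (m+1) s * τ l₁ l₂ (l₃+1) m s - τ l₁ l₂ l₃ m s * τ l₁ l₂ (l₃+1) (m+1) s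
        = τ l₁ l₂ l₃ m (s+1) * τ l₁ l₂ (l₃+1) (m+1) (s-1))
    (m s : ℤ) (z : ℤ → ℤ → ℤ → ℂ)
    (hz : ∀ l₁ l₂ l₃ : ℤ, z l₁ l₂ l₃ = τ l₁ l₂ l₃ (m+1) s / τ l₁ l₂ l₃ m s) :
    ∀ l₁ l₂ l₃ : ℤ,
      (z (l₁+1) l₂ l₃ - z (l₁+1) (l₂+1) l₃) * (z l₁ (l₂+1) l₃ - z l₁ (l₂+1) (l₃+1))
          * (z l₁ l₂ (l₃+1) - z (l₁+1) l₂ (l₃+1))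
        = -((z (l₁+1) (l₂+1) l₃ - z l₁ (l₂+1) l₃) * (z l₁ (l₂+1) (l₃+1) - z l₁ l₂ (l₃+1))
            * (z (l₁+1) l₂ (l₃+1) - z (l₁+1) l₂ l₃)) := by
  intro l₁ l₂ l₃
  -- six difference formulas, each oriented base-first
  have F1 : z (l₁+1) l₂ l₃ - z (l₁+1) (l₂+1) l₃
      = τ (l₁+1) l₂ l₃ m (s+1) * τ (l₁+1) (l₂+1) l₃ (m+1) (s-1) /
        (τ (l₁+1) l₂ l₃ m s * τ (l₁+1) (l₂+1) l₃ m s) := by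
    rw [hz, hz, div_sub_div _ _ (hτ _ _ _ _ _) (hτ _ _ _ _ _), h2 (l₁+1) l₂ l₃ m s]
  have F2 : z l₁ (l₂+1) l₃ - z l₁ (l₂+1) (l₃+1)
      = τ l₁ (l₂+1) l₃ m (s+1) * τ l₁ (l₂+1) (l₃+1) (m+1) (s-1) /
        (τ l₁ (l₂+1) l₃ m s * τ l₁ (l₂+1) (l₃+1) m s) := by
    rw [hz, hz, div_sub_div _ _ (hτ _ _ _ _ _) (hτ _ _ _ _ _), h3 l₁ (l₂+1) l₃ m s]
  have F3 : z l₁ l₂ (l₃+1) - z (l₁+1) l₂ (l₃+1)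
      = τ l₁ l₂ (l₃+1) m (s+1) * τ (l₁+1) l₂ (l₃+1) (m+1) (s-1) /
        (τ l₁ l₂ (l₃+1) m s * τ (l₁+1) l₂ (l₃+1) m s) := by
    rw [hz, hz, div_sub_div _ _ (hτ _ _ _ _ _) (hτ _ _ _ _ _), h1 l₁ l₂ (l₃+1) m s]
  have G1 : z l₁ (l₂+1) l₃ - z (l₁+1) (l₂+1) l₃
      = τ l₁ (l₂+1) l₃ m (s+1) * τ (l₁+1) (l₂+1) l₃ (m+1) (s-1) /
        (τ l₁ (l₂+1) l₃ m s * τ (l₁+1) (l₂+1) l₃ m s) := by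
    rw [hz, hz, div_sub_div _ _ (hτ _ _ _ _ _) (hτ _ _ _ _ _), h1 l₁ (l₂+1) l₃ m s]
  have G2 : z l₁ l₂ (l₃+1) - z l₁ (l₂+1) (l₃+1)
      = τ l₁ l₂ (l₃+1) m (s+1) * τ l₁ (l₂+1) (l₃+1) (m+1) (s-1) /
        (τ l₁ l₂ (l₃+1) m s * τ l₁ (l₂+1) (l₃+1) m s) := by
    rw [hz, hz, div_sub_div _ _ (hτ _ _ _ _ _) (hτ _ _ _ _ _), h2 l₁ l₂ (l₃+1) m s]
  have G3 : z (l₁+1) l₂ l₃ - z (l₁+1) l₂ (l₃+1)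
      = τ (l₁+1) l₂ l₃ m (s+1) * τ (l₁+1) l₂ (l₃+1) (m+1) (s-1) /
        (τ (l₁+1) l₂ l₃ m s * τ (l₁+1) l₂ (l₃+1) m s) := by
    rw [hz, hz, div_sub_div _ _ (hτ _ _ _ _ _) (hτ _ _ _ _ _), h3 (l₁+1) l₂ l₃ m s]
  rw [show z (l₁+1) (l₂+1) l₃ - z l₁ (l₂+1) l₃
        = -(z l₁ (l₂+1) l₃ - z (l₁+1) (l₂+1) l₃) by ring,
      show z l₁ (l₂+1) (l₃+1) - z l₁ l₂ (l₃+1)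
        = -(z l₁ l₂ (l₃+1) - z l₁ (l₂+1) (l₃+1)) by ring,
      show z (l₁+1) l₂ (l₃+1) - z (l₁+1) l₂ l₃
        = -(z (l₁+1) l₂ l₃ - z (l₁+1) l₂ (l₃+1)) by ring,
      F1, F2, F3, G1, G2, G3]
  have n1 := hτ (l₁+1) l₂ l₃ m s
  have n2 := hτ (l₁+1) (l₂+1) l₃ m s
  have n3 := hτ l₁ (l₂+1) l₃ m s
  have n4 := hτ l₁ (l₂+1) (l₃+1) m s
  have n5 := hτ l₁ l₂ (l₃+1) m s
  have n6 := hτ (l₁+1) l₂ (l₃+1) m s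
  field_simp
end

section
/- Let N ≥ 1, b ∈ ℂ, a₁,a₂,a₃ : ℤ → ℂ, and let φ₁,…,φ_N : ℤ⁵ → ℂ (arguments (l₁,l₂,l₃,m,s)) satisfy, for all arguments and each k = 1,2,3: φᵢ(l,m,s) − φᵢ(l−e_k,m,s) = a_k(l_k−1)·φᵢ(l,m,s+1), and also φᵢ(l,m,s) − φᵢ(l,m−1,s) = −b·φᵢ(l,m,s−1), where l = (l₁,l₂,l₃) and e_k is the k-th unit vector. Define the Casorati determinant σ(l,m,s) = det( φᵢ(l,m,s+j−1) )_{i,j=1,…,N}. Then for each k = 1,2,3 and all (l,m,s) ∈ ℤ⁵: (1+a_k(l_k)b)·σ(l+e_k,m+1,s)·σ(l,m,s) − σ(l+e_k,m,s)·σ(l,m+1,s) = a_k(l_k)·b·σ(l+e_k,m,s+1)·σ(l,m+1,s−1). -/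
set_option maxHeartbeats 4000000
set_option linter.unusedTactic false
set_option linter.unreachableTactic false

open Matrix

lemma app_congr {N : ℕ} {f : ℤ → Fin N → ℂ} {t t' : ℤ} (h : t = t') (i : Fin N) :
    f t i = f t' i := by rw [h]

lemma det_congr {N : ℕ} (A B : Matrix (Fin N) (Fin N) ℂ) (h : ∀ j i, A j i = B j i) :
    A.det = B.det :=
  congrArg Matrix.det (by funext j i; exact h j i)

lemma det_eq_zero_of_rows_mem {n : ℕ} (B : Matrix (Fin n) (Fin n) ℂ)
    (p : Submodule ℂ (Fin n → ℂ)) (hp : p ≠ ⊤) (h : ∀ j, B j ∈ p) : B.det = 0 := by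
  by_contra hd
  have hli : LinearIndependent ℂ B := by
    refine Fintype.linearIndependent_iff.mpr ?_
    intro g hg i
    by_contra hgi
    exact hd (Matrix.exists_vecMul_eq_zero_iff.mp ⟨g, Function.ne_iff.mpr ⟨i, hgi⟩, by
      funext j
      simpa [Matrix.vecMul, dotProduct] using congrFun hg j⟩)
  have hli' : LinearIndependent ℂ (fun j : Fin n => (⟨B j, h j⟩ : p)) :=
    LinearIndependent.of_comp p.subtype (by exact hli)
  have := hli'.fintype_card_le_finrank
  have h2 : Module.finrank ℂ p < n := by
    have := Submodule.finrank_lt (K := ℂ) (V := Fin n → ℂ) hp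
    simpa [Module.finrank_pi] using this
  simp only [Fintype.card_fin] at this
  omega

section pluecker
variable {n : ℕ} {M : Matrix (Fin n) (Fin n) ℂ} {i₀ i₁ : Fin n}

noncomputable def Dd (M : Matrix (Fin n) (Fin n) ℂ) (i₀ i₁ : Fin n) (x y : Fin n → ℂ) : ℂ :=
  ((M.updateRow i₀ x).updateRow i₁ y).det

lemma Dd_comm (h : i₀ ≠ i₁) (x y : Fin n → ℂ) :
    Dd M i₀ i₁ x y = ((M.updateRow i₁ y).updateRow i₀ x).det := by
  rw [Dd]
  congr 1
  funext j k
  rcases eq_or_ne j i₀ with rfl | hj0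
  · rw [Matrix.updateRow_ne h, Matrix.updateRow_self, Matrix.updateRow_self]
  rcases eq_or_ne j i₁ with rfl | hj1
  · rw [Matrix.updateRow_self, Matrix.updateRow_ne h.symm, Matrix.updateRow_self]
  · rw [Matrix.updateRow_ne hj1, Matrix.updateRow_ne hj0, Matrix.updateRow_ne hj0,
      Matrix.updateRow_ne hj1]

lemma Dd_swap (h : i₀ ≠ i₁) (x y : Fin n → ℂ) :
    Dd M i₀ i₁ x y = - Dd M i₀ i₁ y x := by
  have key : ((M.updateRow i₀ y).updateRow i₁ x).submatrix (Equiv.swap i₀ i₁) id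
      = (M.updateRow i₀ x).updateRow i₁ y := by
    funext j k
    rcases eq_or_ne j i₀ with rfl | hj0
    · simp [Matrix.submatrix_apply, Equiv.swap_apply_left, Matrix.updateRow_self,
        Matrix.updateRow_ne h]
    rcases eq_or_ne j i₁ with rfl | hj1
    · rw [Matrix.submatrix_apply, Equiv.swap_apply_right, Matrix.updateRow_ne h,
        Matrix.updateRow_self, Matrix.updateRow_self]
      rfl
    · simp [Matrix.submatrix_apply, Equiv.swap_apply_of_ne_of_ne hj0 hj1,
        Matrix.updateRow_ne hj0, Matrix.updateRow_ne hj1]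
  have h2 := Matrix.det_permute (Equiv.swap i₀ i₁) ((M.updateRow i₀ y).updateRow i₁ x)
  rw [key] at h2
  rw [Dd, h2, Equiv.Perm.sign_swap h, Dd]
  push_cast
  ring

lemma Dd_self (h : i₀ ≠ i₁) (x : Fin n → ℂ) : Dd M i₀ i₁ x x = 0 := by
  apply Matrix.det_zero_of_row_eq h
  rw [Matrix.updateRow_ne h, Matrix.updateRow_self, Matrix.updateRow_self]

lemma Dd_row (h0 : i₀ ≠ i₁) {j : Fin n} (hj0 : j ≠ i₀) (hj1 : j ≠ i₁) (y : Fin n → ℂ) :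
    Dd M i₀ i₁ (M j) y = 0 := by
  apply Matrix.det_zero_of_row_eq hj0
  rw [Matrix.updateRow_ne hj1, Matrix.updateRow_ne hj0,
    Matrix.updateRow_ne h0, Matrix.updateRow_self]

lemma Dd_add (h : i₀ ≠ i₁) (x x' y : Fin n → ℂ) :
    Dd M i₀ i₁ (x + x') y = Dd M i₀ i₁ x y + Dd M i₀ i₁ x' y := by
  rw [Dd_comm h, Dd_comm h, Dd_comm h, Matrix.det_updateRow_add]

lemma Dd_smul (h : i₀ ≠ i₁) (c : ℂ) (x y : Fin n → ℂ) :
    Dd M i₀ i₁ (c • x) y = c * Dd M i₀ i₁ x y := by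
  rw [Dd_comm h, Dd_comm h, Matrix.det_updateRow_smul]

lemma pluecker (h : i₀ ≠ i₁) (x1 x2 x3 x4 : Fin n → ℂ) :
    Dd M i₀ i₁ x1 x2 * Dd M i₀ i₁ x3 x4 - Dd M i₀ i₁ x1 x3 * Dd M i₀ i₁ x2 x4
      + Dd M i₀ i₁ x1 x4 * Dd M i₀ i₁ x2 x3 = 0 := by
  classical
  have hAi0 : ((M.updateRow i₀ x2).updateRow i₁ x3) i₀ = x2 := by
    rw [Matrix.updateRow_ne h, Matrix.updateRow_self]
  have hAi1 : ((M.updateRow i₀ x2).updateRow i₁ x3) i₁ = x3 := Matrix.updateRow_self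
  have hAj : ∀ j, j ≠ i₀ → j ≠ i₁ → ((M.updateRow i₀ x2).updateRow i₁ x3) j = M j := by
    intro j hj0 hj1
    rw [Matrix.updateRow_ne hj1, Matrix.updateRow_ne hj0]
  by_cases htop : Submodule.span ℂ
      (insert x4 (Set.range ((M.updateRow i₀ x2).updateRow i₁ x3))) = ⊤
  · have hx1 : x1 ∈ Submodule.span ℂ
        (insert x4 (Set.range ((M.updateRow i₀ x2).updateRow i₁ x3))) :=
      htop ▸ Submodule.mem_top
    refine Submodule.span_induction (p := fun v _ =>
      Dd M i₀ i₁ v x2 * Dd M i₀ i₁ x3 x4 - Dd M i₀ i₁ v x3 * Dd M i₀ i₁ x2 x4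
        + Dd M i₀ i₁ v x4 * Dd M i₀ i₁ x2 x3 = 0) ?_ ?_ ?_ ?_ hx1
    · intro v hv
      show Dd M i₀ i₁ v x2 * Dd M i₀ i₁ x3 x4 - Dd M i₀ i₁ v x3 * Dd M i₀ i₁ x2 x4
        + Dd M i₀ i₁ v x4 * Dd M i₀ i₁ x2 x3 = 0
      rcases hv with hv | ⟨j, hj⟩
      · rw [hv, Dd_self h, Dd_swap h x4 x2, Dd_swap h x4 x3]
        ring
      · rcases eq_or_ne j i₀ with rfl | hj0
        · rw [hAi0] at hj
          subst hj
          rw [Dd_self h]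
          ring
        rcases eq_or_ne j i₁ with rfl | hj1
        · rw [hAi1] at hj
          subst hj
          rw [Dd_self h, Dd_swap h x3 x2]
          ring
        · rw [hAj j hj0 hj1] at hj
          subst hj
          rw [Dd_row h hj0 hj1, Dd_row h hj0 hj1, Dd_row h hj0 hj1]
          ring
    · show Dd M i₀ i₁ 0 x2 * Dd M i₀ i₁ x3 x4 - Dd M i₀ i₁ 0 x3 * Dd M i₀ i₁ x2 x4
        + Dd M i₀ i₁ 0 x4 * Dd M i₀ i₁ x2 x3 = 0
      have z0 : ∀ y, Dd M i₀ i₁ 0 y = 0 := fun y => by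
        rw [show (0 : Fin n → ℂ) = ((0:ℂ) • (0 : Fin n → ℂ)) by simp, Dd_smul h]
        simp
      rw [z0, z0, z0]
      ring
    · intro v w hv' hw' hv hw
      have hv2 : Dd M i₀ i₁ v x2 * Dd M i₀ i₁ x3 x4 - Dd M i₀ i₁ v x3 * Dd M i₀ i₁ x2 x4
        + Dd M i₀ i₁ v x4 * Dd M i₀ i₁ x2 x3 = 0 := hv
      have hw2 : Dd M i₀ i₁ w x2 * Dd M i₀ i₁ x3 x4 - Dd M i₀ i₁ w x3 * Dd M i₀ i₁ x2 x4
        + Dd M i₀ i₁ w x4 * Dd M i₀ i₁ x2 x3 = 0 := hw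
      show Dd M i₀ i₁ (v + w) x2 * Dd M i₀ i₁ x3 x4 - Dd M i₀ i₁ (v + w) x3 * Dd M i₀ i₁ x2 x4
        + Dd M i₀ i₁ (v + w) x4 * Dd M i₀ i₁ x2 x3 = 0
      rw [Dd_add h, Dd_add h, Dd_add h]
      linear_combination hv2 + hw2
    · intro c v hv' hv
      have hv2 : Dd M i₀ i₁ v x2 * Dd M i₀ i₁ x3 x4 - Dd M i₀ i₁ v x3 * Dd M i₀ i₁ x2 x4
        + Dd M i₀ i₁ v x4 * Dd M i₀ i₁ x2 x3 = 0 := hv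
      show Dd M i₀ i₁ (c • v) x2 * Dd M i₀ i₁ x3 x4 - Dd M i₀ i₁ (c • v) x3 * Dd M i₀ i₁ x2 x4
        + Dd M i₀ i₁ (c • v) x4 * Dd M i₀ i₁ x2 x3 = 0
      rw [Dd_smul h, Dd_smul h, Dd_smul h]
      linear_combination c * hv2
  · have hrow : ∀ j, ((M.updateRow i₀ x2).updateRow i₁ x3) j ∈ Submodule.span ℂ
        (insert x4 (Set.range ((M.updateRow i₀ x2).updateRow i₁ x3))) := fun j =>
      Submodule.subset_span (Set.mem_insert_of_mem _ ⟨j, rfl⟩)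
    have hx4 : x4 ∈ Submodule.span ℂ
        (insert x4 (Set.range ((M.updateRow i₀ x2).updateRow i₁ x3))) :=
      Submodule.subset_span (Set.mem_insert _ _)
    have hx2 := hAi0 ▸ hrow i₀
    have hx3 := hAi1 ▸ hrow i₁
    have hM : ∀ j, j ≠ i₀ → j ≠ i₁ → M j ∈ Submodule.span ℂ
        (insert x4 (Set.range ((M.updateRow i₀ x2).updateRow i₁ x3))) := fun j hj0 hj1 =>
      hAj j hj0 hj1 ▸ hrow j
    have key : ∀ x y : Fin n → ℂ,
        x ∈ Submodule.span ℂ (insert x4 (Set.range ((M.updateRow i₀ x2).updateRow i₁ x3))) →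
        y ∈ Submodule.span ℂ (insert x4 (Set.range ((M.updateRow i₀ x2).updateRow i₁ x3))) →
        Dd M i₀ i₁ x y = 0 := by
      intro x y hx hy
      apply det_eq_zero_of_rows_mem _ _ htop
      intro j
      rcases eq_or_ne j i₁ with rfl | hj1
      · simpa [Matrix.updateRow_self] using hy
      rcases eq_or_ne j i₀ with rfl | hj0
      · rw [Matrix.updateRow_ne hj1, Matrix.updateRow_self]; exact hx
      · rw [Matrix.updateRow_ne hj1, Matrix.updateRow_ne hj0]; exact hM j hj0 hj1
    rw [key x3 x4 hx3 hx4, key x2 x4 hx2 hx4, key x2 x3 hx2 hx3]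
    ring
end pluecker

lemma det_congr_update {N : ℕ} (A B : Matrix (Fin N) (Fin N) ℂ) (i j : Fin N) (hij : i ≠ j)
    (c : ℂ) (hr : ∀ r, r ≠ i → B r = A r) (hi : B i = A i + c • A j) : B.det = A.det := by
  have hBA : B = A.updateRow i (A i + c • A j) := by
    funext r
    rcases eq_or_ne r i with rfl | hri
    · rw [Matrix.updateRow_self]; exact hi
    · rw [Matrix.updateRow_ne hri]; exact hr r hri
  rw [hBA, Matrix.det_updateRow_add_smul_self A hij c]

lemma redA {N : ℕ} (a : ℂ) (w z : ℤ → Fin N → ℂ)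
    (h : ∀ t, z t = w t + a • z (t + 1)) (s : ℤ) :
    ∀ k, k + 1 ≤ N →
      Matrix.det (Matrix.of fun j i : Fin N =>
        if (j : ℕ) < k then w (s + (j.1 : ℤ)) i else z (s + (j.1 : ℤ)) i)
      = Matrix.det (Matrix.of fun j i : Fin N => z (s + (j.1 : ℤ)) i) := by
  intro k
  induction k with
  | zero =>
    intro _
    have : (Matrix.of fun j i : Fin N =>
        if (j : ℕ) < 0 then w (s + (j.1 : ℤ)) i else z (s + (j.1 : ℤ)) i)
        = (Matrix.of fun j i : Fin N => z (s + (j.1 : ℤ)) i) := by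
      funext j i
      simp
    rw [this]
  | succ k ih =>
    intro hk
    have step : (Matrix.of fun j i : Fin N =>
        if (j : ℕ) < k + 1 then w (s + (j.1 : ℤ)) i else z (s + (j.1 : ℤ)) i).det
        = (Matrix.of fun j i : Fin N =>
        if (j : ℕ) < k then w (s + (j.1 : ℤ)) i else z (s + (j.1 : ℤ)) i).det := by
      refine det_congr_update _ _ (⟨k, by omega⟩ : Fin N) (⟨k + 1, by omega⟩ : Fin N)
        (by simp [Fin.ext_iff]) (-a) ?_ ?_
      · intro r hr
        funext i
        have hrk : (r : ℕ) ≠ k := fun hc => hr (Fin.ext hc)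
        simp only [Matrix.of_apply]
        by_cases hc : (r : ℕ) < k
        · rw [if_pos (by omega), if_pos hc]
        · rw [if_neg (by omega), if_neg hc]
      · funext i
        simp only [Matrix.of_apply, Pi.add_apply, Pi.smul_apply, smul_eq_mul]
        rw [if_pos (by omega : (k : ℕ) < k + 1), if_neg (by omega : ¬ (k : ℕ) < k),
          if_neg (by omega : ¬ (k + 1 : ℕ) < k)]
        have harg : s + ((k + 1 : ℕ) : ℤ) = (s + (k : ℕ)) + 1 := by push_cast; ring
        rw [harg]
        have hpt := congrFun (h (s + (k : ℕ))) i
        simp only [Pi.add_apply, Pi.smul_apply, smul_eq_mul] at hpt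
        linear_combination -hpt
    rw [step, ih (by omega)]

lemma redApinned {N : ℕ} (a : ℂ) (v0 : Fin N → ℂ) (w z : ℤ → Fin N → ℂ)
    (h : ∀ t, z t = w t + a • z (t + 1)) (s : ℤ) :
    ∀ k, 1 ≤ k → k + 1 ≤ N →
      Matrix.det (Matrix.of fun j i : Fin N =>
        if (j : ℕ) = 0 then v0 i
        else if (j : ℕ) < k then w (s + (j.1 : ℤ)) i else z (s + (j.1 : ℤ)) i)
      = Matrix.det (Matrix.of fun j i : Fin N =>
        if (j : ℕ) = 0 then v0 i else z (s + (j.1 : ℤ)) i) := by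
  intro k
  induction k with
  | zero => omega
  | succ k ih =>
    intro _ hk
    rcases Nat.eq_zero_or_pos k with rfl | hk1
    · congr 1
      funext j i
      simp only [Matrix.of_apply]
      by_cases hc : (j : ℕ) = 0
      · rw [if_pos hc, if_pos hc]
      · rw [if_neg hc, if_neg hc, if_neg (by omega)]
    · have step : (Matrix.of fun j i : Fin N =>
          if (j : ℕ) = 0 then v0 i
          else if (j : ℕ) < k + 1 then w (s + (j.1 : ℤ)) i else z (s + (j.1 : ℤ)) i).det
          = (Matrix.of fun j i : Fin N =>
          if (j : ℕ) = 0 then v0 i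
          else if (j : ℕ) < k then w (s + (j.1 : ℤ)) i else z (s + (j.1 : ℤ)) i).det := by
        refine det_congr_update _ _ (⟨k, by omega⟩ : Fin N) (⟨k + 1, by omega⟩ : Fin N)
          (by simp [Fin.ext_iff]) (-a) ?_ ?_
        · intro r hr
          funext i
          have hrk : (r : ℕ) ≠ k := fun hc => hr (Fin.ext hc)
          simp only [Matrix.of_apply]
          by_cases h0 : (r : ℕ) = 0
          · rw [if_pos h0, if_pos h0]
          · rw [if_neg h0, if_neg h0]
            by_cases hc : (r : ℕ) < k
            · rw [if_pos (by omega), if_pos hc]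
            · rw [if_neg (by omega), if_neg hc]
        · funext i
          simp only [Matrix.of_apply, Pi.add_apply, Pi.smul_apply, smul_eq_mul]
          rw [if_neg (by omega : ¬ (k : ℕ) = 0), if_neg (by omega : ¬ (k : ℕ) = 0),
            if_pos (by omega : (k : ℕ) < k + 1), if_neg (by omega : ¬ (k : ℕ) < k),
            if_neg (by omega : ¬ (k + 1 : ℕ) = 0), if_neg (by omega : ¬ (k + 1 : ℕ) < k)]
          have harg : s + ((k + 1 : ℕ) : ℤ) = (s + (k : ℕ)) + 1 := by push_cast; ring
          rw [harg]
          have hpt := congrFun (h (s + (k : ℕ))) i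
          simp only [Pi.add_apply, Pi.smul_apply, smul_eq_mul] at hpt
          linear_combination -hpt
      rw [step, ih (by omega) (by omega)]

lemma redB {N : ℕ} (b : ℂ) (u w : ℤ → Fin N → ℂ)
    (h : ∀ t, w t = u t + b • u (t - 1)) (s : ℤ) :
    ∀ k, 1 ≤ k → k ≤ N →
      Matrix.det (Matrix.of fun j i : Fin N =>
        if k ≤ (j : ℕ) then w (s + (j.1 : ℤ)) i else u (s + (j.1 : ℤ)) i)
      = Matrix.det (Matrix.of fun j i : Fin N =>
        if 1 ≤ (j : ℕ) then w (s + (j.1 : ℤ)) i else u (s + (j.1 : ℤ)) i) := by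
  intro k
  induction k with
  | zero => omega
  | succ k ih =>
    intro _ hk
    rcases Nat.eq_zero_or_pos k with rfl | hk1
    · rfl
    · have step : (Matrix.of fun j i : Fin N =>
          if k ≤ (j : ℕ) then w (s + (j.1 : ℤ)) i else u (s + (j.1 : ℤ)) i).det
          = (Matrix.of fun j i : Fin N =>
          if k + 1 ≤ (j : ℕ) then w (s + (j.1 : ℤ)) i else u (s + (j.1 : ℤ)) i).det := by
        refine det_congr_update _ _ (⟨k, by omega⟩ : Fin N) (⟨k - 1, by omega⟩ : Fin N)
          (by simp [Fin.ext_iff]; omega) b ?_ ?_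
        · intro r hr
          funext i
          have hrk : (r : ℕ) ≠ k := fun hc => hr (Fin.ext hc)
          simp only [Matrix.of_apply]
          by_cases hc : k + 1 ≤ (r : ℕ)
          · rw [if_pos (by omega), if_pos hc]
          · rw [if_neg (by omega), if_neg hc]
        · funext i
          simp only [Matrix.of_apply, Pi.add_apply, Pi.smul_apply, smul_eq_mul]
          rw [if_pos (by omega : k ≤ (k : ℕ)), if_neg (by omega : ¬ k + 1 ≤ (k : ℕ)),
            if_neg (by omega : ¬ k + 1 ≤ (k - 1 : ℕ))]
          have harg : s + ((k - 1 : ℕ) : ℤ) = (s + (k : ℕ)) - 1 := by omega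
          rw [harg]
          have hpt := congrFun (h (s + (k : ℕ))) i
          simp only [Pi.add_apply, Pi.smul_apply, smul_eq_mul] at hpt
          linear_combination hpt
      rw [step.symm, ih (by omega) (by omega)]

lemma zdet (n : ℕ) (a : ℂ) (w z : ℤ → Fin (n+2) → ℂ)
    (h : ∀ t, z t = w t + a • z (t + 1)) (s : ℤ) :
    ∀ d, d ≤ n →
      Matrix.det (Matrix.of fun j i : Fin (n+2) =>
        if (j : ℕ) = 0 then z (s + ((n + 1 - d : ℕ) : ℤ)) i
        else if (j : ℕ) ≤ n then w (s + (j.1 : ℤ)) i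
        else z (s + ((n + 1 : ℕ) : ℤ)) i) = 0 := by
  intro d
  induction d with
  | zero =>
    intro _
    apply Matrix.det_zero_of_row_eq (i := (0 : Fin (n+2))) (j := (⟨n+1, by omega⟩ : Fin (n+2)))
    · exact Fin.ne_of_val_ne (by simp only [Fin.val_mk, Fin.val_zero]; omega)
    · funext i
      simp only [Matrix.of_apply, Fin.val_mk, Fin.val_zero]
      rw [if_true, if_neg (by omega : ¬ n + 1 = 0), if_neg (by omega : ¬ n + 1 ≤ n)]
      norm_num
  | succ d ih =>
    intro hd
    have key : (Matrix.of fun j i : Fin (n+2) =>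
        if (j : ℕ) = 0 then z (s + ((n + 1 - (d+1) : ℕ) : ℤ)) i
        else if (j : ℕ) ≤ n then w (s + (j.1 : ℤ)) i
        else z (s + ((n + 1 : ℕ) : ℤ)) i)
        = Matrix.updateRow (Matrix.of fun j i : Fin (n+2) =>
          if (j : ℕ) = 0 then z (s + ((n + 1 - d : ℕ) : ℤ)) i
          else if (j : ℕ) ≤ n then w (s + (j.1 : ℤ)) i
          else z (s + ((n + 1 : ℕ) : ℤ)) i) 0
          (w (s + ((n - d : ℕ) : ℤ)) + a • z (s + ((n + 1 - d : ℕ) : ℤ))) := by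
      funext r
      rcases eq_or_ne r 0 with rfl | hr
      · rw [Matrix.updateRow_self]
        funext i
        simp only [Matrix.of_apply, Pi.add_apply, Pi.smul_apply, smul_eq_mul, Fin.val_zero]
        rw [if_true]
        have hpt := congrFun (h (s + ((n - d : ℕ) : ℤ))) i
        simp only [Pi.add_apply, Pi.smul_apply, smul_eq_mul] at hpt
        have e1 : s + ((n + 1 - (d+1) : ℕ) : ℤ) = s + ((n - d : ℕ) : ℤ) := by omega
        have e2 : s + ((n - d : ℕ) : ℤ) + 1 = s + ((n + 1 - d : ℕ) : ℤ) := by omega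
        rw [e1, hpt, e2]
      · rw [Matrix.updateRow_ne hr]
        funext i
        have hr0 : ¬ (r : ℕ) = 0 := fun hc => hr (Fin.ext hc)
        simp only [Matrix.of_apply]
        rw [if_neg hr0, if_neg hr0]
    rw [key, Matrix.det_updateRow_add, Matrix.det_updateRow_smul]
    have hz : Matrix.updateRow (Matrix.of fun j i : Fin (n+2) =>
          if (j : ℕ) = 0 then z (s + ((n + 1 - d : ℕ) : ℤ)) i
          else if (j : ℕ) ≤ n then w (s + (j.1 : ℤ)) i
          else z (s + ((n + 1 : ℕ) : ℤ)) i) 0 (z (s + ((n + 1 - d : ℕ) : ℤ)))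
        = (Matrix.of fun j i : Fin (n+2) =>
          if (j : ℕ) = 0 then z (s + ((n + 1 - d : ℕ) : ℤ)) i
          else if (j : ℕ) ≤ n then w (s + (j.1 : ℤ)) i
          else z (s + ((n + 1 : ℕ) : ℤ)) i) := by
      funext r
      rcases eq_or_ne r 0 with rfl | hr
      · rw [Matrix.updateRow_self]
        funext i
        simp only [Matrix.of_apply, Fin.val_zero]
        rw [if_true]
      · rw [Matrix.updateRow_ne hr]
    have hw : (Matrix.updateRow (Matrix.of fun j i : Fin (n+2) =>
          if (j : ℕ) = 0 then z (s + ((n + 1 - d : ℕ) : ℤ)) i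
          else if (j : ℕ) ≤ n then w (s + (j.1 : ℤ)) i
          else z (s + ((n + 1 : ℕ) : ℤ)) i) 0 (w (s + ((n - d : ℕ) : ℤ)))).det = 0 := by
      apply Matrix.det_zero_of_row_eq (i := (0 : Fin (n+2)))
        (j := (⟨n - d, by omega⟩ : Fin (n+2)))
      · exact Fin.ne_of_val_ne (by simp only [Fin.val_mk, Fin.val_zero]; omega)
      · rw [Matrix.updateRow_self,
          Matrix.updateRow_ne (Fin.ne_of_val_ne
            (by simp only [Fin.val_mk, Fin.val_zero]; omega : ((⟨n - d, by omega⟩ : Fin (n+2)) : ℕ) ≠ ((0 : Fin (n+2)) : ℕ)))]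
        funext i
        simp only [Matrix.of_apply, Fin.val_mk]
        rw [if_neg (by omega : ¬ n - d = 0), if_pos (by omega : n - d ≤ n)]
    rw [hz, hw, ih (by omega)]
    ring


lemma genD (n : ℕ) (w : ℤ → Fin (n+2) → ℂ) (s : ℤ) (x y : Fin (n+2) → ℂ) :
    Matrix.det (Matrix.of fun j i : Fin (n+2) =>
      if (j : ℕ) = 0 then x i else if (j : ℕ) = n+1 then y i else w (s + (j.1 : ℤ)) i)
    = (-1 : ℂ)^n * Dd (Matrix.of fun j i : Fin (n+2) => w (s + 1 + (j.1 : ℤ)) i)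
        ⟨n, by omega⟩ ⟨n+1, by omega⟩ x y := by
  set i₀ : Fin (n+2) := ⟨n, by omega⟩ with hi₀
  set i₁ : Fin (n+2) := ⟨n+1, by omega⟩ with hi₁
  have hne : i₀ ≠ i₁ := by simp [hi₀, hi₁, Fin.ext_iff]
  set M : Matrix (Fin (n+2)) (Fin (n+2)) ℂ :=
    Matrix.of fun j i : Fin (n+2) => w (s + 1 + (j.1 : ℤ)) i with hM
  set Mx := (M.updateRow i₀ x).updateRow i₁ y with hMx
  have hrows : (Mx.submatrix ((Fin.cycleRange i₀)⁻¹ : Equiv.Perm (Fin (n+2))) id)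
      = (Matrix.of fun j i : Fin (n+2) =>
      if (j : ℕ) = 0 then x i else if (j : ℕ) = n+1 then y i else w (s + (j.1 : ℤ)) i) := by
    funext j i
    simp only [Matrix.submatrix_apply, id_eq, Matrix.of_apply]
    by_cases h0 : (j : ℕ) = 0
    · have hj : j = 0 := Fin.ext h0
      have hinv : (Fin.cycleRange i₀)⁻¹ j = i₀ := by
        rw [Equiv.Perm.inv_eq_iff_eq, hj, Fin.cycleRange_self]
      rw [hinv, if_pos h0, hMx, Matrix.updateRow_ne hne, Matrix.updateRow_self]
    by_cases h1 : (j : ℕ) = n+1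
    · have hj : j = i₁ := Fin.ext h1
      have hinv : (Fin.cycleRange i₀)⁻¹ j = i₁ := by
        rw [Equiv.Perm.inv_eq_iff_eq, hj, Fin.cycleRange_of_gt]
        · rw [Fin.lt_def]; simp [hi₀, hi₁]
      rw [hinv, if_neg h0, if_pos h1, hMx, Matrix.updateRow_self]
    · have hjn : 1 ≤ (j : ℕ) ∧ (j : ℕ) ≤ n := by omega
      set t : Fin (n+2) := ⟨(j : ℕ) - 1, by omega⟩ with ht
      have hinv : (Fin.cycleRange i₀)⁻¹ j = t := by
        rw [Equiv.Perm.inv_eq_iff_eq]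
        have hlt : t < i₀ := by rw [Fin.lt_def]; simp [ht, hi₀]; omega
        rw [Fin.cycleRange_of_lt hlt]
        have : (t + 1 : Fin (n+2)).1 = (j : ℕ) := by
          rw [Fin.val_add_one_of_lt]
          · simp [ht]; omega
          · rw [Fin.lt_def]; simp [ht, Fin.last]; omega
        exact (Fin.ext this).symm
      rw [hinv, if_neg h0, if_neg h1, hMx, Matrix.updateRow_ne, Matrix.updateRow_ne, hM]
      · show w (s + 1 + ((((j : ℕ) - 1 : ℕ)) : ℤ)) i = w (s + ((j : ℕ) : ℤ)) i
        have harg : s + 1 + ((((j : ℕ) - 1 : ℕ)) : ℤ) = s + ((j : ℕ) : ℤ) := by omega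
        rw [harg]
      · simp [ht, hi₀, Fin.ext_iff]; omega
      · simp [ht, hi₁, Fin.ext_iff]; omega
  have hdp := Matrix.det_permute ((Fin.cycleRange i₀)⁻¹ : Equiv.Perm (Fin (n+2))) Mx
  rw [hrows] at hdp
  rw [hdp, Equiv.Perm.sign_inv, Fin.sign_cycleRange]
  rw [Dd]
  norm_num [hi₀]
  rfl


lemma rot2 (n : ℕ) (w : ℤ → Fin (n+2) → ℂ) (s : ℤ) (x y : Fin (n+2) → ℂ) :
    Matrix.det (Matrix.of fun j i : Fin (n+2) =>
      if (j : ℕ) = 0 then x i else if (j : ℕ) = 1 then y i else w (s + (j.1 : ℤ) - 1) i)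
    = Dd (Matrix.of fun j i : Fin (n+2) => w (s + 1 + (j.1 : ℤ)) i)
        ⟨n, by omega⟩ ⟨n+1, by omega⟩ x y := by
  set i₀ : Fin (n+2) := ⟨n, by omega⟩ with hi₀
  set i₁ : Fin (n+2) := ⟨n+1, by omega⟩ with hi₁
  have hne : i₀ ≠ i₁ := by simp [hi₀, hi₁, Fin.ext_iff]
  set M : Matrix (Fin (n+2)) (Fin (n+2)) ℂ :=
    Matrix.of fun j i : Fin (n+2) => w (s + 1 + (j.1 : ℤ)) i with hM
  set Mx := (M.updateRow i₀ x).updateRow i₁ y with hMx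
  set A : Matrix (Fin (n+2)) (Fin (n+2)) ℂ :=
    Matrix.of (fun j i : Fin (n+2) =>
      if (j : ℕ) = 0 then x i else if (j : ℕ) = 1 then y i else w (s + (j.1 : ℤ) - 1) i) with hA
  set ρ : Equiv.Perm (Fin (n+2)) := finRotate (n+2) with hρ
  have h1 : ∀ q : Fin (n+2), (ρ q : ℕ) = ((q : ℕ) + 1) % (n+2) := by
    intro q
    rw [hρ, finRotate_succ_apply, Fin.val_add, Fin.val_one]
  have hval : ∀ j : Fin (n+2), ((ρ * ρ) j : ℕ) = (((j : ℕ) + 1) % (n+2) + 1) % (n+2) := by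
    intro j
    rw [Equiv.Perm.mul_apply, h1, h1]
  have hsub : A.submatrix (ρ * ρ) id = Mx := by
    funext j i
    have hq := hval j
    rw [Matrix.submatrix_apply, id_eq]
    by_cases hj0 : (j : ℕ) = n
    · have hqv : (((ρ * ρ) j) : ℕ) = 0 := by
        rw [hq, hj0]
        have e1 : (n + 1) % (n + 2) = n + 1 := Nat.mod_eq_of_lt (by omega)
        rw [e1, Nat.mod_self]
      have hj : j = i₀ := Fin.ext (by rw [hj0])
      rw [hA]
      simp only [Matrix.of_apply]
      rw [if_pos hqv, hj, hMx, Matrix.updateRow_ne hne, Matrix.updateRow_self]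
    by_cases hj1 : (j : ℕ) = n + 1
    · have hqv : (((ρ * ρ) j) : ℕ) = 1 := by
        rw [hq, hj1]
        have e1 : (n + 1 + 1) % (n + 2) = 0 := by
          rw [show n + 1 + 1 = n + 2 by ring, Nat.mod_self]
        rw [e1]
        exact Nat.mod_eq_of_lt (by omega)
      have hj : j = i₁ := Fin.ext (by rw [hj1])
      rw [hA]
      simp only [Matrix.of_apply]
      rw [if_neg (by omega), if_pos hqv, hj, hMx, Matrix.updateRow_self]
    · have hjn : (j : ℕ) < n := by have := j.2; omega
      have hqv : (((ρ * ρ) j) : ℕ) = (j : ℕ) + 2 := by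
        rw [hq]
        have e1 : ((j : ℕ) + 1) % (n + 2) = (j : ℕ) + 1 := Nat.mod_eq_of_lt (by omega)
        rw [e1]
        exact Nat.mod_eq_of_lt (by omega)
      have hji0 : j ≠ i₀ := by simp [hi₀, Fin.ext_iff]; omega
      have hji1 : j ≠ i₁ := by simp [hi₁, Fin.ext_iff]; omega
      rw [hA]
      simp only [Matrix.of_apply]
      rw [if_neg (by omega), if_neg (by omega), hMx, Matrix.updateRow_ne hji1,
        Matrix.updateRow_ne hji0, hM]
      show w (s + ((((ρ * ρ) j) : ℕ) : ℤ) - 1) i = w (s + 1 + ((j : ℕ) : ℤ)) i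
      have harg : s + ((((ρ * ρ) j) : ℕ) : ℤ) - 1 = s + 1 + ((j : ℕ) : ℤ) := by
        rw [hqv]; push_cast; ring
      rw [harg]
  have hsign : Equiv.Perm.sign (ρ * ρ) = 1 := by
    rw [_root_.map_mul]
    exact Int.units_mul_self _
  have hdp := Matrix.det_permute (ρ * ρ) A
  rw [hsub, hsign] at hdp
  rw [Dd, ← hMx, hdp]
  simp


lemma key (N : ℕ) (hN : 1 ≤ N) (a b : ℂ) (w u z v : ℤ → Fin N → ℂ)
    (h1 : ∀ t, z t = w t + a • z (t + 1))
    (h2 : ∀ t, v t = u t + a • v (t + 1))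
    (h3 : ∀ t, w t = u t + b • u (t - 1))
    (h4 : ∀ t, z t = v t + b • v (t - 1))
    (s : ℤ) :
    (1 + a * b) * Matrix.det (Matrix.of fun i j : Fin N => v (s + (j.1 : ℤ)) i)
        * Matrix.det (Matrix.of fun i j : Fin N => w (s + (j.1 : ℤ)) i)
      - Matrix.det (Matrix.of fun i j : Fin N => z (s + (j.1 : ℤ)) i)
        * Matrix.det (Matrix.of fun i j : Fin N => u (s + (j.1 : ℤ)) i)
      = a * b * Matrix.det (Matrix.of fun i j : Fin N => z (s + 1 + (j.1 : ℤ)) i)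
        * Matrix.det (Matrix.of fun i j : Fin N => u (s - 1 + (j.1 : ℤ)) i) := by
  have flip : ∀ (f : ℤ → Fin N → ℂ) (t : ℤ),
      (Matrix.of fun i j : Fin N => f (t + (j.1 : ℤ)) i).det
      = (Matrix.of fun j i : Fin N => f (t + (j.1 : ℤ)) i).det :=
    fun f t => Matrix.det_transpose _
  rw [flip v s, flip w s, flip z s, flip u s, flip z (s+1), flip u (s-1)]
  rcases Nat.lt_or_ge N 2 with hN2 | hN2
  · -- N = 1
    have hN1 : N = 1 := by omega
    subst hN1
    have d1 : ∀ (f : ℤ → Fin 1 → ℂ) (t : ℤ),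
        Matrix.det (Matrix.of fun j i : Fin 1 => f (t + (j.1 : ℤ)) i) = f t 0 := by
      intro f t
      rw [Matrix.det_fin_one]
      show f (t + ((0 : Fin 1) : ℤ)) 0 = f t 0
      norm_num
    rw [d1, d1, d1, d1, d1, d1]
    have e1 := congrFun (h2 s) 0
    have e2 := congrFun (h2 (s - 1)) 0
    have e3 := congrFun (h3 s) 0
    have e4 := congrFun (h4 s) 0
    have e5 := congrFun (h4 (s + 1)) 0
    simp only [Pi.add_apply, Pi.smul_apply, smul_eq_mul] at e1 e2 e3 e4 e5
    rw [show s - 1 + 1 = s by ring] at e2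
    rw [show s + 1 - 1 = s by ring] at e5
    linear_combination b * (u (s-1) 0) * e1 - b * (u s 0) * e2 + (1 + a * b) * (v s 0) * e3
      - (u s 0) * e4 - a * b * (u (s-1) 0) * e5
  · -- N ≥ 2
    obtain ⟨n, rfl⟩ : ∃ n, N = n + 2 := ⟨N - 2, by omega⟩
    clear hN hN2
    set i₀ : Fin (n+2) := ⟨n, by omega⟩ with hi₀
    set i₁ : Fin (n+2) := ⟨n+1, by omega⟩ with hi₁
    have hne : i₀ ≠ i₁ := Fin.ne_of_val_ne (by simp only [hi₀, hi₁, Fin.val_mk]; omega)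
    have hv0 : (i₀ : ℕ) = n := rfl
    have hv1 : (i₁ : ℕ) = n + 1 := rfl
    set M₀ : Matrix (Fin (n+2)) (Fin (n+2)) ℂ :=
      Matrix.of fun j i : Fin (n+2) => w (s + 1 + (j.1 : ℤ)) i with hM₀
    -- the four distinguished vectors
    set X : Fin (n+2) → ℂ := u s with hX
    set W0 : Fin (n+2) → ℂ := w s with hW0
    set WN : Fin (n+2) → ℂ := w (s + ((n+1 : ℕ) : ℤ)) with hWN
    set P : Fin (n+2) → ℂ := z (s + ((n+1 : ℕ) : ℤ)) with hP
    -- F2 : S00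
    have hF2 : Matrix.det (Matrix.of fun j i : Fin (n+2) => w (s + (j.1 : ℤ)) i)
        = (-1 : ℂ)^n * Dd M₀ i₀ i₁ W0 WN := by
      rw [← genD n w s W0 WN]
      apply det_congr
      intro j i
      simp only [Matrix.of_apply]
      by_cases h0 : (j : ℕ) = 0
      · rw [if_pos h0, hW0]; exact app_congr (by omega) i
      by_cases h1' : (j : ℕ) = n+1
      · rw [if_neg h0, if_pos h1', hWN]; exact app_congr (by omega) i
      · rw [if_neg h0, if_neg h1']
    -- F3 : S01
    have hF3 : Matrix.det (Matrix.of fun j i : Fin (n+2) => u (s + (j.1 : ℤ)) i)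
        = (-1 : ℂ)^n * Dd M₀ i₀ i₁ X WN := by
      have step0 : Matrix.det (Matrix.of fun j i : Fin (n+2) => u (s + (j.1 : ℤ)) i)
          = Matrix.det (Matrix.of fun j i : Fin (n+2) =>
            if n + 2 ≤ (j : ℕ) then w (s + (j.1 : ℤ)) i else u (s + (j.1 : ℤ)) i) := by
        apply det_congr
        intro j i
        rw [Matrix.of_apply, Matrix.of_apply, if_neg (by have := j.2; omega)]
      rw [step0, redB b u w h3 s (n+2) (by omega) (le_refl _), ← genD n w s X WN]
      apply det_congr
      intro j i
      simp only [Matrix.of_apply]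
      by_cases h0 : (j : ℕ) = 0
      · rw [if_pos h0, if_neg (by omega), hX]; exact app_congr (by omega) i
      by_cases h1' : (j : ℕ) = n+1
      · rw [if_neg h0, if_pos h1', if_pos (by omega), hWN]; exact app_congr (by omega) i
      · rw [if_neg h0, if_neg h1', if_pos (by omega)]
    -- F4 : S10
    have hF4 : Matrix.det (Matrix.of fun j i : Fin (n+2) => z (s + (j.1 : ℤ)) i)
        = (-1 : ℂ)^n * Dd M₀ i₀ i₁ W0 P := by
      rw [← redA a w z h1 s (n+1) (by omega), ← genD n w s W0 P]
      apply det_congr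
      intro j i
      simp only [Matrix.of_apply]
      by_cases h0 : (j : ℕ) = 0
      · rw [if_pos h0, if_pos (by omega), hW0]; exact app_congr (by omega) i
      by_cases h1' : (j : ℕ) = n+1
      · rw [if_neg h0, if_pos h1', if_neg (by omega), hP]; exact app_congr (by omega) i
      · rw [if_neg h0, if_neg h1', if_pos (by have := j.2; omega)]
    -- F1 : a * S10shift
    have hF1 : a * Matrix.det (Matrix.of fun j i : Fin (n+2) => z (s + 1 + (j.1 : ℤ)) i)
        = Dd M₀ i₀ i₁ WN P := by
      rw [← redA a w z h1 (s+1) (n+1) (by omega)]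
      set A₁ : Matrix (Fin (n+2)) (Fin (n+2)) ℂ := Matrix.of fun j i : Fin (n+2) =>
        if (j : ℕ) < n+1 then w (s + 1 + (j.1 : ℤ)) i else z (s + 1 + (j.1 : ℤ)) i with hA₁
      have hup : A₁ = A₁.updateRow i₁ (A₁ i₁) := (Matrix.updateRow_eq_self A₁ i₁).symm
      rw [show a * A₁.det = a * (A₁.updateRow i₁ (A₁ i₁)).det by rw [← hup],
        ← Matrix.det_updateRow_smul]
      have hrow : a • A₁ i₁ = P - WN + (0 : ℂ) • WN := by
        funext i
        simp only [Pi.smul_apply, Pi.add_apply, Pi.sub_apply, smul_eq_mul, hA₁, Matrix.of_apply,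
          hP, hWN]
        rw [if_neg (by rw [hv1]; omega : ¬ (i₁ : ℕ) < n + 1)]
        have hpt := congrFun (h1 (s + ((n+1 : ℕ) : ℤ))) i
        simp only [Pi.add_apply, Pi.smul_apply, smul_eq_mul] at hpt
        have e : s + ((n+1 : ℕ) : ℤ) + 1 = s + 1 + ((i₁ : ℕ) : ℤ) := by
          rw [hv1]; omega
        rw [e] at hpt
        linear_combination -hpt
      rw [hrow]
      rw [show P - WN + (0:ℂ) • WN = P + (-1 : ℂ) • WN by funext i; simp; ring]
      rw [Matrix.det_updateRow_add, Matrix.det_updateRow_smul]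
      have hzero : (A₁.updateRow i₁ WN).det = 0 := by
        apply Matrix.det_zero_of_row_eq hne
        rw [Matrix.updateRow_ne hne, Matrix.updateRow_self]
        funext i
        simp only [hA₁, Matrix.of_apply, hWN]
        rw [if_pos (by rw [hv0]; omega : (i₀ : ℕ) < n + 1)]
        exact app_congr (by rw [hv0]; omega : s + 1 + ((i₀ : ℕ) : ℤ) = s + ((n+1 : ℕ) : ℤ)) i
      rw [hzero]
      have hmain : (A₁.updateRow i₁ P) = (M₀.updateRow i₀ WN).updateRow i₁ P := by
        funext r
        rcases eq_or_ne r i₁ with rfl | hr1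
        · rw [Matrix.updateRow_self, Matrix.updateRow_self]
        rw [Matrix.updateRow_ne hr1, Matrix.updateRow_ne hr1]
        rcases eq_or_ne r i₀ with rfl | hr0
        · rw [Matrix.updateRow_self]
          funext i
          simp only [hA₁, Matrix.of_apply, hWN]
          rw [if_pos (by rw [hv0]; omega : (i₀ : ℕ) < n + 1)]
          exact app_congr (by rw [hv0]; omega : s + 1 + ((i₀ : ℕ) : ℤ) = s + ((n+1 : ℕ) : ℤ)) i
        · rw [Matrix.updateRow_ne hr0]
          funext i
          simp only [hA₁, hM₀, Matrix.of_apply]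
          have hrv : (r : ℕ) < n + 1 := by
            have := r.2
            have hw0 : (r : ℕ) ≠ n := fun hc => hr0 (Fin.ext (by rw [hv0]; omega))
            have hw1 : (r : ℕ) ≠ n+1 := fun hc => hr1 (Fin.ext (by rw [hv1]; omega))
            omega
          rw [if_pos hrv]
      rw [hmain, Dd]
      ring
    -- F5 : (1+ab) * S11
    have hF5 : (1 + a * b) * Matrix.det (Matrix.of fun j i : Fin (n+2) => v (s + (j.1 : ℤ)) i)
        = (-1 : ℂ)^n * Dd M₀ i₀ i₁ X P := by
      have step0 : Matrix.det (Matrix.of fun j i : Fin (n+2) => v (s + (j.1 : ℤ)) i)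
          = Matrix.det (Matrix.of fun j i : Fin (n+2) =>
            if n + 2 ≤ (j : ℕ) then z (s + (j.1 : ℤ)) i else v (s + (j.1 : ℤ)) i) := by
        apply det_congr
        intro j i
        rw [Matrix.of_apply, Matrix.of_apply, if_neg (by have := j.2; omega)]
      have step1 : Matrix.det (Matrix.of fun j i : Fin (n+2) =>
            if 1 ≤ (j : ℕ) then z (s + (j.1 : ℤ)) i else v (s + (j.1 : ℤ)) i)
          = Matrix.det (Matrix.of fun j i : Fin (n+2) =>
            if (j : ℕ) = 0 then v s i else z (s + (j.1 : ℤ)) i) := by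
        apply det_congr
        intro j i
        simp only [Matrix.of_apply]
        by_cases h0 : (j : ℕ) = 0
        · rw [if_neg (by omega), if_pos h0]; exact app_congr (by omega) i
        · rw [if_pos (by omega), if_neg h0]
      rw [step0, redB b v z h4 s (n+2) (by omega) (le_refl _), step1,
        ← redApinned a (v s) w z h1 s (n+1) (by omega) (by omega)]
      set A₅ : Matrix (Fin (n+2)) (Fin (n+2)) ℂ := Matrix.of fun j i : Fin (n+2) =>
        if (j : ℕ) = 0 then v s i
        else if (j : ℕ) < n+1 then w (s + (j.1 : ℤ)) i else z (s + (j.1 : ℤ)) i with hA₅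
      have hup : A₅ = A₅.updateRow 0 (A₅ 0) := (Matrix.updateRow_eq_self A₅ 0).symm
      rw [show (1 + a * b) * A₅.det = (1 + a * b) * (A₅.updateRow 0 (A₅ 0)).det by rw [← hup],
        ← Matrix.det_updateRow_smul]
      have hrow : (1 + a * b) • A₅ 0 = X + a • z (s + 1) := by
        funext i
        simp only [Pi.smul_apply, Pi.add_apply, smul_eq_mul, hA₅, Matrix.of_apply, hX]
        rw [if_pos (Fin.val_zero _)]
        have p2 := congrFun (h2 s) i
        have p4 := congrFun (h4 (s+1)) i
        simp only [Pi.add_apply, Pi.smul_apply, smul_eq_mul] at p2 p4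
        rw [show s + 1 - 1 = s by ring] at p4
        linear_combination p2 - a * p4
      rw [hrow, Matrix.det_updateRow_add, Matrix.det_updateRow_smul]
      have hzero : (A₅.updateRow 0 (z (s+1))).det = 0 := by
        rw [show (A₅.updateRow 0 (z (s+1))) = (Matrix.of fun j i : Fin (n+2) =>
            if (j : ℕ) = 0 then z (s + ((n + 1 - n : ℕ) : ℤ)) i
            else if (j : ℕ) ≤ n then w (s + (j.1 : ℤ)) i
            else z (s + ((n + 1 : ℕ) : ℤ)) i) from ?_]
        · exact zdet n a w z h1 s n (le_refl n)
        · funext r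
          rcases eq_or_ne r 0 with rfl | hr
          · rw [Matrix.updateRow_self]
            funext i
            simp only [Matrix.of_apply, Fin.val_zero]
            rw [if_true]
            exact app_congr (by omega) i
          · rw [Matrix.updateRow_ne hr]
            funext i
            have hr0 : ¬ (r : ℕ) = 0 := fun hc => hr (Fin.ext hc)
            simp only [Matrix.of_apply, hA₅]
            rw [if_neg hr0, if_neg hr0]
            by_cases hc : (r : ℕ) < n + 1
            · rw [if_pos hc, if_pos (by omega)]
            · rw [if_neg hc, if_neg (by omega)]
              exact app_congr (by have := r.2; omega) i
      rw [hzero]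
      have hmain : (A₅.updateRow 0 X).det = (-1 : ℂ)^n * Dd M₀ i₀ i₁ X P := by
        rw [← genD n w s X P]
        apply det_congr
        intro j i
        simp only [Matrix.of_apply, Matrix.updateRow_apply]
        by_cases h0 : (j : ℕ) = 0
        · rw [if_pos (Fin.ext h0 : j = 0), if_pos h0]
        rw [if_neg (fun hc => h0 (by rw [hc]; rfl) : ¬ j = 0)]
        simp only [hA₅, Matrix.of_apply]
        by_cases h1' : (j : ℕ) = n+1
        · rw [if_neg h0, if_neg (by omega), if_neg h0, if_pos h1', hP]
          exact app_congr (by omega) i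
        · rw [if_neg h0, if_pos (by have := j.2; omega), if_neg h0, if_neg h1']
      rw [hmain]
      ring
    -- F6 : b * S01shift
    have hF6 : b * Matrix.det (Matrix.of fun j i : Fin (n+2) => u (s - 1 + (j.1 : ℤ)) i)
        = - Dd M₀ i₀ i₁ X W0 := by
      have step0 : Matrix.det (Matrix.of fun j i : Fin (n+2) => u (s - 1 + (j.1 : ℤ)) i)
          = Matrix.det (Matrix.of fun j i : Fin (n+2) =>
            if n + 2 ≤ (j : ℕ) then w (s - 1 + (j.1 : ℤ)) i else u (s - 1 + (j.1 : ℤ)) i) := by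
        apply det_congr
        intro j i
        rw [Matrix.of_apply, Matrix.of_apply, if_neg (by have := j.2; omega)]
      rw [step0, redB b u w h3 (s-1) (n+2) (by omega) (le_refl _)]
      set B3 : Matrix (Fin (n+2)) (Fin (n+2)) ℂ := Matrix.of fun j i : Fin (n+2) =>
        if 1 ≤ (j : ℕ) then w (s - 1 + (j.1 : ℤ)) i else u (s - 1 + (j.1 : ℤ)) i with hB3
      have hup : B3 = B3.updateRow 0 (B3 0) := (Matrix.updateRow_eq_self B3 0).symm
      rw [show b * B3.det = b * (B3.updateRow 0 (B3 0)).det by rw [← hup],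
        ← Matrix.det_updateRow_smul]
      have hrow : b • B3 0 = W0 + (-1 : ℂ) • X := by
        funext i
        simp only [Pi.smul_apply, Pi.add_apply, smul_eq_mul, hB3, Matrix.of_apply, hW0, hX]
        rw [if_neg (by simp only [Fin.val_zero]; omega)]
        have p3 := congrFun (h3 s) i
        simp only [Pi.add_apply, Pi.smul_apply, smul_eq_mul] at p3
        have e : s - 1 = s - 1 + ((0 : Fin (n+2)) : ℤ) := by norm_num
        rw [e] at p3
        linear_combination -p3
      rw [hrow, Matrix.det_updateRow_add, Matrix.det_updateRow_smul]
      have hzero : (B3.updateRow 0 W0).det = 0 := by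
        apply Matrix.det_zero_of_row_eq
          (show (0 : Fin (n+2)) ≠ ⟨1, by omega⟩ from Fin.ne_of_val_ne (by simp only [Fin.val_mk, Fin.val_zero]; omega))
        rw [Matrix.updateRow_self,
          Matrix.updateRow_ne (Fin.ne_of_val_ne
            (by simp only [Fin.val_mk, Fin.val_zero]; omega : ((⟨1, by omega⟩ : Fin (n+2)) : ℕ) ≠ ((0 : Fin (n+2)) : ℕ)))]
        funext i
        simp only [hB3, Matrix.of_apply, hW0, Fin.val_mk]
        rw [if_pos (by omega)]
        exact app_congr (by omega) i
      rw [hzero]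
      have hmain : (B3.updateRow 0 X).det = Dd M₀ i₀ i₁ X W0 := by
        rw [← rot2 n w s X W0]
        apply det_congr
        intro j i
        simp only [Matrix.of_apply, Matrix.updateRow_apply]
        by_cases h0 : (j : ℕ) = 0
        · rw [if_pos (Fin.ext h0 : j = 0), if_pos h0]
        rw [if_neg (fun hc => h0 (by rw [hc]; rfl) : ¬ j = 0), if_neg h0]
        simp only [hB3, Matrix.of_apply]
        by_cases h1' : (j : ℕ) = 1
        · rw [if_pos (by omega), if_pos h1', hW0]
          exact app_congr (by omega) i
        · rw [if_pos (by omega), if_neg h1']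
          exact app_congr (by omega) i
      rw [hmain]
      ring
    -- final assembly
    have hq : ((-1 : ℂ)^n) * ((-1 : ℂ)^n) = 1 := by
      rw [← mul_pow]
      norm_num
    have pl := pluecker (M := M₀) hne W0 X WN P
    have hsw := Dd_swap (M := M₀) hne W0 X
    calc (1 + a * b) * Matrix.det (Matrix.of fun j i : Fin (n+2) => v (s + (j.1 : ℤ)) i)
          * Matrix.det (Matrix.of fun j i : Fin (n+2) => w (s + (j.1 : ℤ)) i)
        - Matrix.det (Matrix.of fun j i : Fin (n+2) => z (s + (j.1 : ℤ)) i)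
          * Matrix.det (Matrix.of fun j i : Fin (n+2) => u (s + (j.1 : ℤ)) i)
        = ((1 + a * b) * Matrix.det (Matrix.of fun j i : Fin (n+2) => v (s + (j.1 : ℤ)) i))
          * Matrix.det (Matrix.of fun j i : Fin (n+2) => w (s + (j.1 : ℤ)) i)
        - Matrix.det (Matrix.of fun j i : Fin (n+2) => z (s + (j.1 : ℤ)) i)
          * Matrix.det (Matrix.of fun j i : Fin (n+2) => u (s + (j.1 : ℤ)) i) := by ring
      _ = ((-1 : ℂ)^n * Dd M₀ i₀ i₁ X P) * ((-1 : ℂ)^n * Dd M₀ i₀ i₁ W0 WN)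
          - ((-1 : ℂ)^n * Dd M₀ i₀ i₁ W0 P) * ((-1 : ℂ)^n * Dd M₀ i₀ i₁ X WN) := by
          rw [hF5, hF2, hF4, hF3]
      _ = Dd M₀ i₀ i₁ X P * Dd M₀ i₀ i₁ W0 WN - Dd M₀ i₀ i₁ W0 P * Dd M₀ i₀ i₁ X WN := by
          linear_combination (Dd M₀ i₀ i₁ X P * Dd M₀ i₀ i₁ W0 WN
            - Dd M₀ i₀ i₁ W0 P * Dd M₀ i₀ i₁ X WN) * hq
      _ = (Dd M₀ i₀ i₁ WN P) * (- Dd M₀ i₀ i₁ X W0) := by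
          linear_combination -pl + Dd M₀ i₀ i₁ WN P * hsw
      _ = (a * Matrix.det (Matrix.of fun j i : Fin (n+2) => z (s + 1 + (j.1 : ℤ)) i))
          * (b * Matrix.det (Matrix.of fun j i : Fin (n+2) => u (s - 1 + (j.1 : ℤ)) i)) := by
          rw [hF1, hF6]
      _ = a * b * Matrix.det (Matrix.of fun j i : Fin (n+2) => z (s + 1 + (j.1 : ℤ)) i)
          * Matrix.det (Matrix.of fun j i : Fin (n+2) => u (s - 1 + (j.1 : ℤ)) i) := by ring


/-- The Casorati determinant built from entries `φᵢ` satisfying the dispersion (linear)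
relations satisfies the bilinear equations of the discrete two-dimensional Toda lattice
with coefficients, in each of the three lattice directions. -/
theorem stmt_2 (N : ℕ) (hN : 1 ≤ N) (b : ℂ) (a₁ a₂ a₃ : ℤ → ℂ)
    (φ : Fin N → ℤ → ℤ → ℤ → ℤ → ℤ → ℂ)
    (hφ1 : ∀ (i : Fin N) (l₁ l₂ l₃ m s : ℤ),
      φ i l₁ l₂ l₃ m s - φ i (l₁-1) l₂ l₃ m s = a₁ (l₁-1) * φ i l₁ l₂ l₃ m (s+1))
    (hφ2 : ∀ (i : Fin N) (l₁ l₂ l₃ m s : ℤ),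
      φ i l₁ l₂ l₃ m s - φ i l₁ (l₂-1) l₃ m s = a₂ (l₂-1) * φ i l₁ l₂ l₃ m (s+1))
    (hφ3 : ∀ (i : Fin N) (l₁ l₂ l₃ m s : ℤ),
      φ i l₁ l₂ l₃ m s - φ i l₁ l₂ (l₃-1) m s = a₃ (l₃-1) * φ i l₁ l₂ l₃ m (s+1))
    (hφm : ∀ (i : Fin N) (l₁ l₂ l₃ m s : ℤ),
      φ i l₁ l₂ l₃ m s - φ i l₁ l₂ l₃ (m-1) s = -b * φ i l₁ l₂ l₃ m (s-1))
    (σ : ℤ → ℤ → ℤ → ℤ → ℤ → ℂ)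
    (hσ : ∀ l₁ l₂ l₃ m s : ℤ,
      σ l₁ l₂ l₃ m s = Matrix.det (Matrix.of fun i j : Fin N => φ i l₁ l₂ l₃ m (s + (j.1 : ℤ)))) :
    ∀ l₁ l₂ l₃ m s : ℤ,
      ((1 + a₁ l₁ * b) * σ (l₁+1) l₂ l₃ (m+1) s * σ l₁ l₂ l₃ m s
          - σ (l₁+1) l₂ l₃ m s * σ l₁ l₂ l₃ (m+1) s
        = a₁ l₁ * b * σ (l₁+1) l₂ l₃ m (s+1) * σ l₁ l₂ l₃ (m+1) (s-1))
      ∧ ((1 + a₂ l₂ * b) * σ l₁ (l₂+1) l₃ (m+1) s * σ l₁ l₂ l₃ m s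
          - σ l₁ (l₂+1) l₃ m s * σ l₁ l₂ l₃ (m+1) s
        = a₂ l₂ * b * σ l₁ (l₂+1) l₃ m (s+1) * σ l₁ l₂ l₃ (m+1) (s-1))
      ∧ ((1 + a₃ l₃ * b) * σ l₁ l₂ (l₃+1) (m+1) s * σ l₁ l₂ l₃ m s
          - σ l₁ l₂ (l₃+1) m s * σ l₁ l₂ l₃ (m+1) s
        = a₃ l₃ * b * σ l₁ l₂ (l₃+1) m (s+1) * σ l₁ l₂ l₃ (m+1) (s-1)) := by
  intro l₁ l₂ l₃ m s
  have hm : ∀ (lo₁ lo₂ lo₃ : ℤ) (t : ℤ),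
      (fun t i => φ i lo₁ lo₂ lo₃ m t) t
      = (fun t i => φ i lo₁ lo₂ lo₃ (m+1) t) t
        + b • (fun t i => φ i lo₁ lo₂ lo₃ (m+1) t) (t - 1) := by
    intro lo₁ lo₂ lo₃ t
    funext i
    simp only [Pi.add_apply, Pi.smul_apply, smul_eq_mul]
    have h := hφm i lo₁ lo₂ lo₃ (m+1) t
    rw [add_sub_cancel_right] at h
    linear_combination -h
  refine ⟨?_, ?_, ?_⟩
  · have h1' : ∀ t, (fun t i => φ i (l₁+1) l₂ l₃ m t) t
        = (fun t i => φ i l₁ l₂ l₃ m t) t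
          + a₁ l₁ • (fun t i => φ i (l₁+1) l₂ l₃ m t) (t + 1) := by
      intro t
      funext i
      simp only [Pi.add_apply, Pi.smul_apply, smul_eq_mul]
      have h := hφ1 i (l₁+1) l₂ l₃ m t
      rw [add_sub_cancel_right] at h
      linear_combination h
    have h2' : ∀ t, (fun t i => φ i (l₁+1) l₂ l₃ (m+1) t) t
        = (fun t i => φ i l₁ l₂ l₃ (m+1) t) t
          + a₁ l₁ • (fun t i => φ i (l₁+1) l₂ l₃ (m+1) t) (t + 1) := by
      intro t
      funext i
      simp only [Pi.add_apply, Pi.smul_apply, smul_eq_mul]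
      have h := hφ1 i (l₁+1) l₂ l₃ (m+1) t
      rw [add_sub_cancel_right] at h
      linear_combination h
    rw [hσ, hσ, hσ, hσ, hσ, hσ]
    exact key N hN (a₁ l₁) b (fun t i => φ i l₁ l₂ l₃ m t) (fun t i => φ i l₁ l₂ l₃ (m+1) t)
      (fun t i => φ i (l₁+1) l₂ l₃ m t) (fun t i => φ i (l₁+1) l₂ l₃ (m+1) t)
      h1' h2' (hm l₁ l₂ l₃) (hm (l₁+1) l₂ l₃) s
  · have h1' : ∀ t, (fun t i => φ i l₁ (l₂+1) l₃ m t) t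
        = (fun t i => φ i l₁ l₂ l₃ m t) t
          + a₂ l₂ • (fun t i => φ i l₁ (l₂+1) l₃ m t) (t + 1) := by
      intro t
      funext i
      simp only [Pi.add_apply, Pi.smul_apply, smul_eq_mul]
      have h := hφ2 i l₁ (l₂+1) l₃ m t
      rw [add_sub_cancel_right] at h
      linear_combination h
    have h2' : ∀ t, (fun t i => φ i l₁ (l₂+1) l₃ (m+1) t) t
        = (fun t i => φ i l₁ l₂ l₃ (m+1) t) t
          + a₂ l₂ • (fun t i => φ i l₁ (l₂+1) l₃ (m+1) t) (t + 1) := by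
      intro t
      funext i
      simp only [Pi.add_apply, Pi.smul_apply, smul_eq_mul]
      have h := hφ2 i l₁ (l₂+1) l₃ (m+1) t
      rw [add_sub_cancel_right] at h
      linear_combination h
    rw [hσ, hσ, hσ, hσ, hσ, hσ]
    exact key N hN (a₂ l₂) b (fun t i => φ i l₁ l₂ l₃ m t) (fun t i => φ i l₁ l₂ l₃ (m+1) t)
      (fun t i => φ i l₁ (l₂+1) l₃ m t) (fun t i => φ i l₁ (l₂+1) l₃ (m+1) t)
      h1' h2' (hm l₁ l₂ l₃) (hm l₁ (l₂+1) l₃) s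
  · have h1' : ∀ t, (fun t i => φ i l₁ l₂ (l₃+1) m t) t
        = (fun t i => φ i l₁ l₂ l₃ m t) t
          + a₃ l₃ • (fun t i => φ i l₁ l₂ (l₃+1) m t) (t + 1) := by
      intro t
      funext i
      simp only [Pi.add_apply, Pi.smul_apply, smul_eq_mul]
      have h := hφ3 i l₁ l₂ (l₃+1) m t
      rw [add_sub_cancel_right] at h
      linear_combination h
    have h2' : ∀ t, (fun t i => φ i l₁ l₂ (l₃+1) (m+1) t) t
        = (fun t i => φ i l₁ l₂ l₃ (m+1) t) t
          + a₃ l₃ • (fun t i => φ i l₁ l₂ (l₃+1) (m+1) t) (t + 1) := by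
      intro t
      funext i
      simp only [Pi.add_apply, Pi.smul_apply, smul_eq_mul]
      have h := hφ3 i l₁ l₂ (l₃+1) (m+1) t
      rw [add_sub_cancel_right] at h
      linear_combination h
    rw [hσ, hσ, hσ, hσ, hσ, hσ]
    exact key N hN (a₃ l₃) b (fun t i => φ i l₁ l₂ l₃ m t) (fun t i => φ i l₁ l₂ l₃ (m+1) t)
      (fun t i => φ i l₁ l₂ (l₃+1) m t) (fun t i => φ i l₁ l₂ (l₃+1) (m+1) t)
      h1' h2' (hm l₁ l₂ l₃) (hm l₁ l₂ (l₃+1)) s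
end

section
/- Let b ∈ ℂ with b ≠ 0, and a₁,a₂,a₃ : ℤ → ℂ with a_k(l) ≠ 0 and 1+a_k(l)b ≠ 0 for all l ∈ ℤ and k = 1,2,3. Let σ : ℤ⁵ → ℂ (arguments (l₁,l₂,l₃,m,s)) satisfy, for each k = 1,2,3 and all arguments: (1+a_k(l_k)b)·σ(l+e_k,m+1,s)·σ(l,m,s) − σ(l+e_k,m,s)·σ(l,m+1,s) = a_k(l_k)·b·σ(l+e_k,m,s+1)·σ(l,m+1,s−1). Let g_k, h_k : ℤ → ℂ∖{0} satisfy g_k(l+1) = (1+a_k(l)b)·g_k(l) and h_k(l+1) = a_k(l)·h_k(l) for all l ∈ ℤ and k = 1,2,3. Define τ(l,m,s) = ( ∏_{k=1}^{3} g_k(l_k)^m · h_k(l_k)^s ) · b^{−ms} · σ(l,m,s), with integer powers of nonzero complex numbers. Then for each k = 1,2,3 and all (l,m,s) ∈ ℤ⁵: τ(l+e_k,m+1,s)·τ(l,m,s) − τ(l+e_k,m,s)·τ(l,m+1,s) = τ(l+e_k,m,s+1)·τ(l,m+1,s−1). -/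
private lemma zpsplit (y : ℂ) (hy : y ≠ 0) (s : ℤ) : y^(s+1) * y^(s-1) = y^s * y^s := by
  rw [← zpow_add₀ hy, ← zpow_add₀ hy]; congr 1; ring

private lemma key_gauge (a b : ℂ) (U V F P σA σB : ℤ → ℤ → ℂ) (m s : ℤ)
    (hσ : (1+a*b) * σA (m+1) s * σB m s - σA m s * σB (m+1) s
        = a*b*σA m (s+1)*σB (m+1) (s-1))
    (hF : F m (s+1) * F (m+1) (s-1) = F (m+1) s * F m s)
    (hP : P m (s+1) * P (m+1) (s-1) = b * (P (m+1) s * P m s))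
    (hUV : U m (s+1) * V (m+1) (s-1) = a * (U m s * V (m+1) s))
    (hUV2 : U (m+1) s * V m s = (1+a*b) * (U m s * V (m+1) s)) :
    U (m+1) s * F (m+1) s * P (m+1) s * σA (m+1) s * (V m s * F m s * P m s * σB m s)
      - U m s * F m s * P m s * σA m s * (V (m+1) s * F (m+1) s * P (m+1) s * σB (m+1) s)
    = U m (s+1) * F m (s+1) * P m (s+1) * σA m (s+1)
        * (V (m+1) (s-1) * F (m+1) (s-1) * P (m+1) (s-1) * σB (m+1) (s-1)) := by
  calc
    U (m+1) s * F (m+1) s * P (m+1) s * σA (m+1) s * (V m s * F m s * P m s * σB m s)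
        - U m s * F m s * P m s * σA m s * (V (m+1) s * F (m+1) s * P (m+1) s * σB (m+1) s)
      = (U (m+1) s * V m s) * ((F (m+1) s * F m s) * (P (m+1) s * P m s)) * (σA (m+1) s * σB m s)
        - (U m s * V (m+1) s) * ((F (m+1) s * F m s) * (P (m+1) s * P m s)) * (σA m s * σB (m+1) s) := by
        ring
    _ = (U m s * V (m+1) s) * ((F (m+1) s * F m s) * (P (m+1) s * P m s))
          * ((1+a*b) * σA (m+1) s * σB m s - σA m s * σB (m+1) s) := by rw [hUV2]; ring
    _ = (U m s * V (m+1) s) * ((F (m+1) s * F m s) * (P (m+1) s * P m s))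
          * (a * b * σA m (s+1) * σB (m+1) (s-1)) := by rw [hσ]
    _ = (U m (s+1) * V (m+1) (s-1)) * ((F m (s+1) * F (m+1) (s-1)) * (P m (s+1) * P (m+1) (s-1)))
          * (σA m (s+1) * σB (m+1) (s-1)) := by rw [hUV, hF, hP]; ring
    _ = _ := by ring

private lemma hP_gen (b : ℂ) (hb : b ≠ 0) (m s : ℤ) :
    b^(-(m*(s+1))) * b^(-((m+1)*(s-1))) = b * (b^(-((m+1)*s)) * b^(-(m*s))) := by
  rw [← zpow_add₀ hb, ← zpow_add₀ hb,
    show (-(m*(s+1)) + -((m+1)*(s-1))) = 1 + (-((m+1)*s) + -(m*s)) by ring,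
    zpow_add₀ hb, zpow_one]

private lemma hF_gen (x y z w : ℂ) (hy : y ≠ 0) (hw : w ≠ 0) (m s : ℤ) :
    (x^m * y^(s+1) * (z^m * w^(s+1))) * (x^(m+1) * y^(s-1) * (z^(m+1) * w^(s-1)))
      = (x^(m+1) * y^s * (z^(m+1) * w^s)) * (x^m * y^s * (z^m * w^s)) := by
  have h1 := zpsplit y hy s
  have h2 := zpsplit w hw s
  calc (x^m * y^(s+1) * (z^m * w^(s+1))) * (x^(m+1) * y^(s-1) * (z^(m+1) * w^(s-1)))
      = (x^m * x^(m+1)) * (z^m * z^(m+1)) * ((y^(s+1) * y^(s-1)) * (w^(s+1) * w^(s-1))) := by ring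
    _ = (x^m * x^(m+1)) * (z^m * z^(m+1)) * ((y^s * y^s) * (w^s * w^s)) := by rw [h1, h2]
    _ = _ := by ring

private lemma hUV_gen (a : ℂ) (gp gl hp hl : ℂ) (hhp : hp ≠ 0) (hhl : hl ≠ 0)
    (hhrec : hp = a * hl) (m s : ℤ) :
    gp^m * hp^(s+1) * (gl^(m+1) * hl^(s-1)) = a * (gp^m * hp^s * (gl^(m+1) * hl^s)) := by
  have e1 : hp^(s+1) = hp^s * hp := zpow_add_one₀ hhp s
  have e2 : hl^(s-1) * hl = hl^s := by rw [← zpow_add_one₀ hhl, sub_add_cancel]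
  rw [e1, hhrec]
  linear_combination (a * gp^m * (a*hl)^s * gl^(m+1)) * e2

private lemma hUV2_gen (a b : ℂ) (gp gl hp hl : ℂ) (hgp : gp ≠ 0) (hgl : gl ≠ 0)
    (hgrec : gp = (1 + a * b) * gl) (m s : ℤ) :
    gp^(m+1) * hp^s * (gl^m * hl^s) = (1+a*b) * (gp^m * hp^s * (gl^(m+1) * hl^s)) := by
  rw [zpow_add_one₀ hgp, zpow_add_one₀ hgl, hgrec]; ring




/-- Multiplying a solution `σ` of the bilinear equations with coefficients by the gauge factor
`(∏ₖ gₖ(lₖ)^m hₖ(lₖ)^s) b^{-ms}` yields a solution `τ` of the bilinear discrete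
two-dimensional Toda lattice equations without coefficients. -/
theorem stmt_3 (b : ℂ) (hb : b ≠ 0) (a₁ a₂ a₃ : ℤ → ℂ)
    (ha : ∀ l : ℤ, a₁ l ≠ 0 ∧ a₂ l ≠ 0 ∧ a₃ l ≠ 0)
    (hab : ∀ l : ℤ, 1 + a₁ l * b ≠ 0 ∧ 1 + a₂ l * b ≠ 0 ∧ 1 + a₃ l * b ≠ 0)
    (σ : ℤ → ℤ → ℤ → ℤ → ℤ → ℂ)
    (hσ1 : ∀ l₁ l₂ l₃ m s : ℤ,
      (1 + a₁ l₁ * b) * σ (l₁+1) l₂ l₃ (m+1) s * σ l₁ l₂ l₃ m s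
          - σ (l₁+1) l₂ l₃ m s * σ l₁ l₂ l₃ (m+1) s
        = a₁ l₁ * b * σ (l₁+1) l₂ l₃ m (s+1) * σ l₁ l₂ l₃ (m+1) (s-1))
    (hσ2 : ∀ l₁ l₂ l₃ m s : ℤ,
      (1 + a₂ l₂ * b) * σ l₁ (l₂+1) l₃ (m+1) s * σ l₁ l₂ l₃ m s
          - σ l₁ (l₂+1) l₃ m s * σ l₁ l₂ l₃ (m+1) s
        = a₂ l₂ * b * σ l₁ (l₂+1) l₃ m (s+1) * σ l₁ l₂ l₃ (m+1) (s-1))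
    (hσ3 : ∀ l₁ l₂ l₃ m s : ℤ,
      (1 + a₃ l₃ * b) * σ l₁ l₂ (l₃+1) (m+1) s * σ l₁ l₂ l₃ m s
          - σ l₁ l₂ (l₃+1) m s * σ l₁ l₂ l₃ (m+1) s
        = a₃ l₃ * b * σ l₁ l₂ (l₃+1) m (s+1) * σ l₁ l₂ l₃ (m+1) (s-1))
    (g₁ g₂ g₃ h₁ h₂ h₃ : ℤ → ℂ)
    (hg0 : ∀ l : ℤ, g₁ l ≠ 0 ∧ g₂ l ≠ 0 ∧ g₃ l ≠ 0)
    (hh0 : ∀ l : ℤ, h₁ l ≠ 0 ∧ h₂ l ≠ 0 ∧ h₃ l ≠ 0)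
    (hg1 : ∀ l : ℤ, g₁ (l+1) = (1 + a₁ l * b) * g₁ l)
    (hg2 : ∀ l : ℤ, g₂ (l+1) = (1 + a₂ l * b) * g₂ l)
    (hg3 : ∀ l : ℤ, g₃ (l+1) = (1 + a₃ l * b) * g₃ l)
    (hh1 : ∀ l : ℤ, h₁ (l+1) = a₁ l * h₁ l)
    (hh2 : ∀ l : ℤ, h₂ (l+1) = a₂ l * h₂ l)
    (hh3 : ∀ l : ℤ, h₃ (l+1) = a₃ l * h₃ l)
    (τ : ℤ → ℤ → ℤ → ℤ → ℤ → ℂ)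
    (hτ : ∀ l₁ l₂ l₃ m s : ℤ,
      τ l₁ l₂ l₃ m s
        = (g₁ l₁ ^ m * h₁ l₁ ^ s) * (g₂ l₂ ^ m * h₂ l₂ ^ s) * (g₃ l₃ ^ m * h₃ l₃ ^ s)
            * b ^ (-(m * s)) * σ l₁ l₂ l₃ m s) :
    ∀ l₁ l₂ l₃ m s : ℤ,
      (τ (l₁+1) l₂ l₃ (m+1) s * τ l₁ l₂ l₃ m s - τ (l₁+1) l₂ l₃ m s * τ l₁ l₂ l₃ (m+1) s
          = τ (l₁+1) l₂ l₃ m (s+1) * τ l₁ l₂ l₃ (m+1) (s-1))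
      ∧ (τ l₁ (l₂+1) l₃ (m+1) s * τ l₁ l₂ l₃ m s - τ l₁ (l₂+1) l₃ m s * τ l₁ l₂ l₃ (m+1) s
          = τ l₁ (l₂+1) l₃ m (s+1) * τ l₁ l₂ l₃ (m+1) (s-1))
      ∧ (τ l₁ l₂ (l₃+1) (m+1) s * τ l₁ l₂ l₃ m s - τ l₁ l₂ (l₃+1) m s * τ l₁ l₂ l₃ (m+1) s
          = τ l₁ l₂ (l₃+1) m (s+1) * τ l₁ l₂ l₃ (m+1) (s-1)) := by
  intro l₁ l₂ l₃ m s
  refine ⟨?_, ?_, ?_⟩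
  · have H := key_gauge (a₁ l₁) b
      (fun m s => g₁ (l₁+1) ^ m * h₁ (l₁+1) ^ s)
      (fun m s => g₁ l₁ ^ m * h₁ l₁ ^ s)
      (fun m s => (g₂ l₂ ^ m * h₂ l₂ ^ s) * (g₃ l₃ ^ m * h₃ l₃ ^ s))
      (fun m s => b ^ (-(m*s)))
      (σ (l₁+1) l₂ l₃) (σ l₁ l₂ l₃) m s
      (hσ1 l₁ l₂ l₃ m s)
      (hF_gen (g₂ l₂) (h₂ l₂) (g₃ l₃) (h₃ l₃) (hh0 l₂).2.1 (hh0 l₃).2.2 m s)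
      (hP_gen b hb m s)
      (hUV_gen (a₁ l₁) (g₁ (l₁+1)) (g₁ l₁) (h₁ (l₁+1)) (h₁ l₁)
        (hh0 (l₁+1)).1 (hh0 l₁).1 (hh1 l₁) m s)
      (hUV2_gen (a₁ l₁) b (g₁ (l₁+1)) (g₁ l₁) (h₁ (l₁+1)) (h₁ l₁)
        (hg0 (l₁+1)).1 (hg0 l₁).1 (hg1 l₁) m s)
    simp only [hτ]
    linear_combination H
  · have H := key_gauge (a₂ l₂) b
      (fun m s => g₂ (l₂+1) ^ m * h₂ (l₂+1) ^ s)
      (fun m s => g₂ l₂ ^ m * h₂ l₂ ^ s)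
      (fun m s => (g₁ l₁ ^ m * h₁ l₁ ^ s) * (g₃ l₃ ^ m * h₃ l₃ ^ s))
      (fun m s => b ^ (-(m*s)))
      (σ l₁ (l₂+1) l₃) (σ l₁ l₂ l₃) m s
      (hσ2 l₁ l₂ l₃ m s)
      (hF_gen (g₁ l₁) (h₁ l₁) (g₃ l₃) (h₃ l₃) (hh0 l₁).1 (hh0 l₃).2.2 m s)
      (hP_gen b hb m s)
      (hUV_gen (a₂ l₂) (g₂ (l₂+1)) (g₂ l₂) (h₂ (l₂+1)) (h₂ l₂)
        (hh0 (l₂+1)).2.1 (hh0 l₂).2.1 (hh2 l₂) m s)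
      (hUV2_gen (a₂ l₂) b (g₂ (l₂+1)) (g₂ l₂) (h₂ (l₂+1)) (h₂ l₂)
        (hg0 (l₂+1)).2.1 (hg0 l₂).2.1 (hg2 l₂) m s)
    simp only [hτ]
    linear_combination H
  · have H := key_gauge (a₃ l₃) b
      (fun m s => g₃ (l₃+1) ^ m * h₃ (l₃+1) ^ s)
      (fun m s => g₃ l₃ ^ m * h₃ l₃ ^ s)
      (fun m s => (g₁ l₁ ^ m * h₁ l₁ ^ s) * (g₂ l₂ ^ m * h₂ l₂ ^ s))
      (fun m s => b ^ (-(m*s)))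
      (σ l₁ l₂ (l₃+1)) (σ l₁ l₂ l₃) m s
      (hσ3 l₁ l₂ l₃ m s)
      (hF_gen (g₁ l₁) (h₁ l₁) (g₂ l₂) (h₂ l₂) (hh0 l₁).1 (hh0 l₂).2.1 m s)
      (hP_gen b hb m s)
      (hUV_gen (a₃ l₃) (g₃ (l₃+1)) (g₃ l₃) (h₃ (l₃+1)) (h₃ l₃)
        (hh0 (l₃+1)).2.2 (hh0 l₃).2.2 (hh3 l₃) m s)
      (hUV2_gen (a₃ l₃) b (g₃ (l₃+1)) (g₃ l₃) (h₃ (l₃+1)) (h₃ l₃)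
        (hg0 (l₃+1)).2.2 (hg0 l₃).2.2 (hg3 l₃) m s)
    simp only [hτ]
    linear_combination H
end

section
/- Let z : ℤ³ → ℂ satisfy z(p) ≠ z(q) whenever p,q ∈ ℤ³, p ≠ q and every component of p−q lies in {−1,0,1}. Suppose z satisfies, at every (l₁,l₂,l₃) ∈ ℤ³, the discrete Schwarzian KP equation in product form, and in addition the two conditions (in product form): (z_{l₁+1,l₂,l₃}−z_{l₁+1,l₂+1,l₃})(z_{l₁,l₂+1,l₃}−z_{l₁,l₂+1,l₃−1})(z_{l₁,l₂,l₃−1}−z_{l₁+1,l₂,l₃−1}) = −(z_{l₁+1,l₂+1,l₃}−z_{l₁,l₂+1,l₃})(z_{l₁,l₂+1,l₃−1}−z_{l₁,l₂,l₃−1})(z_{l₁+1,l₂,l₃−1}−z_{l₁+1,l₂,l₃}) and (z_{l₁+1,l₂,l₃}−z_{l₁+1,l₂−1,l₃})(z_{l₁,l₂−1,l₃}−z_{l₁,l₂−1,l₃+1})(z_{l₁,l₂,l₃+1}−z_{l₁+1,l₂,l₃+1}) = −(z_{l₁+1,l₂−1,l₃}−z_{l₁,l₂−1,l₃})(z_{l₁,l₂−1,l₃+1}−z_{l₁,l₂,l₃+1})(z_{l₁+1,l₂,l₃+1}−z_{l₁+1,l₂,l₃}).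 Then for each fixed l₃, the cross-ratio X(l₁,l₂) = ((z(l₁,l₂,l₃)−z(l₁+1,l₂,l₃))(z(l₁+1,l₂+1,l₃)−z(l₁,l₂+1,l₃))) / ((z(l₁+1,l₂,l₃)−z(l₁+1,l₂+1,l₃))(z(l₁,l₂+1,l₃)−z(l₁,l₂,l₃))) satisfies X(l₁+1,l₂+1)·X(l₁,l₂) = X(l₁+1,l₂)·X(l₁,l₂+1) for all (l₁,l₂) ∈ ℤ²; consequently there exist functions λ, μ : ℤ → ℂ∖{0} such that X(l₁,l₂) = λ(l₁)/μ(l₂), i.e. z (with l₃ fixed) satisfies the discrete Schwarzian KdV equation. -/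
private lemma stmt_5_assembly {A00 A10 A01 A11 D00 D10 D01 D11 : ℂ}
    {U00 U10 U20 U01 U11 U21 U02 U12 : ℂ} (hU11 : U11 ≠ 0)
    (R10 : A00 * (U01 * U11) = A01 * (U00 * U10))
    (R11 : A10 * (U11 * U21) = A11 * (U10 * U20))
    (R20 : D00 * (U10 * U11) = D10 * (U00 * U01))
    (R21 : D01 * (U11 * U12) = D11 * (U01 * U02)) :
    A11 * U12 * (A00 * U01) * (D10 * U20 * (D01 * U11))
      = A10 * U11 * (A01 * U02) * (D11 * U21 * (D00 * U10)) := by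
  refine mul_left_cancel₀ hU11 ?_
  linear_combination (D01*U11*U12*A11*D10*U20) * R10 + (A01*U00*U10*A11*D10*U20) * R21
    - (D00*U10*U11*A01*U02*D11) * R11 - (A11*U10*U20*A01*U02*D11) * R20


/-- Reduction from the discrete Schwarzian KP equation to the discrete Schwarzian KdV
equation: if `z : ℤ³ → ℂ` takes distinct values at distinct nearby lattice points, satisfies
dSKP in product form and the two additional reduction conditions, then for each fixed `l₃` the
cross-ratio `X` satisfies `X(l₁+1,l₂+1) X(l₁,l₂) = X(l₁+1,l₂) X(l₁,l₂+1)`, and hence separates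
as `X(l₁,l₂) = λ(l₁)/μ(l₂)`, i.e. `z` satisfies the discrete Schwarzian KdV equation. -/
theorem stmt_5 (z : ℤ → ℤ → ℤ → ℂ)
    (hsep : ∀ p q : ℤ × ℤ × ℤ, p ≠ q →
      |p.1 - q.1| ≤ 1 → |p.2.1 - q.2.1| ≤ 1 → |p.2.2 - q.2.2| ≤ 1 →
      z p.1 p.2.1 p.2.2 ≠ z q.1 q.2.1 q.2.2)
    (hdSKP : ∀ l₁ l₂ l₃ : ℤ,
      (z (l₁+1) l₂ l₃ - z (l₁+1) (l₂+1) l₃) * (z l₁ (l₂+1) l₃ - z l₁ (l₂+1) (l₃+1))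
          * (z l₁ l₂ (l₃+1) - z (l₁+1) l₂ (l₃+1))
        = -((z (l₁+1) (l₂+1) l₃ - z l₁ (l₂+1) l₃) * (z l₁ (l₂+1) (l₃+1) - z l₁ l₂ (l₃+1))
            * (z (l₁+1) l₂ (l₃+1) - z (l₁+1) l₂ l₃)))
    (hred1 : ∀ l₁ l₂ l₃ : ℤ,
      (z (l₁+1) l₂ l₃ - z (l₁+1) (l₂+1) l₃) * (z l₁ (l₂+1) l₃ - z l₁ (l₂+1) (l₃-1))
          * (z l₁ l₂ (l₃-1) - z (l₁+1) l₂ (l₃-1))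
        = -((z (l₁+1) (l₂+1) l₃ - z l₁ (l₂+1) l₃) * (z l₁ (l₂+1) (l₃-1) - z l₁ l₂ (l₃-1))
            * (z (l₁+1) l₂ (l₃-1) - z (l₁+1) l₂ l₃)))
    (hred2 : ∀ l₁ l₂ l₃ : ℤ,
      (z (l₁+1) l₂ l₃ - z (l₁+1) (l₂-1) l₃) * (z l₁ (l₂-1) l₃ - z l₁ (l₂-1) (l₃+1))
          * (z l₁ l₂ (l₃+1) - z (l₁+1) l₂ (l₃+1))
        = -((z (l₁+1) (l₂-1) l₃ - z l₁ (l₂-1) l₃) * (z l₁ (l₂-1) (l₃+1) - z l₁ l₂ (l₃+1))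
            * (z (l₁+1) l₂ (l₃+1) - z (l₁+1) l₂ l₃)))
    (X : ℤ → ℤ → ℤ → ℂ)
    (hX : ∀ l₃ l₁ l₂ : ℤ,
      X l₃ l₁ l₂ = ((z l₁ l₂ l₃ - z (l₁+1) l₂ l₃) * (z (l₁+1) (l₂+1) l₃ - z l₁ (l₂+1) l₃))
        / ((z (l₁+1) l₂ l₃ - z (l₁+1) (l₂+1) l₃) * (z l₁ (l₂+1) l₃ - z l₁ l₂ l₃))) :
    ∀ l₃ : ℤ,
      (∀ l₁ l₂ : ℤ, X l₃ (l₁+1) (l₂+1) * X l₃ l₁ l₂ = X l₃ (l₁+1) l₂ * X l₃ l₁ (l₂+1))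
      ∧ ∃ lam mu : ℤ → ℂ, (∀ l₁, lam l₁ ≠ 0) ∧ (∀ l₂, mu l₂ ≠ 0)
          ∧ ∀ l₁ l₂ : ℤ, X l₃ l₁ l₂ = lam l₁ / mu l₂ := by
  -- a convenient form of the separation hypothesis
  have hne : ∀ p₁ p₂ p₃ q₁ q₂ q₃ : ℤ,
      ((p₁ ≠ q₁ ∨ p₂ ≠ q₂ ∨ p₃ ≠ q₃) ∧ p₁ - q₁ ≤ 1 ∧ q₁ - p₁ ≤ 1 ∧ p₂ - q₂ ≤ 1 ∧
        q₂ - p₂ ≤ 1 ∧ p₃ - q₃ ≤ 1 ∧ q₃ - p₃ ≤ 1) →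
      z p₁ p₂ p₃ - z q₁ q₂ q₃ ≠ 0 := by
    intro p₁ p₂ p₃ q₁ q₂ q₃ ⟨h, a1, a2, b1, b2, c1, c2⟩
    have A1 : |p₁ - q₁| ≤ 1 := abs_le.mpr ⟨by omega, by omega⟩
    have A2 : |p₂ - q₂| ≤ 1 := abs_le.mpr ⟨by omega, by omega⟩
    have A3 : |p₃ - q₃| ≤ 1 := abs_le.mpr ⟨by omega, by omega⟩
    refine sub_ne_zero_of_ne (hsep (p₁, p₂, p₃) (q₁, q₂, q₃) ?_ A1 A2 A3)
    intro hEq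
    simp only [Prod.mk.injEq] at hEq
    omega
  intro l₃
  -- X never vanishes
  have hXne : ∀ m₁ m₂ : ℤ, X l₃ m₁ m₂ ≠ 0 := by
    intro m₁ m₂
    rw [hX]
    exact div_ne_zero
      (mul_ne_zero (hne _ _ _ _ _ _ (by omega)) (hne _ _ _ _ _ _ (by omega)))
      (mul_ne_zero (hne _ _ _ _ _ _ (by omega)) (hne _ _ _ _ _ _ (by omega)))
  -- the relation R1 : A₀₀ (U₀₁ U₁₁) = A₀₁ (U₀₀ U₁₀)
  have hR1 : ∀ m₁ m₂ : ℤ,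
      (z m₁ m₂ l₃ - z (m₁+1) m₂ l₃) * (z m₁ m₂ (l₃+1) - z (m₁+1) m₂ (l₃+1)) *
        ((z m₁ (m₂+1) l₃ - z m₁ (m₂+1) (l₃+1)) * (z (m₁+1) (m₂+1) l₃ - z (m₁+1) (m₂+1) (l₃+1)))
      = (z m₁ (m₂+1) l₃ - z (m₁+1) (m₂+1) l₃) * (z m₁ (m₂+1) (l₃+1) - z (m₁+1) (m₂+1) (l₃+1)) *
        ((z m₁ m₂ l₃ - z m₁ m₂ (l₃+1)) * (z (m₁+1) m₂ l₃ - z (m₁+1) m₂ (l₃+1))) := by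
    intro m₁ m₂
    have E1 := hdSKP m₁ m₂ l₃
    have E2 := hred2 m₁ (m₂+1) l₃
    simp only [add_sub_cancel_right] at E2
    have hd' : z m₁ (m₂+1) (l₃+1) - z m₁ m₂ (l₃+1) ≠ 0 := hne _ _ _ _ _ _ (by omega)
    refine mul_left_cancel₀ hd' ?_
    linear_combination (-((z m₁ m₂ l₃ - z m₁ m₂ (l₃+1)) *
        (z m₁ (m₂+1) (l₃+1) - z (m₁+1) (m₂+1) (l₃+1)))) * E1 +
      (-((z m₁ (m₂+1) l₃ - z m₁ (m₂+1) (l₃+1)) *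
        (z m₁ m₂ (l₃+1) - z (m₁+1) m₂ (l₃+1)))) * E2
  -- the relation R2 : D₀₀ (U₁₀ U₁₁) = D₁₀ (U₀₀ U₀₁)
  have hR2 : ∀ m₁ m₂ : ℤ,
      (z m₁ (m₂+1) l₃ - z m₁ m₂ l₃) * (z m₁ (m₂+1) (l₃+1) - z m₁ m₂ (l₃+1)) *
        ((z (m₁+1) m₂ l₃ - z (m₁+1) m₂ (l₃+1)) * (z (m₁+1) (m₂+1) l₃ - z (m₁+1) (m₂+1) (l₃+1)))
      = (z (m₁+1) (m₂+1) l₃ - z (m₁+1) m₂ l₃) * (z (m₁+1) (m₂+1) (l₃+1) - z (m₁+1) m₂ (l₃+1)) *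
        ((z m₁ m₂ l₃ - z m₁ m₂ (l₃+1)) * (z m₁ (m₂+1) l₃ - z m₁ (m₂+1) (l₃+1))) := by
    intro m₁ m₂
    have E2 := hred2 m₁ (m₂+1) l₃
    simp only [add_sub_cancel_right] at E2
    have E3 := hred1 m₁ m₂ (l₃+1)
    simp only [add_sub_cancel_right] at E3
    have ha : z m₁ m₂ l₃ - z (m₁+1) m₂ l₃ ≠ 0 := hne _ _ _ _ _ _ (by omega)
    have hat' : z m₁ (m₂+1) (l₃+1) - z (m₁+1) (m₂+1) (l₃+1) ≠ 0 := hne _ _ _ _ _ _ (by omega)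
    refine mul_left_cancel₀ (mul_ne_zero ha hat') ?_
    linear_combination (-((z m₁ (m₂+1) (l₃+1) - z (m₁+1) (m₂+1) (l₃+1)) *
        (z m₁ (m₂+1) l₃ - z m₁ m₂ l₃) * (z (m₁+1) m₂ l₃ - z (m₁+1) m₂ (l₃+1)))) * E2 +
      ((z (m₁+1) m₂ l₃ - z (m₁+1) (m₂+1) l₃) * (z m₁ m₂ l₃ - z m₁ m₂ (l₃+1)) *
        (z m₁ (m₂+1) (l₃+1) - z (m₁+1) (m₂+1) (l₃+1))) * E3
  -- the product formula for X
  have hF : ∀ m₁ m₂ : ℤ, X l₃ m₁ m₂ =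
      (z m₁ m₂ l₃ - z (m₁+1) m₂ l₃) * (z m₁ m₂ (l₃+1) - z (m₁+1) m₂ (l₃+1)) *
        (z m₁ (m₂+1) l₃ - z m₁ (m₂+1) (l₃+1)) /
      ((z m₁ (m₂+1) l₃ - z m₁ m₂ l₃) * (z m₁ (m₂+1) (l₃+1) - z m₁ m₂ (l₃+1)) *
        (z (m₁+1) m₂ l₃ - z (m₁+1) m₂ (l₃+1))) := by
    intro m₁ m₂
    have E1 := hdSKP m₁ m₂ l₃
    rw [hX]
    rw [div_eq_div_iff
      (mul_ne_zero (hne _ _ _ _ _ _ (by omega)) (hne _ _ _ _ _ _ (by omega)))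
      (mul_ne_zero (mul_ne_zero (hne _ _ _ _ _ _ (by omega)) (hne _ _ _ _ _ _ (by omega)))
        (hne _ _ _ _ _ _ (by omega)))]
    linear_combination (-((z m₁ m₂ l₃ - z (m₁+1) m₂ l₃) *
        (z m₁ (m₂+1) l₃ - z m₁ m₂ l₃))) * E1
  -- the multiplicative relation for X
  have hrel : ∀ m₁ m₂ : ℤ,
      X l₃ (m₁+1) (m₂+1) * X l₃ m₁ m₂ = X l₃ (m₁+1) m₂ * X l₃ m₁ (m₂+1) := by
    intro m₁ m₂
    have R10 := hR1 m₁ m₂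
    have R11 := hR1 (m₁+1) m₂
    have R20 := hR2 m₁ m₂
    have R21 := hR2 m₁ (m₂+1)
    have hU11 : z (m₁+1) (m₂+1) l₃ - z (m₁+1) (m₂+1) (l₃+1) ≠ 0 := hne _ _ _ _ _ _ (by omega)
    have hD11U21 : (z (m₁+1) (m₂+1+1) l₃ - z (m₁+1) (m₂+1) l₃) *
        (z (m₁+1) (m₂+1+1) (l₃+1) - z (m₁+1) (m₂+1) (l₃+1)) *
        (z (m₁+1+1) (m₂+1) l₃ - z (m₁+1+1) (m₂+1) (l₃+1)) *
        ((z m₁ (m₂+1) l₃ - z m₁ m₂ l₃) * (z m₁ (m₂+1) (l₃+1) - z m₁ m₂ (l₃+1)) *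
          (z (m₁+1) m₂ l₃ - z (m₁+1) m₂ (l₃+1))) ≠ 0 :=
      mul_ne_zero
        (mul_ne_zero (mul_ne_zero (hne _ _ _ _ _ _ (by omega)) (hne _ _ _ _ _ _ (by omega)))
          (hne _ _ _ _ _ _ (by omega)))
        (mul_ne_zero (mul_ne_zero (hne _ _ _ _ _ _ (by omega)) (hne _ _ _ _ _ _ (by omega)))
          (hne _ _ _ _ _ _ (by omega)))
    have hD10U20 : (z (m₁+1) (m₂+1) l₃ - z (m₁+1) m₂ l₃) *
        (z (m₁+1) (m₂+1) (l₃+1) - z (m₁+1) m₂ (l₃+1)) *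
        (z (m₁+1+1) m₂ l₃ - z (m₁+1+1) m₂ (l₃+1)) *
        ((z m₁ (m₂+1+1) l₃ - z m₁ (m₂+1) l₃) * (z m₁ (m₂+1+1) (l₃+1) - z m₁ (m₂+1) (l₃+1)) *
          (z (m₁+1) (m₂+1) l₃ - z (m₁+1) (m₂+1) (l₃+1))) ≠ 0 :=
      mul_ne_zero
        (mul_ne_zero (mul_ne_zero (hne _ _ _ _ _ _ (by omega)) (hne _ _ _ _ _ _ (by omega)))
          (hne _ _ _ _ _ _ (by omega)))
        (mul_ne_zero (mul_ne_zero (hne _ _ _ _ _ _ (by omega)) (hne _ _ _ _ _ _ (by omega)))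
          (hne _ _ _ _ _ _ (by omega)))
    rw [hF (m₁+1) (m₂+1), hF m₁ m₂, hF (m₁+1) m₂, hF m₁ (m₂+1),
      div_mul_div_comm, div_mul_div_comm, div_eq_div_iff hD11U21 hD10U20]
    exact stmt_5_assembly hU11 R10 R11 R20 R21
  refine ⟨hrel, ?_⟩
  -- separation of variables
  have colconst : ∀ m₁ m₂ : ℤ,
      X l₃ (m₁+1) m₂ * X l₃ m₁ 0 = X l₃ (m₁+1) 0 * X l₃ m₁ m₂ := by
    intro m₁ m₂
    induction m₂ using Int.induction_on with
    | zero => ring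
    | succ n ih =>
      have h := hrel m₁ (n : ℤ)
      refine mul_left_cancel₀ (hXne m₁ (n : ℤ)) ?_
      linear_combination (X l₃ m₁ 0) * h + (X l₃ m₁ ((n : ℤ)+1)) * ih
    | pred n ih =>
      have h := hrel m₁ (-(n : ℤ) - 1)
      have e : (-(n : ℤ) - 1 + 1) = -(n : ℤ) := by ring
      rw [e] at h
      refine mul_left_cancel₀ (hXne m₁ (-(n : ℤ))) ?_
      linear_combination (-(X l₃ m₁ 0)) * h + (X l₃ m₁ (-(n : ℤ) - 1)) * ih
  have G : ∀ m₁ m₂ : ℤ, X l₃ m₁ m₂ * X l₃ 0 0 = X l₃ m₁ 0 * X l₃ 0 m₂ := by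
    intro m₁ m₂
    induction m₁ using Int.induction_on with
    | zero => ring
    | succ n ih =>
      have h := colconst (n : ℤ) m₂
      refine mul_left_cancel₀ (hXne (n : ℤ) 0) ?_
      linear_combination (X l₃ 0 0) * h + (X l₃ ((n : ℤ)+1) 0) * ih
    | pred n ih =>
      have h := colconst (-(n : ℤ) - 1) m₂
      have e : (-(n : ℤ) - 1 + 1) = -(n : ℤ) := by ring
      rw [e] at h
      refine mul_left_cancel₀ (hXne (-(n : ℤ)) 0) ?_
      linear_combination (-(X l₃ 0 0)) * h + (X l₃ (-(n : ℤ) - 1) 0) * ih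
  refine ⟨fun m₁ => X l₃ m₁ 0, fun m₂ => X l₃ 0 0 / X l₃ 0 m₂,
    fun m₁ => hXne m₁ 0, fun m₂ => div_ne_zero (hXne 0 0) (hXne 0 m₂), ?_⟩
  intro m₁ m₂
  rw [div_div_eq_mul_div, eq_div_iff (hXne 0 0)]
  exact G m₁ m₂
end

section
/- Let b ∈ ℂ and a₁,a₂ : ℤ → ℂ with a_k(l)·b ≠ 0 and 1+a_k(l)b ≠ 0 for all l ∈ ℤ and k = 1,2. Let σ : ℤ³ → ℂ (arguments (l₁,l₂,s)) be nowhere vanishing and satisfy, for k = 1,2 and all (l₁,l₂,s): (1+a_k(l_k)b)·σ(l+e_k, s+2)·σ(l, s) − σ(l+e_k, s)·σ(l, s+2) = a_k(l_k)·b·σ(l+e_k, s+1)·σ(l, s+1), where l = (l₁,l₂). Let G : ℤ² → ℂ with G(0,0) ≠ 0, G(l₁+1,l₂) = (1+a₁(l₁)b)·G(l₁,l₂) and G(l₁,l₂+1) = (1+a₂(l₂)b)·G(l₁,l₂). Fix s₀ ∈ ℤ and define z(l₁,l₂) = G(l₁,l₂)·σ(l₁,l₂,s₀+2)/σ(l₁,l₂,s₀).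 Then for all (l₁,l₂) ∈ ℤ² the four differences z(l₁,l₂)−z(l₁+1,l₂), z(l₁+1,l₂+1)−z(l₁,l₂+1), z(l₁+1,l₂)−z(l₁+1,l₂+1), z(l₁,l₂+1)−z(l₁,l₂) are nonzero and ((z(l₁,l₂)−z(l₁+1,l₂))(z(l₁+1,l₂+1)−z(l₁,l₂+1))) / ((z(l₁+1,l₂)−z(l₁+1,l₂+1))(z(l₁,l₂+1)−z(l₁,l₂))) = λ(l₁)/μ(l₂), where λ(l₁) = a₁(l₁)²/(1+a₁(l₁)b) and μ(l₂) = a₂(l₂)²/(1+a₂(l₂)b); that is, z satisfies the discrete Schwarzian KdV equation with coefficients λ, μ. -/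
/-- From a nowhere vanishing solution `σ` of the bilinear equations, the gauged ratio
`z = G · σ^{s₀+2}/σ^{s₀}` satisfies the discrete Schwarzian KdV equation with coefficients
`λ(l₁) = a₁(l₁)²/(1+a₁(l₁)b)` and `μ(l₂) = a₂(l₂)²/(1+a₂(l₂)b)`. -/
theorem stmt_7 (b : ℂ) (a₁ a₂ : ℤ → ℂ)
    (ha₁ : ∀ l : ℤ, a₁ l * b ≠ 0) (ha₂ : ∀ l : ℤ, a₂ l * b ≠ 0)
    (hab₁ : ∀ l : ℤ, 1 + a₁ l * b ≠ 0) (hab₂ : ∀ l : ℤ, 1 + a₂ l * b ≠ 0)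
    (σ : ℤ → ℤ → ℤ → ℂ) (hσ0 : ∀ l₁ l₂ s : ℤ, σ l₁ l₂ s ≠ 0)
    (hσ1 : ∀ l₁ l₂ s : ℤ,
      (1 + a₁ l₁ * b) * σ (l₁+1) l₂ (s+2) * σ l₁ l₂ s - σ (l₁+1) l₂ s * σ l₁ l₂ (s+2)
        = a₁ l₁ * b * σ (l₁+1) l₂ (s+1) * σ l₁ l₂ (s+1))
    (hσ2 : ∀ l₁ l₂ s : ℤ,
      (1 + a₂ l₂ * b) * σ l₁ (l₂+1) (s+2) * σ l₁ l₂ s - σ l₁ (l₂+1) s * σ l₁ l₂ (s+2)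
        = a₂ l₂ * b * σ l₁ (l₂+1) (s+1) * σ l₁ l₂ (s+1))
    (G : ℤ → ℤ → ℂ) (hG0 : G 0 0 ≠ 0)
    (hG1 : ∀ l₁ l₂ : ℤ, G (l₁+1) l₂ = (1 + a₁ l₁ * b) * G l₁ l₂)
    (hG2 : ∀ l₁ l₂ : ℤ, G l₁ (l₂+1) = (1 + a₂ l₂ * b) * G l₁ l₂)
    (s₀ : ℤ) (z : ℤ → ℤ → ℂ)
    (hz : ∀ l₁ l₂ : ℤ, z l₁ l₂ = G l₁ l₂ * σ l₁ l₂ (s₀+2) / σ l₁ l₂ s₀) :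
    ∀ l₁ l₂ : ℤ,
      z l₁ l₂ - z (l₁+1) l₂ ≠ 0 ∧ z (l₁+1) (l₂+1) - z l₁ (l₂+1) ≠ 0
      ∧ z (l₁+1) l₂ - z (l₁+1) (l₂+1) ≠ 0 ∧ z l₁ (l₂+1) - z l₁ l₂ ≠ 0
      ∧ ((z l₁ l₂ - z (l₁+1) l₂) * (z (l₁+1) (l₂+1) - z l₁ (l₂+1)))
          / ((z (l₁+1) l₂ - z (l₁+1) (l₂+1)) * (z l₁ (l₂+1) - z l₁ l₂))
        = (a₁ l₁ ^ 2 / (1 + a₁ l₁ * b)) / (a₂ l₂ ^ 2 / (1 + a₂ l₂ * b)) := by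
  -- G is nowhere zero
  have hG0col : ∀ l₂ : ℤ, G 0 l₂ ≠ 0 := by
    intro l₂
    induction l₂ using Int.induction_on with
    | zero => exact hG0
    | succ i ih => rw [hG2]; exact mul_ne_zero (hab₂ i) ih
    | pred i ih =>
        have h := hG2 0 (-(i:ℤ)-1)
        rw [show (-(i:ℤ)-1) + 1 = -(i:ℤ) by ring] at h
        intro hc
        rw [hc, mul_zero] at h
        exact ih h
  have hGne : ∀ l₁ l₂ : ℤ, G l₁ l₂ ≠ 0 := by
    intro l₁
    induction l₁ using Int.induction_on with
    | zero => exact hG0col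
    | succ i ih => intro l₂; rw [hG1]; exact mul_ne_zero (hab₁ i) (ih l₂)
    | pred i ih =>
        intro l₂
        have h := hG1 (-(i:ℤ)-1) l₂
        rw [show (-(i:ℤ)-1) + 1 = -(i:ℤ) by ring] at h
        intro hc
        rw [hc, mul_zero] at h
        exact ih l₂ h
  intro l₁ l₂
  have e1 : z l₁ l₂ - z (l₁+1) l₂
      = -(G l₁ l₂ * (a₁ l₁ * b) * σ (l₁+1) l₂ (s₀+1) * σ l₁ l₂ (s₀+1))
        / (σ l₁ l₂ s₀ * σ (l₁+1) l₂ s₀) := by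
    rw [hz, hz, hG1,
      div_sub_div _ _ (hσ0 l₁ l₂ s₀) (hσ0 (l₁+1) l₂ s₀),
      div_eq_div_iff (mul_ne_zero (hσ0 l₁ l₂ s₀) (hσ0 (l₁+1) l₂ s₀))
        (mul_ne_zero (hσ0 l₁ l₂ s₀) (hσ0 (l₁+1) l₂ s₀))]
    linear_combination (-(G l₁ l₂ * σ l₁ l₂ s₀ * σ (l₁+1) l₂ s₀)) * hσ1 l₁ l₂ s₀
  have e2 : z (l₁+1) (l₂+1) - z l₁ (l₂+1)
      = (G l₁ (l₂+1) * (a₁ l₁ * b) * σ (l₁+1) (l₂+1) (s₀+1) * σ l₁ (l₂+1) (s₀+1))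
        / (σ l₁ (l₂+1) s₀ * σ (l₁+1) (l₂+1) s₀) := by
    rw [hz, hz, hG1,
      div_sub_div _ _ (hσ0 (l₁+1) (l₂+1) s₀) (hσ0 l₁ (l₂+1) s₀),
      div_eq_div_iff (mul_ne_zero (hσ0 (l₁+1) (l₂+1) s₀) (hσ0 l₁ (l₂+1) s₀))
        (mul_ne_zero (hσ0 l₁ (l₂+1) s₀) (hσ0 (l₁+1) (l₂+1) s₀))]
    linear_combination (G l₁ (l₂+1) * σ l₁ (l₂+1) s₀ * σ (l₁+1) (l₂+1) s₀) * hσ1 l₁ (l₂+1) s₀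
  have e3 : z (l₁+1) l₂ - z (l₁+1) (l₂+1)
      = -(G (l₁+1) l₂ * (a₂ l₂ * b) * σ (l₁+1) (l₂+1) (s₀+1) * σ (l₁+1) l₂ (s₀+1))
        / (σ (l₁+1) l₂ s₀ * σ (l₁+1) (l₂+1) s₀) := by
    rw [hz, hz, hG2,
      div_sub_div _ _ (hσ0 (l₁+1) l₂ s₀) (hσ0 (l₁+1) (l₂+1) s₀),
      div_eq_div_iff (mul_ne_zero (hσ0 (l₁+1) l₂ s₀) (hσ0 (l₁+1) (l₂+1) s₀))
        (mul_ne_zero (hσ0 (l₁+1) l₂ s₀) (hσ0 (l₁+1) (l₂+1) s₀))]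
    linear_combination (-(G (l₁+1) l₂ * σ (l₁+1) l₂ s₀ * σ (l₁+1) (l₂+1) s₀)) * hσ2 (l₁+1) l₂ s₀
  have e4 : z l₁ (l₂+1) - z l₁ l₂
      = (G l₁ l₂ * (a₂ l₂ * b) * σ l₁ (l₂+1) (s₀+1) * σ l₁ l₂ (s₀+1))
        / (σ l₁ l₂ s₀ * σ l₁ (l₂+1) s₀) := by
    rw [hz, hz, hG2,
      div_sub_div _ _ (hσ0 l₁ (l₂+1) s₀) (hσ0 l₁ l₂ s₀),
      div_eq_div_iff (mul_ne_zero (hσ0 l₁ (l₂+1) s₀) (hσ0 l₁ l₂ s₀))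
        (mul_ne_zero (hσ0 l₁ l₂ s₀) (hσ0 l₁ (l₂+1) s₀))]
    linear_combination (G l₁ l₂ * σ l₁ l₂ s₀ * σ l₁ (l₂+1) s₀) * hσ2 l₁ l₂ s₀
  have hd1 : z l₁ l₂ - z (l₁+1) l₂ ≠ 0 := by
    rw [e1]
    apply div_ne_zero
    · simp only [neg_ne_zero]
      exact mul_ne_zero (mul_ne_zero (mul_ne_zero (hGne _ _) (ha₁ _)) (hσ0 _ _ _)) (hσ0 _ _ _)
    · exact mul_ne_zero (hσ0 _ _ _) (hσ0 _ _ _)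
  have hd2 : z (l₁+1) (l₂+1) - z l₁ (l₂+1) ≠ 0 := by
    rw [e2]
    exact div_ne_zero (mul_ne_zero (mul_ne_zero (mul_ne_zero (hGne _ _) (ha₁ _)) (hσ0 _ _ _)) (hσ0 _ _ _)) (mul_ne_zero (hσ0 _ _ _) (hσ0 _ _ _))
  have hd3 : z (l₁+1) l₂ - z (l₁+1) (l₂+1) ≠ 0 := by
    rw [e3]
    apply div_ne_zero
    · simp only [neg_ne_zero]
      exact mul_ne_zero (mul_ne_zero (mul_ne_zero (hGne _ _) (ha₂ _)) (hσ0 _ _ _)) (hσ0 _ _ _)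
    · exact mul_ne_zero (hσ0 _ _ _) (hσ0 _ _ _)
  have hd4 : z l₁ (l₂+1) - z l₁ l₂ ≠ 0 := by
    rw [e4]
    exact div_ne_zero (mul_ne_zero (mul_ne_zero (mul_ne_zero (hGne _ _) (ha₂ _)) (hσ0 _ _ _)) (hσ0 _ _ _)) (mul_ne_zero (hσ0 _ _ _) (hσ0 _ _ _))
  refine ⟨hd1, hd2, hd3, hd4, ?_⟩
  have hb : b ≠ 0 := fun hb => ha₁ 0 (by rw [hb, mul_zero])
  have ha₁' : a₁ l₁ ≠ 0 := fun h => ha₁ l₁ (by rw [h, zero_mul])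
  have ha₂' : a₂ l₂ ≠ 0 := fun h => ha₂ l₂ (by rw [h, zero_mul])
  rw [div_eq_div_iff (mul_ne_zero hd3 hd4)
      (div_ne_zero (pow_ne_zero 2 ha₂') (hab₂ l₂))]
  rw [e1, e2, e3, e4, hG1, hG2]
  field_simp [hσ0 l₁ l₂ s₀, hσ0 (l₁+1) l₂ s₀, hσ0 l₁ (l₂+1) s₀, hσ0 (l₁+1) (l₂+1) s₀,
    hab₁ l₁, hab₂ l₂]
  linear_combination (-(G l₁ l₂ ^ 2 * σ (l₁+1) l₂ (s₀+1) * σ l₁ l₂ (s₀+1) * σ (l₁+1) (l₂+1) (s₀+1) * σ l₁ (l₂+1) (s₀+1))) * mul_inv_cancel₀ (hab₂ l₂)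
end

section
/- Let Q, γ, α₀, α₁, α₂ ∈ ℂ∖{0} and let τ : ℤ³ → ℂ with arguments (n,m,N). (a) If for all (n,m,N): τ(n+1,m,N+1)τ(n,m,N−1) − Q^{m−2n−2N}γ^{−2}α₀^{−3}α₁^{−1}α₂^{−2}·τ(n+1,m+1,N)τ(n,m−1,N) − Q^{4n−2m+4N}γ⁴α₀⁶α₁²α₂⁴·τ(n+1,m,N)τ(n,m,N) = 0 and τ(n,m,N+1)τ(n+1,m,N−1) − Q^{−2n+m+2N}γ²α₀^{−3}α₁^{−1}α₂^{−2}·τ(n,m−1,N)τ(n+1,m+1,N) − Q^{4n−2m−4N}γ^{−4}α₀⁶α₁²α₂⁴·τ(n,m,N)τ(n+1,m,N) = 0, then for all (n,m,N): τ(n,m,N+1)τ(n+1,m,N−1) − Q^{4N}γ⁴·τ(n+1,m,N+1)τ(n,m,N−1) + Q^{4n−2m−4N}γ^{−4}α₀⁶α₁²α₂⁴(Q^{12N}γ^{12}−1)·τ(n+1,m,N)τ(n,m,N) = 0. (b) If moreover α₀α₁α₂ = Q and for all (n,m,N): τ(n,m+1,N+1)τ(n,m,N−1) − Q^{n−2m−2N}γ^{−2}α₁^{−1}α₂·τ(n−1,m,N)τ(n+1,m+1,N)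 − Q^{−2n+4m+4N}γ⁴α₁²α₂^{−2}·τ(n,m+1,N)τ(n,m,N) = 0 and τ(n,m,N+1)τ(n,m+1,N−1) − Q^{n−2m+2N−1}γ²α₀α₂²·τ(n+1,m+1,N)τ(n−1,m,N) − Q^{−2n+4m−4N+2}γ^{−4}α₀^{−2}α₂^{−4}·τ(n,m,N)τ(n,m+1,N) = 0, then for all (n,m,N): τ(n,m,N+1)τ(n,m+1,N−1) − Q^{4N}γ⁴·τ(n,m+1,N+1)τ(n,m,N−1) + Q^{4m−2n−4N}γ^{−4}α₁²α₂^{−2}(Q^{12N}γ^{12}−1)·τ(n,m+1,N)τ(n,m,N) = 0. -/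
/-- Derivation of the bilinear equations (3.26) and (3.27) for the τ function of the Painlevé
system of type (A₂+A₁)⁽¹⁾ from the bilinear equations (B.17), (B.20), (B.18), (B.21) of
Kajiwara–Nakazono–Tsuda. -/
theorem stmt_9 (Q γ α₀ α₁ α₂ : ℂ)
    (hQ : Q ≠ 0) (hγ : γ ≠ 0) (hα₀ : α₀ ≠ 0) (hα₁ : α₁ ≠ 0) (hα₂ : α₂ ≠ 0)
    (τ : ℤ → ℤ → ℤ → ℂ)
    (h1a : ∀ n m N : ℤ,
      τ (n+1) m (N+1) * τ n m (N-1)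
        - Q ^ (m - 2*n - 2*N) * γ ^ (-2 : ℤ) * α₀ ^ (-3 : ℤ) * α₁ ^ (-1 : ℤ) * α₂ ^ (-2 : ℤ)
            * (τ (n+1) (m+1) N * τ n (m-1) N)
        - Q ^ (4*n - 2*m + 4*N) * γ ^ (4 : ℤ) * α₀ ^ (6 : ℤ) * α₁ ^ (2 : ℤ) * α₂ ^ (4 : ℤ)
            * (τ (n+1) m N * τ n m N) = 0)
    (h2a : ∀ n m N : ℤ,
      τ n m (N+1) * τ (n+1) m (N-1)
        - Q ^ (-2*n + m + 2*N) * γ ^ (2 : ℤ) * α₀ ^ (-3 : ℤ) * α₁ ^ (-1 : ℤ) * α₂ ^ (-2 : ℤ)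
            * (τ n (m-1) N * τ (n+1) (m+1) N)
        - Q ^ (4*n - 2*m - 4*N) * γ ^ (-4 : ℤ) * α₀ ^ (6 : ℤ) * α₁ ^ (2 : ℤ) * α₂ ^ (4 : ℤ)
            * (τ n m N * τ (n+1) m N) = 0) :
    (∀ n m N : ℤ,
      τ n m (N+1) * τ (n+1) m (N-1)
        - Q ^ (4*N) * γ ^ (4 : ℤ) * (τ (n+1) m (N+1) * τ n m (N-1))
        + Q ^ (4*n - 2*m - 4*N) * γ ^ (-4 : ℤ) * α₀ ^ (6 : ℤ) * α₁ ^ (2 : ℤ) * α₂ ^ (4 : ℤ)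
            * (Q ^ (12*N) * γ ^ (12 : ℤ) - 1) * (τ (n+1) m N * τ n m N) = 0)
    ∧ (α₀ * α₁ * α₂ = Q →
      (∀ n m N : ℤ,
        τ n (m+1) (N+1) * τ n m (N-1)
          - Q ^ (n - 2*m - 2*N) * γ ^ (-2 : ℤ) * α₁ ^ (-1 : ℤ) * α₂
              * (τ (n-1) m N * τ (n+1) (m+1) N)
          - Q ^ (-2*n + 4*m + 4*N) * γ ^ (4 : ℤ) * α₁ ^ (2 : ℤ) * α₂ ^ (-2 : ℤ)
              * (τ n (m+1) N * τ n m N) = 0) →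
      (∀ n m N : ℤ,
        τ n m (N+1) * τ n (m+1) (N-1)
          - Q ^ (n - 2*m + 2*N - 1) * γ ^ (2 : ℤ) * α₀ * α₂ ^ (2 : ℤ)
              * (τ (n+1) (m+1) N * τ (n-1) m N)
          - Q ^ (-2*n + 4*m - 4*N + 2) * γ ^ (-4 : ℤ) * α₀ ^ (-2 : ℤ) * α₂ ^ (-4 : ℤ)
              * (τ n m N * τ n (m+1) N) = 0) →
      ∀ n m N : ℤ,
        τ n m (N+1) * τ n (m+1) (N-1)
          - Q ^ (4*N) * γ ^ (4 : ℤ) * (τ n (m+1) (N+1) * τ n m (N-1))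
          + Q ^ (4*m - 2*n - 4*N) * γ ^ (-4 : ℤ) * α₁ ^ (2 : ℤ) * α₂ ^ (-2 : ℤ)
              * (Q ^ (12*N) * γ ^ (12 : ℤ) - 1) * (τ n (m+1) N * τ n m N) = 0) := by
  have kQ : ∀ a b c : ℤ, a + b = c → Q ^ a * Q ^ b = Q ^ c := by
    intro a b c h; rw [← h, zpow_add₀ hQ]
  have kγ : ∀ a b c : ℤ, a + b = c → γ ^ a * γ ^ b = γ ^ c := by
    intro a b c h; rw [← h, zpow_add₀ hγ]
  have h3 : α₁ * α₁ ^ (-1 : ℤ) = 1 := by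
    rw [zpow_neg_one]; exact mul_inv_cancel₀ hα₁
  constructor
  · intro n m N
    have p1 := kQ (4*N) (m - 2*n - 2*N) (-2*n + m + 2*N) (by ring)
    have p2 := kγ 4 (-2) 2 (by ring)
    have p3 := kQ (4*N) (4*n - 2*m + 4*N) (4*n - 2*m + 8*N) (by ring)
    have p4 := kγ 4 4 8 (by ring)
    have p5 := kQ (4*n - 2*m - 4*N) (12*N) (4*n - 2*m + 8*N) (by ring)
    have p6 := kγ (-4) 12 8 (by ring)
    linear_combination h2a n m N - Q ^ (4*N) * γ ^ (4 : ℤ) * h1a n m N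
      - γ ^ (-2 : ℤ) * α₀ ^ (-3 : ℤ) * α₁ ^ (-1 : ℤ) * α₂ ^ (-2 : ℤ)
          * (τ (n+1) (m+1) N * τ n (m-1) N) * γ ^ (4 : ℤ) * p1
      - Q ^ (-2*n + m + 2*N) * α₀ ^ (-3 : ℤ) * α₁ ^ (-1 : ℤ) * α₂ ^ (-2 : ℤ)
          * (τ (n+1) (m+1) N * τ n (m-1) N) * p2
      - γ ^ (4 : ℤ) * γ ^ (4 : ℤ) * α₀ ^ (6 : ℤ) * α₁ ^ (2 : ℤ) * α₂ ^ (4 : ℤ)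
          * (τ (n+1) m N * τ n m N) * p3
      - Q ^ (4*n - 2*m + 8*N) * α₀ ^ (6 : ℤ) * α₁ ^ (2 : ℤ) * α₂ ^ (4 : ℤ)
          * (τ (n+1) m N * τ n m N) * p4
      + γ ^ (-4 : ℤ) * γ ^ (12 : ℤ) * α₀ ^ (6 : ℤ) * α₁ ^ (2 : ℤ) * α₂ ^ (4 : ℤ)
          * (τ (n+1) m N * τ n m N) * p5
      + Q ^ (4*n - 2*m + 8*N) * α₀ ^ (6 : ℤ) * α₁ ^ (2 : ℤ) * α₂ ^ (4 : ℤ)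
          * (τ (n+1) m N * τ n m N) * p6
  · intro hα h1b h2b n m N
    simp only [zpow_neg, zpow_one, zpow_ofNat] at h1b h2b ⊢
    have p1 := kQ (4*N) (n - 2*m - 2*N) (n - 2*m + 2*N) (by ring)
    have p1' : Q ^ (n - 2*m + 2*N - 1) * Q = Q ^ (n - 2*m + 2*N) := by
      simpa using kQ (n - 2*m + 2*N - 1) 1 (n - 2*m + 2*N) (by ring)
    have p3 := kQ (4*N) (-2*n + 4*m + 4*N) (-2*n + 4*m + 8*N) (by ring)
    have p5 := kQ (4*m - 2*n - 4*N) (12*N) (-2*n + 4*m + 8*N) (by ring)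
    have p7 : Q ^ (4*m - 2*n - 4*N) * Q * Q = Q ^ (-2*n + 4*m - 4*N + 2) := by
      rw [mul_assoc, show Q * Q = Q ^ (2:ℤ) from by
        rw [show Q ^ (2:ℤ) = Q ^ (2:ℕ) from rfl]; ring,
        kQ (4*m - 2*n - 4*N) 2 (-2*n + 4*m - 4*N + 2) (by ring)]
    have iγ2 : γ ^ (2:ℕ) * (γ ^ (2:ℕ))⁻¹ = 1 := mul_inv_cancel₀ (pow_ne_zero 2 hγ)
    have iγ4 : γ ^ (4:ℕ) * (γ ^ (4:ℕ))⁻¹ = 1 := mul_inv_cancel₀ (pow_ne_zero 4 hγ)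
    have iα₁ : α₁ * α₁⁻¹ = 1 := mul_inv_cancel₀ hα₁
    have i0 : α₀ ^ (2:ℕ) * (α₀ ^ (2:ℕ))⁻¹ = 1 := mul_inv_cancel₀ (pow_ne_zero 2 hα₀)
    have c2' : α₂ ^ (2:ℕ) * (α₂ ^ (4:ℕ))⁻¹ = (α₂ ^ (2:ℕ))⁻¹ := by
      field_simp
    have S1 : Q ^ (n - 2*m + 2*N - 1) * γ ^ (2:ℕ) * α₀ * α₂ ^ (2:ℕ)
        = Q ^ (4*N) * γ ^ (4:ℕ) * (Q ^ (n - 2*m - 2*N) * (γ ^ (2:ℕ))⁻¹ * α₁⁻¹ * α₂) := by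
      linear_combination (-(Q ^ (4*N) * Q ^ (n - 2*m - 2*N) * γ ^ (2:ℕ) * α₁⁻¹ * α₂)) * iγ2
        - (γ ^ (2:ℕ) * α₁⁻¹ * α₂) * p1 + (γ ^ (2:ℕ) * α₁⁻¹ * α₂) * p1'
        + (Q ^ (n - 2*m + 2*N - 1) * γ ^ (2:ℕ) * α₁⁻¹ * α₂) * hα
        - (Q ^ (n - 2*m + 2*N - 1) * γ ^ (2:ℕ) * α₀ * α₂ ^ (2:ℕ)) * iα₁
    have S2 : Q ^ (-2*n + 4*m - 4*N + 2) * (γ ^ (4:ℕ))⁻¹ * (α₀ ^ (2:ℕ))⁻¹ * (α₂ ^ (4:ℕ))⁻¹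
        = Q ^ (4*m - 2*n - 4*N) * (γ ^ (4:ℕ))⁻¹ * α₁ ^ (2:ℕ) * (α₂ ^ (2:ℕ))⁻¹ := by
      linear_combination (-((γ ^ (4:ℕ))⁻¹ * (α₀ ^ (2:ℕ))⁻¹ * (α₂ ^ (4:ℕ))⁻¹)) * p7
        - (Q ^ (4*m - 2*n - 4*N) * (Q + α₀*α₁*α₂) * (γ ^ (4:ℕ))⁻¹ * (α₀ ^ (2:ℕ))⁻¹
            * (α₂ ^ (4:ℕ))⁻¹) * hα
        + (Q ^ (4*m - 2*n - 4*N) * α₁ ^ (2:ℕ) * α₂ ^ (2:ℕ) * (γ ^ (4:ℕ))⁻¹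
            * (α₂ ^ (4:ℕ))⁻¹) * i0
        + (Q ^ (4*m - 2*n - 4*N) * α₁ ^ (2:ℕ) * (γ ^ (4:ℕ))⁻¹) * c2'
    have S3 : Q ^ (4*N) * γ ^ (4:ℕ) * (Q ^ (-2*n + 4*m + 4*N) * γ ^ (4:ℕ))
        = Q ^ (4*m - 2*n - 4*N) * (γ ^ (4:ℕ))⁻¹ * (Q ^ (12*N) * γ ^ (12:ℕ)) := by
      linear_combination (γ ^ (8:ℕ)) * p3 - (γ ^ (8:ℕ)) * p5
        - (Q ^ (4*m - 2*n - 4*N) * Q ^ (12*N) * γ ^ (8:ℕ)) * iγ4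
    linear_combination h2b n m N - Q ^ (4*N) * γ ^ (4:ℕ) * h1b n m N
      + (τ (n-1) m N * τ (n+1) (m+1) N) * S1
      + (τ n m N * τ n (m+1) N) * S2
      - α₁ ^ (2:ℕ) * (α₂ ^ (2:ℕ))⁻¹ * (τ n (m+1) N * τ n m N) * S3
end

section
/- Let Q, γ, α₀, α₁, α₂ ∈ ℂ∖{0} and let τ : ℤ³ → ℂ (arguments (n,m,N)) be nowhere vanishing and satisfy, for all (n,m,N): τ(n,m,N+1)τ(n+1,m,N−1) − Q^{4N}γ⁴·τ(n+1,m,N+1)τ(n,m,N−1) + Q^{4n−2m−4N}γ^{−4}α₀⁶α₁²α₂⁴(Q^{12N}γ^{12}−1)·τ(n+1,m,N)τ(n,m,N) = 0 and τ(n,m,N+1)τ(n,m+1,N−1) − Q^{4N}γ⁴·τ(n,m+1,N+1)τ(n,m,N−1) + Q^{4m−2n−4N}γ^{−4}α₁²α₂^{−2}(Q^{12N}γ^{12}−1)·τ(n,m+1,N)τ(n,m,N) = 0. Fix N ∈ ℤ with Q^{12(N+1)}γ^{12} ≠ 1 and define z(n,m) = (Q^{4N+4}γ⁴)^{n+m}·τ(n,m,N+2)/τ(n,m,N).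 Then for all (n,m) ∈ ℤ² the differences z(n,m)−z(n+1,m), z(n+1,m+1)−z(n,m+1), z(n+1,m)−z(n+1,m+1), z(n,m+1)−z(n,m) are nonzero and ((z(n,m)−z(n+1,m))(z(n+1,m+1)−z(n,m+1))) / ((z(n+1,m)−z(n+1,m+1))(z(n,m+1)−z(n,m))) = Q^{12(n−m)}·α₀^{12}·α₂^{12}; that is, z satisfies the discrete Schwarzian KdV equation with λ(n)/μ(m) = Q^{12n−12m}α₀^{12}α₂^{12} (equivalently q^{2n−2m}a₀²a₂² with q = Q⁶, a₀ = α₀⁶, a₂ = α₂⁶). -/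
/-- The ratio `z(n,m) = (Q^{4N+4}γ⁴)^{n+m} τ(n,m,N+2)/τ(n,m,N)` built from a nowhere vanishing
solution of the bilinear equations of the (A₂+A₁)⁽¹⁾ Painlevé system satisfies the discrete
Schwarzian KdV equation with cross-ratio `Q^{12(n−m)} α₀¹² α₂¹²` (i.e. `q^{2n−2m} a₀² a₂²`). -/
theorem stmt_10 (Q γ α₀ α₁ α₂ : ℂ)
    (hQ : Q ≠ 0) (hγ : γ ≠ 0) (hα₀ : α₀ ≠ 0) (hα₁ : α₁ ≠ 0) (hα₂ : α₂ ≠ 0)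
    (τ : ℤ → ℤ → ℤ → ℂ) (hτ : ∀ n m N : ℤ, τ n m N ≠ 0)
    (hbl1 : ∀ n m N : ℤ,
      τ n m (N+1) * τ (n+1) m (N-1)
        - Q ^ (4*N) * γ ^ (4 : ℤ) * (τ (n+1) m (N+1) * τ n m (N-1))
        + Q ^ (4*n - 2*m - 4*N) * γ ^ (-4 : ℤ) * α₀ ^ (6 : ℤ) * α₁ ^ (2 : ℤ) * α₂ ^ (4 : ℤ)
            * (Q ^ (12*N) * γ ^ (12 : ℤ) - 1) * (τ (n+1) m N * τ n m N) = 0)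
    (hbl2 : ∀ n m N : ℤ,
      τ n m (N+1) * τ n (m+1) (N-1)
        - Q ^ (4*N) * γ ^ (4 : ℤ) * (τ n (m+1) (N+1) * τ n m (N-1))
        + Q ^ (4*m - 2*n - 4*N) * γ ^ (-4 : ℤ) * α₁ ^ (2 : ℤ) * α₂ ^ (-2 : ℤ)
            * (Q ^ (12*N) * γ ^ (12 : ℤ) - 1) * (τ n (m+1) N * τ n m N) = 0)
    (N : ℤ) (hN : Q ^ (12*(N+1)) * γ ^ (12 : ℤ) ≠ 1)
    (z : ℤ → ℤ → ℂ)
    (hz : ∀ n m : ℤ,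
      z n m = (Q ^ (4*N + 4) * γ ^ (4 : ℤ)) ^ (n + m) * τ n m (N+2) / τ n m N) :
    ∀ n m : ℤ,
      z n m - z (n+1) m ≠ 0 ∧ z (n+1) (m+1) - z n (m+1) ≠ 0
      ∧ z (n+1) m - z (n+1) (m+1) ≠ 0 ∧ z n (m+1) - z n m ≠ 0
      ∧ ((z n m - z (n+1) m) * (z (n+1) (m+1) - z n (m+1)))
          / ((z (n+1) m - z (n+1) (m+1)) * (z n (m+1) - z n m))
        = Q ^ (12*(n - m)) * α₀ ^ (12 : ℤ) * α₂ ^ (12 : ℤ) := by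
  intro n m
  have hS : Q ^ (12*(N+1)) * γ ^ (12 : ℤ) - 1 ≠ 0 := sub_ne_zero.2 hN
  set c : ℂ := Q ^ (4*N + 4) * γ ^ (4 : ℤ) with hc_def
  have hc : c ≠ 0 := mul_ne_zero (zpow_ne_zero _ hQ) (zpow_ne_zero _ hγ)
  have hzτ : ∀ a b : ℤ, z a b * τ a b N = c ^ (a+b) * τ a b (N+2) := fun a b => by
    rw [hz a b, div_mul_cancel₀ _ (hτ a b N)]
  have key1 : ∀ a b : ℤ, (z a b - z (a+1) b) * (τ a b N * τ (a+1) b N)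
      = -(c ^ (a+b) * (Q ^ (4*a - 2*b - 4*(N+1)) * γ ^ (-4 : ℤ) * α₀ ^ (6 : ℤ) * α₁ ^ (2 : ℤ)
          * α₂ ^ (4 : ℤ) * (Q ^ (12*(N+1)) * γ ^ (12 : ℤ) - 1)
          * (τ (a+1) b (N+1) * τ a b (N+1)))) := by
    intro a b
    have h1 := hbl1 a b (N+1)
    rw [show N+1+1 = N+2 by ring, show N+1-1 = N by ring] at h1
    have e1 := hzτ a b
    have e2 := hzτ (a+1) b
    have ec : c ^ (a+1+b) = c ^ (a+b) * (Q ^ (4*(N+1)) * γ ^ (4 : ℤ)) := by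
      rw [show (4*(N+1) : ℤ) = 4*N+4 by ring, ← hc_def, show a+1+b = (a+b)+1 by ring,
        zpow_add_one₀ hc]
    linear_combination τ (a+1) b N * e1 - τ a b N * e2 + c ^ (a+b) * h1
      - (τ (a+1) b (N+2) * τ a b N) * ec
  have key2 : ∀ a b : ℤ, (z a b - z a (b+1)) * (τ a b N * τ a (b+1) N)
      = -(c ^ (a+b) * (Q ^ (4*b - 2*a - 4*(N+1)) * γ ^ (-4 : ℤ) * α₁ ^ (2 : ℤ)
          * α₂ ^ (-2 : ℤ) * (Q ^ (12*(N+1)) * γ ^ (12 : ℤ) - 1)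
          * (τ a (b+1) (N+1) * τ a b (N+1)))) := by
    intro a b
    have h2 := hbl2 a b (N+1)
    rw [show N+1+1 = N+2 by ring, show N+1-1 = N by ring] at h2
    have e1 := hzτ a b
    have e2 := hzτ a (b+1)
    have ec : c ^ (a+(b+1)) = c ^ (a+b) * (Q ^ (4*(N+1)) * γ ^ (4 : ℤ)) := by
      rw [show (4*(N+1) : ℤ) = 4*N+4 by ring, ← hc_def, show a+(b+1) = (a+b)+1 by ring,
        zpow_add_one₀ hc]
    linear_combination τ a (b+1) N * e1 - τ a b N * e2 + c ^ (a+b) * h2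
      - (τ a (b+1) (N+2) * τ a b N) * ec
  have hA := key1 n m
  have hB := key1 n (m+1)
  have hC := key2 (n+1) m
  have hD := key2 n m
  have hne1 : ∀ a b : ℤ, -(c ^ (a+b) * (Q ^ (4*a - 2*b - 4*(N+1)) * γ ^ (-4 : ℤ) * α₀ ^ (6 : ℤ)
      * α₁ ^ (2 : ℤ) * α₂ ^ (4 : ℤ) * (Q ^ (12*(N+1)) * γ ^ (12 : ℤ) - 1)
      * (τ (a+1) b (N+1) * τ a b (N+1)))) ≠ 0 := fun a b =>
    neg_ne_zero.2 (mul_ne_zero (zpow_ne_zero _ hc) (mul_ne_zero (mul_ne_zero (mul_ne_zero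
      (mul_ne_zero (mul_ne_zero (mul_ne_zero (zpow_ne_zero _ hQ) (zpow_ne_zero _ hγ))
      (zpow_ne_zero _ hα₀)) (zpow_ne_zero _ hα₁)) (zpow_ne_zero _ hα₂)) hS)
      (mul_ne_zero (hτ _ _ _) (hτ _ _ _))))
  have hne2 : ∀ a b : ℤ, -(c ^ (a+b) * (Q ^ (4*b - 2*a - 4*(N+1)) * γ ^ (-4 : ℤ)
      * α₁ ^ (2 : ℤ) * α₂ ^ (-2 : ℤ) * (Q ^ (12*(N+1)) * γ ^ (12 : ℤ) - 1)
      * (τ a (b+1) (N+1) * τ a b (N+1)))) ≠ 0 := fun a b =>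
    neg_ne_zero.2 (mul_ne_zero (zpow_ne_zero _ hc) (mul_ne_zero (mul_ne_zero (mul_ne_zero
      (mul_ne_zero (mul_ne_zero (zpow_ne_zero _ hQ) (zpow_ne_zero _ hγ))
      (zpow_ne_zero _ hα₁)) (zpow_ne_zero _ hα₂)) hS)
      (mul_ne_zero (hτ _ _ _) (hτ _ _ _))))
  have hA0 : z n m - z (n+1) m ≠ 0 :=
    left_ne_zero_of_mul (hA ▸ hne1 n m)
  have hB0' : z n (m+1) - z (n+1) (m+1) ≠ 0 :=
    left_ne_zero_of_mul (hB ▸ hne1 n (m+1))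
  have hB0 : z (n+1) (m+1) - z n (m+1) ≠ 0 :=
    sub_ne_zero.2 (Ne.symm (sub_ne_zero.1 hB0'))
  have hC0 : z (n+1) m - z (n+1) (m+1) ≠ 0 :=
    left_ne_zero_of_mul (hC ▸ hne2 (n+1) m)
  have hD0' : z n m - z n (m+1) ≠ 0 :=
    left_ne_zero_of_mul (hD ▸ hne2 n m)
  have hD0 : z n (m+1) - z n m ≠ 0 :=
    sub_ne_zero.2 (Ne.symm (sub_ne_zero.1 hD0'))
  refine ⟨hA0, hB0, hC0, hD0, ?_⟩
  rw [div_eq_iff (mul_ne_zero hC0 hD0)]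
  apply mul_right_cancel₀ (show (τ n m N * τ (n+1) m N) * (τ n (m+1) N * τ (n+1) (m+1) N) ≠ 0 from
    mul_ne_zero (mul_ne_zero (hτ _ _ _) (hτ _ _ _)) (mul_ne_zero (hτ _ _ _) (hτ _ _ _)))
  have ec1 : c ^ (n+(m+1)) = c ^ (n+m) * c := by
    rw [show n+(m+1) = (n+m)+1 by ring, zpow_add_one₀ hc]
  have ec2 : c ^ (n+1+m) = c ^ (n+m) * c := by
    rw [show n+1+m = (n+m)+1 by ring, zpow_add_one₀ hc]
  have hq : Q ^ (4*n - 2*m - 4*(N+1)) * Q ^ (4*n - 2*(m+1) - 4*(N+1))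
      = Q ^ (12*(n-m)) * (Q ^ (4*m - 2*(n+1) - 4*(N+1)) * Q ^ (4*m - 2*n - 4*(N+1))) := by
    rw [← zpow_add₀ hQ, ← zpow_add₀ hQ, ← zpow_add₀ hQ]; congr 1; ring
  have ha0 : α₀ ^ (6 : ℤ) * α₀ ^ (6 : ℤ) = α₀ ^ (12 : ℤ) := by
    rw [← zpow_add₀ hα₀]; norm_num
  have ha2 : α₂ ^ (4 : ℤ) * α₂ ^ (4 : ℤ)
      = α₂ ^ (12 : ℤ) * (α₂ ^ (-2 : ℤ) * α₂ ^ (-2 : ℤ)) := by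
    rw [← zpow_add₀ hα₂, ← zpow_add₀ hα₂, ← zpow_add₀ hα₂]; norm_num
  have key : Q ^ (4*n - 2*m - 4*(N+1)) * Q ^ (4*n - 2*(m+1) - 4*(N+1))
        * (α₀ ^ (6 : ℤ) * α₀ ^ (6 : ℤ)) * (α₂ ^ (4 : ℤ) * α₂ ^ (4 : ℤ))
      = Q ^ (12*(n-m)) * α₀ ^ (12 : ℤ) * α₂ ^ (12 : ℤ)
        * (Q ^ (4*m - 2*(n+1) - 4*(N+1)) * Q ^ (4*m - 2*n - 4*(N+1)))
        * (α₂ ^ (-2 : ℤ) * α₂ ^ (-2 : ℤ)) := by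
    linear_combination (α₀ ^ (6 : ℤ) * α₀ ^ (6 : ℤ) * (α₂ ^ (4 : ℤ) * α₂ ^ (4 : ℤ))) * hq
      + (Q ^ (12*(n-m)) * (Q ^ (4*m - 2*(n+1) - 4*(N+1)) * Q ^ (4*m - 2*n - 4*(N+1)))
          * (α₂ ^ (4 : ℤ) * α₂ ^ (4 : ℤ))) * ha0
      + (Q ^ (12*(n-m)) * (Q ^ (4*m - 2*(n+1) - 4*(N+1)) * Q ^ (4*m - 2*n - 4*(N+1)))
          * α₀ ^ (12 : ℤ)) * ha2
  linear_combination
    ((z (n+1) (m+1) - z n (m+1)) * (τ n (m+1) N * τ (n+1) (m+1) N)) * hA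
    - (-(c ^ (n+m) * (Q ^ (4*n - 2*m - 4*(N+1)) * γ ^ (-4 : ℤ) * α₀ ^ (6 : ℤ) * α₁ ^ (2 : ℤ)
        * α₂ ^ (4 : ℤ) * (Q ^ (12*(N+1)) * γ ^ (12 : ℤ) - 1)
        * (τ (n+1) m (N+1) * τ n m (N+1))))) * hB
    + (Q ^ (12*(n-m)) * α₀ ^ (12 : ℤ) * α₂ ^ (12 : ℤ)
        * ((z (n+1) m - z (n+1) (m+1)) * (τ (n+1) m N * τ (n+1) (m+1) N))) * hD
    + (Q ^ (12*(n-m)) * α₀ ^ (12 : ℤ) * α₂ ^ (12 : ℤ)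
        * (-(c ^ (n+m) * (Q ^ (4*m - 2*n - 4*(N+1)) * γ ^ (-4 : ℤ) * α₁ ^ (2 : ℤ)
          * α₂ ^ (-2 : ℤ) * (Q ^ (12*(N+1)) * γ ^ (12 : ℤ) - 1)
          * (τ n (m+1) (N+1) * τ n m (N+1)))))) * hC
    - (c ^ (n+m) * (Q ^ (4*n - 2*m - 4*(N+1)) * γ ^ (-4 : ℤ) * α₀ ^ (6 : ℤ) * α₁ ^ (2 : ℤ)
        * α₂ ^ (4 : ℤ) * (Q ^ (12*(N+1)) * γ ^ (12 : ℤ) - 1))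
        * (Q ^ (4*n - 2*(m+1) - 4*(N+1)) * γ ^ (-4 : ℤ) * α₀ ^ (6 : ℤ) * α₁ ^ (2 : ℤ)
        * α₂ ^ (4 : ℤ) * (Q ^ (12*(N+1)) * γ ^ (12 : ℤ) - 1))
        * (τ (n+1) m (N+1) * τ n m (N+1) * (τ (n+1) (m+1) (N+1) * τ n (m+1) (N+1)))) * ec1
    + (Q ^ (12*(n-m)) * α₀ ^ (12 : ℤ) * α₂ ^ (12 : ℤ) * c ^ (n+m)
        * (Q ^ (4*m - 2*(n+1) - 4*(N+1)) * γ ^ (-4 : ℤ) * α₁ ^ (2 : ℤ)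
          * α₂ ^ (-2 : ℤ) * (Q ^ (12*(N+1)) * γ ^ (12 : ℤ) - 1))
        * (Q ^ (4*m - 2*n - 4*(N+1)) * γ ^ (-4 : ℤ) * α₁ ^ (2 : ℤ)
          * α₂ ^ (-2 : ℤ) * (Q ^ (12*(N+1)) * γ ^ (12 : ℤ) - 1))
        * (τ (n+1) m (N+1) * τ n m (N+1) * (τ (n+1) (m+1) (N+1) * τ n (m+1) (N+1)))) * ec2
    - (c ^ (n+m) * c ^ (n+m) * c * γ ^ (-4 : ℤ) * γ ^ (-4 : ℤ) * α₁ ^ (2 : ℤ) * α₁ ^ (2 : ℤ)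
        * (Q ^ (12*(N+1)) * γ ^ (12 : ℤ) - 1) * (Q ^ (12*(N+1)) * γ ^ (12 : ℤ) - 1)
        * (τ (n+1) m (N+1) * τ n m (N+1) * (τ (n+1) (m+1) (N+1) * τ n (m+1) (N+1)))) * key
end

section
/- Let c, r ∈ ℂ∖{0} and let τ : ℤ⁴ → ℂ (arguments (k,l,m,n)) be nowhere vanishing and satisfy, for all (k,l,m,n) ∈ ℤ⁴, the four bilinear relations: (i) τ(k−1,l−1,m−2,n)τ(k,l−1,m,n+1) + τ(k−1,l−2,m−2,n+1)τ(k,l,m,n) = −c·r·τ(k,l−1,m−1,n)τ(k−1,l−1,m−1,n+1); (ii) τ(k−1,l−2,m−2,n)τ(k,l,m,n) − τ(k−1,l−1,m−2,n)τ(k,l−1,m,n) = c·τ(k−1,l−1,m−1,n)τ(k,l−1,m−1,n); (iii) τ(k−2,l−2,m−2,n+1)τ(k,l−1,m,n) + τ(k−1,l−2,m−2,n)τ(k−1,l−1,m,n+1) = −c·r·τ(k−1,l−1,m−1,n)τ(k−1,l−2,m−1,n+1); (iv) τ(k−1,l−2,m−2,n+1)τ(k−1,l−1,m,n+1) − τ(k−2,l−2,m−2,n+1)τ(k,l−1,m,n+1)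 = c·τ(k−1,l−2,m−1,n+1)τ(k−1,l−1,m−1,n+1). Define z : ℤ² → ℂ by: if n+m is even, with N = (n+m)/2, z(n,m) = (−1)^{n−1}·τ(−N−1,−N−1,−2,n)/τ(−N,−N,0,n); if n+m is odd, with N = (n+m+1)/2, z(n,m) = (−1)^{n−1}·τ(−N,−N−1,−2,n)/τ(−N+1,−N,0,n). Then for all (n,m) ∈ ℤ² the differences z(n,m)−z(n+1,m), z(n+1,m+1)−z(n,m+1), z(n+1,m)−z(n+1,m+1), z(n,m+1)−z(n,m) are nonzero and ((z(n,m)−z(n+1,m))(z(n+1,m+1)−z(n,m+1))) / ((z(n+1,m)−z(n+1,m+1))(z(n,m+1)−z(n,m))) = r²; that is, z satisfies the discrete Schwarzian KdV equation with constant cross-ratio 1/t where r = t^{−1/2}. -/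
lemma aux_dskdv (r s A B C D a b cc d e1 e2 e3 e4 z1 z2 z3 z4 : ℂ)
    (hA : A ≠ 0) (hB : B ≠ 0) (hC : C ≠ 0) (hD : D ≠ 0) (hs : s ≠ 0)
    (he1 : e1 ≠ 0) (he2 : e2 ≠ 0) (he3 : e3 ≠ 0) (he4 : e4 ≠ 0)
    (h1 : a*B + b*A = e1) (h2 : cc*A - a*C = e2) (h3 : d*C + cc*D = e3)
    (h4 : b*D - d*B = e4) (hprod : e1 * e3 = r^2 * (e2 * e4))
    (hz1 : z1 = s * a / A) (hz2 : z2 = -(s * b) / B)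
    (hz3 : z3 = s * cc / C) (hz4 : z4 = -(s * d) / D) :
    z1 - z2 ≠ 0 ∧ z4 - z3 ≠ 0 ∧ z2 - z4 ≠ 0 ∧ z3 - z1 ≠ 0 ∧
      ((z1 - z2) * (z4 - z3)) / ((z2 - z4) * (z3 - z1)) = r ^ 2 := by
  have d1 : z1 - z2 = s * e1 / (A * B) := by
    rw [hz1, hz2, ← h1]; field_simp; ring
  have d2 : z4 - z3 = -(s * e3) / (C * D) := by
    rw [hz3, hz4, ← h3]; field_simp; ring
  have d3 : z2 - z4 = -(s * e4) / (B * D) := by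
    rw [hz2, hz4, ← h4]; field_simp; ring
  have d4 : z3 - z1 = s * e2 / (A * C) := by
    rw [hz1, hz3, ← h2]; field_simp
  refine ⟨?_, ?_, ?_, ?_, ?_⟩
  · rw [d1]; exact div_ne_zero (mul_ne_zero hs he1) (mul_ne_zero hA hB)
  · rw [d2]; exact div_ne_zero (neg_ne_zero.mpr (mul_ne_zero hs he3)) (mul_ne_zero hC hD)
  · rw [d3]; exact div_ne_zero (neg_ne_zero.mpr (mul_ne_zero hs he4)) (mul_ne_zero hB hD)
  · rw [d4]; exact div_ne_zero (mul_ne_zero hs he2) (mul_ne_zero hA hC)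
  · rw [d1, d2, d3, d4]
    rw [div_eq_iff (mul_ne_zero (div_ne_zero (neg_ne_zero.mpr (mul_ne_zero hs he4)) (mul_ne_zero hB hD)) (div_ne_zero (mul_ne_zero hs he2) (mul_ne_zero hA hC)))]
    field_simp
    linear_combination -hprod


/-- From a nowhere vanishing `τ : ℤ⁴ → ℂ` satisfying the four bilinear relations of the
Painlevé VI (type D₄⁽¹⁾) τ functions, the parity-dependent ratio `z(n,m)` satisfies the
discrete Schwarzian KdV equation with constant cross-ratio `r² = 1/t`. -/
theorem stmt_11 (c r : ℂ) (hc : c ≠ 0) (hr : r ≠ 0)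
    (τ : ℤ → ℤ → ℤ → ℤ → ℂ) (hτ : ∀ k l m n : ℤ, τ k l m n ≠ 0)
    (hb1 : ∀ k l m n : ℤ,
      τ (k-1) (l-1) (m-2) n * τ k (l-1) m (n+1) + τ (k-1) (l-2) (m-2) (n+1) * τ k l m n
        = -(c * r) * (τ k (l-1) (m-1) n * τ (k-1) (l-1) (m-1) (n+1)))
    (hb2 : ∀ k l m n : ℤ,
      τ (k-1) (l-2) (m-2) n * τ k l m n - τ (k-1) (l-1) (m-2) n * τ k (l-1) m n
        = c * (τ (k-1) (l-1) (m-1) n * τ k (l-1) (m-1) n))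
    (hb3 : ∀ k l m n : ℤ,
      τ (k-2) (l-2) (m-2) (n+1) * τ k (l-1) m n + τ (k-1) (l-2) (m-2) n * τ (k-1) (l-1) m (n+1)
        = -(c * r) * (τ (k-1) (l-1) (m-1) n * τ (k-1) (l-2) (m-1) (n+1)))
    (hb4 : ∀ k l m n : ℤ,
      τ (k-1) (l-2) (m-2) (n+1) * τ (k-1) (l-1) m (n+1)
          - τ (k-2) (l-2) (m-2) (n+1) * τ k (l-1) m (n+1)
        = c * (τ (k-1) (l-2) (m-1) (n+1) * τ (k-1) (l-1) (m-1) (n+1)))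
    (z : ℤ → ℤ → ℂ)
    (hz_even : ∀ n m N : ℤ, n + m = 2*N →
      z n m = (-1 : ℂ) ^ (n-1) * τ (-N-1) (-N-1) (-2) n / τ (-N) (-N) 0 n)
    (hz_odd : ∀ n m N : ℤ, n + m = 2*N - 1 →
      z n m = (-1 : ℂ) ^ (n-1) * τ (-N) (-N-1) (-2) n / τ (-N+1) (-N) 0 n) :
    ∀ n m : ℤ,
      z n m - z (n+1) m ≠ 0 ∧ z (n+1) (m+1) - z n (m+1) ≠ 0
      ∧ z (n+1) m - z (n+1) (m+1) ≠ 0 ∧ z n (m+1) - z n m ≠ 0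
      ∧ ((z n m - z (n+1) m) * (z (n+1) (m+1) - z n (m+1)))
          / ((z (n+1) m - z (n+1) (m+1)) * (z n (m+1) - z n m))
        = r ^ 2 := by
  intro n m
  set s : ℂ := (-1 : ℂ) ^ (n-1) with hsdef
  have hs : s ≠ 0 := zpow_ne_zero _ (by norm_num)
  have hflip : ((-1 : ℂ)) ^ (n + 1 - 1) = -s := by
    rw [show (n+1-1 : ℤ) = (n-1)+1 by ring, zpow_add_one₀ (by norm_num : (-1:ℂ) ≠ 0), hsdef]
    ring
  rcases Int.even_or_odd (n+m) with ⟨N0, hN0⟩ | ⟨N0, hN0⟩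
  · -- even case : n + m = 2N
    obtain ⟨N, hN⟩ : ∃ N, n + m = 2*N := ⟨N0, by omega⟩
    have hz1 : z n m = s * τ (-N-1) (-N-1) (-2) n / τ (-N) (-N) 0 n :=
      hz_even n m N hN
    have hz2 : z (n+1) m = -(s * τ (-N-1) (-N-2) (-2) (n+1)) / τ (-N) (-N-1) 0 (n+1) := by
      have h := hz_odd (n+1) m (N+1) (by omega)
      rw [h, hflip,
        show (-(N+1) : ℤ) = -N-1 by ring, show (-N-1-1 : ℤ) = -N-2 by ring,
        show (-N-1+1 : ℤ) = -N by ring]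
      ring
    have hz3 : z n (m+1) = s * τ (-N-1) (-N-2) (-2) n / τ (-N) (-N-1) 0 n := by
      have h := hz_odd n (m+1) (N+1) (by omega)
      rw [h,
        show (-(N+1) : ℤ) = -N-1 by ring, show (-N-1-1 : ℤ) = -N-2 by ring,
        show (-N-1+1 : ℤ) = -N by ring, hsdef]
    have hz4 : z (n+1) (m+1) = -(s * τ (-N-2) (-N-2) (-2) (n+1)) / τ (-N-1) (-N-1) 0 (n+1) := by
      have h := hz_even (n+1) (m+1) (N+1) (by omega)
      rw [h, hflip,
        show (-(N+1)-1 : ℤ) = -N-2 by ring, show (-(N+1) : ℤ) = -N-1 by ring]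
      ring
    have h1 := hb1 (-N) (-N) 0 n
    have h2 := hb2 (-N) (-N) 0 n
    have h3 := hb3 (-N) (-N) 0 n
    have h4 := hb4 (-N) (-N) 0 n
    simp only [show ((0:ℤ)-2) = -2 by ring, show ((0:ℤ)-1) = -1 by ring,
      show (-N-2 : ℤ) = -N-2 by ring] at h1 h2 h3 h4
    exact aux_dskdv r s
      (τ (-N) (-N) 0 n) (τ (-N) (-N-1) 0 (n+1)) (τ (-N) (-N-1) 0 n) (τ (-N-1) (-N-1) 0 (n+1))
      (τ (-N-1) (-N-1) (-2) n) (τ (-N-1) (-N-2) (-2) (n+1))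
      (τ (-N-1) (-N-2) (-2) n) (τ (-N-2) (-N-2) (-2) (n+1))
      (-(c * r) * (τ (-N) (-N-1) (-1) n * τ (-N-1) (-N-1) (-1) (n+1)))
      (c * (τ (-N-1) (-N-1) (-1) n * τ (-N) (-N-1) (-1) n))
      (-(c * r) * (τ (-N-1) (-N-1) (-1) n * τ (-N-1) (-N-2) (-1) (n+1)))
      (c * (τ (-N-1) (-N-2) (-1) (n+1) * τ (-N-1) (-N-1) (-1) (n+1)))
      _ _ _ _
      (hτ _ _ _ _) (hτ _ _ _ _) (hτ _ _ _ _) (hτ _ _ _ _) hs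
      (by exact mul_ne_zero (by simpa using mul_ne_zero hc hr) (mul_ne_zero (hτ _ _ _ _) (hτ _ _ _ _)))
      (mul_ne_zero hc (mul_ne_zero (hτ _ _ _ _) (hτ _ _ _ _)))
      (by exact mul_ne_zero (by simpa using mul_ne_zero hc hr) (mul_ne_zero (hτ _ _ _ _) (hτ _ _ _ _)))
      (mul_ne_zero hc (mul_ne_zero (hτ _ _ _ _) (hτ _ _ _ _)))
      (by linear_combination h1) (by linear_combination h2)
      (by linear_combination h3) (by linear_combination h4)
      (by ring) hz1 hz2 hz3 hz4
  · -- odd case : n + m = 2N - 1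
    obtain ⟨N, hN⟩ : ∃ N, n + m = 2*N - 1 := ⟨N0+1, by omega⟩
    have hz1 : z n m = s * τ (-N) (-N-1) (-2) n / τ (-N+1) (-N) 0 n :=
      hz_odd n m N hN
    have hz2 : z (n+1) m = -(s * τ (-N-1) (-N-1) (-2) (n+1)) / τ (-N) (-N) 0 (n+1) := by
      have h := hz_even (n+1) m N (by omega)
      rw [h, hflip]
      ring
    have hz3 : z n (m+1) = s * τ (-N-1) (-N-1) (-2) n / τ (-N) (-N) 0 n :=
      hz_even n (m+1) N (by omega)
    have hz4 : z (n+1) (m+1) = -(s * τ (-N-1) (-N-2) (-2) (n+1)) / τ (-N) (-N-1) 0 (n+1) := by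
      have h := hz_odd (n+1) (m+1) (N+1) (by omega)
      rw [h, hflip,
        show (-(N+1) : ℤ) = -N-1 by ring, show (-N-1-1 : ℤ) = -N-2 by ring,
        show (-N-1+1 : ℤ) = -N by ring]
      ring
    have h1 := hb3 (-N+1) (-N+1) 0 n
    have h2 := hb4 (-N+1) (-N+1) 0 (n-1)
    have h3 := hb1 (-N) (-N) 0 n
    have h4 := hb2 (-N) (-N) 0 (n+1)
    simp only [show (-N+1-2 : ℤ) = -N-1 by ring, show (-N+1-1 : ℤ) = -N by ring,
      show ((0:ℤ)-2) = -2 by ring, show ((0:ℤ)-1) = -1 by ring,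
      show (n-1+1 : ℤ) = n by ring] at h1 h2 h3 h4
    exact aux_dskdv r s
      (τ (-N+1) (-N) 0 n) (τ (-N) (-N) 0 (n+1)) (τ (-N) (-N) 0 n) (τ (-N) (-N-1) 0 (n+1))
      (τ (-N) (-N-1) (-2) n) (τ (-N-1) (-N-1) (-2) (n+1))
      (τ (-N-1) (-N-1) (-2) n) (τ (-N-1) (-N-2) (-2) (n+1))
      (-(c * r) * (τ (-N) (-N) (-1) n * τ (-N) (-N-1) (-1) (n+1)))
      (-(c * (τ (-N) (-N-1) (-1) n * τ (-N) (-N) (-1) n)))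
      (-(c * r) * (τ (-N) (-N-1) (-1) n * τ (-N-1) (-N-1) (-1) (n+1)))
      (-(c * (τ (-N-1) (-N-1) (-1) (n+1) * τ (-N) (-N-1) (-1) (n+1))))
      _ _ _ _
      (hτ _ _ _ _) (hτ _ _ _ _) (hτ _ _ _ _) (hτ _ _ _ _) hs
      (by exact mul_ne_zero (by simpa using mul_ne_zero hc hr) (mul_ne_zero (hτ _ _ _ _) (hτ _ _ _ _)))
      (by exact neg_ne_zero.mpr (mul_ne_zero hc (mul_ne_zero (hτ _ _ _ _) (hτ _ _ _ _))))
      (by exact mul_ne_zero (by simpa using mul_ne_zero hc hr) (mul_ne_zero (hτ _ _ _ _) (hτ _ _ _ _)))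
      (by exact neg_ne_zero.mpr (mul_ne_zero hc (mul_ne_zero (hτ _ _ _ _) (hτ _ _ _ _))))
      (by linear_combination h1) (by linear_combination -h2)
      (by linear_combination h3) (by linear_combination -h4)
      (by ring) hz1 hz2 hz3 hz4
end

section
/- Let c, r ∈ ℂ∖{0}, let i denote the imaginary unit, and let τ : ℤ⁴ → ℂ (arguments (k,l,m,n)) be nowhere vanishing and satisfy, for all (k,l,m,n) ∈ ℤ⁴, the four bilinear relations: (i) τ(k+1,l−1,m,n)τ(k−1,l−1,m−1,n) − τ(k,l−2,m−1,n)τ(k,l,m,n) = i·c·r·τ(k,l−1,m−1,n)τ(k,l−1,m,n); (ii) τ(k+1,l−1,m,n)τ(k−1,l−1,m−1,n+1) + τ(k,l−2,m−1,n+1)τ(k,l,m,n) = i·c·τ(k,l−1,m−1,n)τ(k,l−1,m,n+1); (iii) τ(k,l−2,m,n+1)τ(k−1,l−1,m−1,n+1) + τ(k,l−2,m−1,n+1)τ(k−1,l−1,m,n+1) = −i·c·r·τ(k−1,l−2,m−1,n+1)τ(k,l−1,m,n+1); (iv) τ(k,l−2,m−1,n)τ(k−1,l−1,m,n+1) − τ(k,l−2,m,n+1)τ(k−1,l−1,m−1,n)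 = i·c·τ(k,l−1,m,n)τ(k−1,l−2,m−1,n+1). Define z : ℤ² → ℂ by: if n+m is even, with N = (n+m)/2, z(n,m) = (−1)^{(n−m+2)(n−m+1)/2}·τ(−N+1,−N−1,0,m)/τ(−N,−N,0,m); if n+m is odd, with N = (n+m+1)/2, z(n,m) = (−1)^{(n−m+2)(n−m+1)/2}·τ(−N+1,−N−1,−1,m)/τ(−N,−N,−1,m). Then for all (n,m) ∈ ℤ² the differences z(n,m)−z(n+1,m), z(n+1,m+1)−z(n,m+1), z(n+1,m)−z(n+1,m+1), z(n,m+1)−z(n,m) are nonzero and ((z(n,m)−z(n+1,m))(z(n+1,m+1)−z(n,m+1))) / ((z(n+1,m)−z(n+1,m+1))(z(n,m+1)−z(n,m))) = r²; that is, z satisfies the discrete Schwarzian KdV equation with constant cross-ratio 1/t where r = t^{−1/2}. -/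
private lemma cross_key (i c r : ℂ) (hi : i ≠ 0) (hc : c ≠ 0) (hr : r ≠ 0)
    (A B C D b1 b2 b3 b4 u v w x : ℂ)
    (h1 : b1 ≠ 0) (h2 : b2 ≠ 0) (h3 : b3 ≠ 0) (h4 : b4 ≠ 0)
    (hu : u ≠ 0) (hv : v ≠ 0) (hw : w ≠ 0) (hx : x ≠ 0)
    (hAB : A - B = i*c*r*u/(b1*b2))
    (hDC : D - C = -(i*c*r)*v/(b3*b4))
    (hBD : B - D = i*c*w/(b2*b3))
    (hCA : C - A = -(i*c)*x/(b1*b4))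
    (huv : u*v = w*x) :
    A - B ≠ 0 ∧ D - C ≠ 0 ∧ B - D ≠ 0 ∧ C - A ≠ 0 ∧
      (A - B)*(D - C)/((B - D)*(C - A)) = r^2 := by
  have hBD' : B - D ≠ 0 := by
    rw [hBD]; exact div_ne_zero (by simp [hi, hc, hw]) (mul_ne_zero h2 h3)
  have hCA' : C - A ≠ 0 := by
    rw [hCA]; exact div_ne_zero (by simp [hi, hc, hx]) (mul_ne_zero h1 h4)
  refine ⟨?_, ?_, hBD', hCA', ?_⟩
  · rw [hAB]
    exact div_ne_zero (by simp [hi, hc, hr, hu]) (mul_ne_zero h1 h2)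
  · rw [hDC]
    exact div_ne_zero (by simp [hi, hc, hr, hv]) (mul_ne_zero h3 h4)
  · rw [div_eq_iff (mul_ne_zero hBD' hCA'), hAB, hDC, hBD, hCA]
    field_simp
    linear_combination (-1 : ℂ) * huv

/-- From a nowhere vanishing `τ : ℤ⁴ → ℂ` satisfying the four bilinear relations of the
Painlevé VI (type D₄⁽¹⁾) τ functions (second family, with the imaginary unit `i`), the
parity-dependent ratio `z(n,m)` satisfies the discrete Schwarzian KdV equation with constant
cross-ratio `r² = 1/t`. -/
theorem stmt_12 (c r : ℂ) (hc : c ≠ 0) (hr : r ≠ 0)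
    (τ : ℤ → ℤ → ℤ → ℤ → ℂ) (hτ : ∀ k l m n : ℤ, τ k l m n ≠ 0)
    (hb1 : ∀ k l m n : ℤ,
      τ (k+1) (l-1) m n * τ (k-1) (l-1) (m-1) n - τ k (l-2) (m-1) n * τ k l m n
        = Complex.I * c * r * (τ k (l-1) (m-1) n * τ k (l-1) m n))
    (hb2 : ∀ k l m n : ℤ,
      τ (k+1) (l-1) m n * τ (k-1) (l-1) (m-1) (n+1) + τ k (l-2) (m-1) (n+1) * τ k l m n
        = Complex.I * c * (τ k (l-1) (m-1) n * τ k (l-1) m (n+1)))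
    (hb3 : ∀ k l m n : ℤ,
      τ k (l-2) m (n+1) * τ (k-1) (l-1) (m-1) (n+1) + τ k (l-2) (m-1) (n+1) * τ (k-1) (l-1) m (n+1)
        = -(Complex.I * c * r) * (τ (k-1) (l-2) (m-1) (n+1) * τ k (l-1) m (n+1)))
    (hb4 : ∀ k l m n : ℤ,
      τ k (l-2) (m-1) n * τ (k-1) (l-1) m (n+1) - τ k (l-2) m (n+1) * τ (k-1) (l-1) (m-1) n
        = Complex.I * c * (τ k (l-1) m n * τ (k-1) (l-2) (m-1) (n+1)))
    (z : ℤ → ℤ → ℂ)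
    (hz_even : ∀ n m N : ℤ, n + m = 2*N →
      z n m = (-1 : ℂ) ^ (((n - m + 2) * (n - m + 1)) / 2)
          * τ (-N+1) (-N-1) 0 m / τ (-N) (-N) 0 m)
    (hz_odd : ∀ n m N : ℤ, n + m = 2*N - 1 →
      z n m = (-1 : ℂ) ^ (((n - m + 2) * (n - m + 1)) / 2)
          * τ (-N+1) (-N-1) (-1) m / τ (-N) (-N) (-1) m) :
    ∀ n m : ℤ,
      z n m - z (n+1) m ≠ 0 ∧ z (n+1) (m+1) - z n (m+1) ≠ 0
      ∧ z (n+1) m - z (n+1) (m+1) ≠ 0 ∧ z n (m+1) - z n m ≠ 0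
      ∧ ((z n m - z (n+1) m) * (z (n+1) (m+1) - z n (m+1)))
          / ((z (n+1) m - z (n+1) (m+1)) * (z n (m+1) - z n m))
        = r ^ 2 := by
  intro n m
  have hSne : ((-1 : ℂ) ^ (((n - m + 2) * (n - m + 1)) / 2)) ≠ 0 :=
    zpow_ne_zero _ (by norm_num)
  rcases Int.even_or_odd (n + m) with ⟨N, hN0⟩ | ⟨N0, hN0⟩
  · -- even case : n + m = 2 * N
    have hN : n + m = 2 * N := by omega
    have hA : z n m = (-1 : ℂ) ^ (((n - m + 2) * (n - m + 1)) / 2)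
        * τ (-N+1) (-N-1) 0 m / τ (-N) (-N) 0 m := hz_even n m N hN
    have hB : z (n+1) m = (-1 : ℂ) ^ (((n - m + 2) * (n - m + 1)) / 2)
        * τ (-N) (-N-2) (-1) m / τ (-N-1) (-N-1) (-1) m := by
      rw [hz_odd (n+1) m (N+1) (by omega),
        show -(N+1)+1 = -N from by ring, show -(N+1)-1 = -N-2 from by ring,
        show -(N+1) = -N-1 from by ring,
        show (n + 1 - m + 2) * (n + 1 - m + 1) = (n - m + 2) * (n - m + 1) + (n-m+2)*2 from by ring,
        Int.add_mul_ediv_right _ _ two_ne_zero,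
        zpow_add₀ (by norm_num : (-1:ℂ) ≠ 0),
        Even.neg_one_zpow (n := n - m + 2) ⟨N-m+1, by omega⟩, mul_one]
    have hC : z n (m+1) = -((-1 : ℂ) ^ (((n - m + 2) * (n - m + 1)) / 2))
        * τ (-N) (-N-2) (-1) (m+1) / τ (-N-1) (-N-1) (-1) (m+1) := by
      rw [hz_odd n (m+1) (N+1) (by omega),
        show -(N+1)+1 = -N from by ring, show -(N+1)-1 = -N-2 from by ring,
        show -(N+1) = -N-1 from by ring,
        show (n - (m+1) + 2) * (n - (m+1) + 1) = (n - m + 2) * (n - m + 1) + (-(n-m+1))*2 from by ring,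
        Int.add_mul_ediv_right _ _ two_ne_zero,
        zpow_add₀ (by norm_num : (-1:ℂ) ≠ 0),
        Odd.neg_one_zpow (n := -(n - m + 1)) ⟨-(N-m)-1, by omega⟩]
      ring
    have hD : z (n+1) (m+1) = (-1 : ℂ) ^ (((n - m + 2) * (n - m + 1)) / 2)
        * τ (-N) (-N-2) 0 (m+1) / τ (-N-1) (-N-1) 0 (m+1) := by
      rw [hz_even (n+1) (m+1) (N+1) (by omega),
        show -(N+1)+1 = -N from by ring, show -(N+1)-1 = -N-2 from by ring,
        show -(N+1) = -N-1 from by ring,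
        show (n + 1 - (m+1) + 2) * (n + 1 - (m+1) + 1) = (n - m + 2) * (n - m + 1) from by ring]
    have key1 := hb1 (-N) (-N) 0 m
    have key2 := hb2 (-N) (-N) 0 m
    have key3 := hb3 (-N) (-N) 0 m
    have key4 := hb4 (-N) (-N) 0 m
    rw [show (0:ℤ)-1 = -1 from by norm_num] at key1 key2 key3 key4
    set S : ℂ := (-1 : ℂ) ^ (((n - m + 2) * (n - m + 1)) / 2) with hS
    have hAB : z n m - z (n+1) m
        = Complex.I*c*r*(S*(τ (-N) (-N-1) (-1) m * τ (-N) (-N-1) 0 m))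
          /(τ (-N) (-N) 0 m * τ (-N-1) (-N-1) (-1) m) := by
      rw [hA, hB, div_sub_div _ _ (hτ (-N) (-N) 0 m) (hτ (-N-1) (-N-1) (-1) m)]
      congr 1
      linear_combination S * key1
    have hDC : z (n+1) (m+1) - z n (m+1)
        = -(Complex.I*c*r)*(S*(τ (-N-1) (-N-2) (-1) (m+1) * τ (-N) (-N-1) 0 (m+1)))
          /(τ (-N-1) (-N-1) 0 (m+1) * τ (-N-1) (-N-1) (-1) (m+1)) := by
      rw [hD, hC, div_sub_div _ _ (hτ (-N-1) (-N-1) 0 (m+1)) (hτ (-N-1) (-N-1) (-1) (m+1))]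
      congr 1
      linear_combination S * key3
    have hBD : z (n+1) m - z (n+1) (m+1)
        = Complex.I*c*(S*(τ (-N) (-N-1) 0 m * τ (-N-1) (-N-2) (-1) (m+1)))
          /(τ (-N-1) (-N-1) (-1) m * τ (-N-1) (-N-1) 0 (m+1)) := by
      rw [hB, hD, div_sub_div _ _ (hτ (-N-1) (-N-1) (-1) m) (hτ (-N-1) (-N-1) 0 (m+1))]
      congr 1
      linear_combination S * key4
    have hCA : z n (m+1) - z n m
        = -(Complex.I*c)*(S*(τ (-N) (-N-1) (-1) m * τ (-N) (-N-1) 0 (m+1)))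
          /(τ (-N) (-N) 0 m * τ (-N-1) (-N-1) (-1) (m+1)) := by
      rw [hC, hA, div_sub_div _ _ (hτ (-N-1) (-N-1) (-1) (m+1)) (hτ (-N) (-N) 0 m)]
      rw [show τ (-N-1) (-N-1) (-1) (m+1) * τ (-N) (-N) 0 m
          = τ (-N) (-N) 0 m * τ (-N-1) (-N-1) (-1) (m+1) from by ring]
      congr 1
      linear_combination (-S) * key2
    exact cross_key Complex.I c r Complex.I_ne_zero hc hr _ _ _ _ _ _ _ _ _ _ _ _
      (hτ _ _ _ _) (hτ _ _ _ _) (hτ _ _ _ _) (hτ _ _ _ _)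
      (mul_ne_zero hSne (mul_ne_zero (hτ _ _ _ _) (hτ _ _ _ _)))
      (mul_ne_zero hSne (mul_ne_zero (hτ _ _ _ _) (hτ _ _ _ _)))
      (mul_ne_zero hSne (mul_ne_zero (hτ _ _ _ _) (hτ _ _ _ _)))
      (mul_ne_zero hSne (mul_ne_zero (hτ _ _ _ _) (hτ _ _ _ _)))
      hAB hDC hBD hCA (by ring)
  · -- odd case : n + m = 2 * N - 1 with N := N0 + 1
    set N : ℤ := N0 + 1 with hNdef
    have hN : n + m = 2 * N - 1 := by omega
    have hA : z n m = (-1 : ℂ) ^ (((n - m + 2) * (n - m + 1)) / 2)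
        * τ (-N+1) (-N-1) (-1) m / τ (-N) (-N) (-1) m := hz_odd n m N hN
    have hB : z (n+1) m = -((-1 : ℂ) ^ (((n - m + 2) * (n - m + 1)) / 2))
        * τ (-N+1) (-N-1) 0 m / τ (-N) (-N) 0 m := by
      rw [hz_even (n+1) m N (by omega),
        show (n + 1 - m + 2) * (n + 1 - m + 1) = (n - m + 2) * (n - m + 1) + (n-m+2)*2 from by ring,
        Int.add_mul_ediv_right _ _ two_ne_zero,
        zpow_add₀ (by norm_num : (-1:ℂ) ≠ 0),
        Odd.neg_one_zpow (n := n - m + 2) ⟨N-m, by omega⟩]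
      ring
    have hC : z n (m+1) = (-1 : ℂ) ^ (((n - m + 2) * (n - m + 1)) / 2)
        * τ (-N+1) (-N-1) 0 (m+1) / τ (-N) (-N) 0 (m+1) := by
      rw [hz_even n (m+1) N (by omega),
        show (n - (m+1) + 2) * (n - (m+1) + 1) = (n - m + 2) * (n - m + 1) + (-(n-m+1))*2 from by ring,
        Int.add_mul_ediv_right _ _ two_ne_zero,
        zpow_add₀ (by norm_num : (-1:ℂ) ≠ 0),
        Even.neg_one_zpow (n := -(n - m + 1)) ⟨-(N-m), by omega⟩, mul_one]
    have hD : z (n+1) (m+1) = (-1 : ℂ) ^ (((n - m + 2) * (n - m + 1)) / 2)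
        * τ (-N) (-N-2) (-1) (m+1) / τ (-N-1) (-N-1) (-1) (m+1) := by
      rw [hz_odd (n+1) (m+1) (N+1) (by omega),
        show -(N+1)+1 = -N from by ring, show -(N+1)-1 = -N-2 from by ring,
        show -(N+1) = -N-1 from by ring,
        show (n + 1 - (m+1) + 2) * (n + 1 - (m+1) + 1) = (n - m + 2) * (n - m + 1) from by ring]
    have keyA := hb3 (-N+1) (-N+1) 0 (m-1)
    have keyCA := hb4 (-N+1) (-N+1) 0 m
    have keyDC := hb1 (-N) (-N) 0 (m+1)
    have keyBD := hb2 (-N) (-N) 0 m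
    rw [show (0:ℤ)-1 = -1 from by norm_num, show -N+1-2 = -N-1 from by ring,
        show -N+1-1 = -N from by ring, show m-1+1 = m from by ring] at keyA
    rw [show (0:ℤ)-1 = -1 from by norm_num, show -N+1-2 = -N-1 from by ring,
        show -N+1-1 = -N from by ring] at keyCA
    rw [show (0:ℤ)-1 = -1 from by norm_num] at keyDC
    rw [show (0:ℤ)-1 = -1 from by norm_num] at keyBD
    set S : ℂ := (-1 : ℂ) ^ (((n - m + 2) * (n - m + 1)) / 2) with hS
    have hAB : z n m - z (n+1) m
        = Complex.I*c*r*(-S*(τ (-N) (-N-1) (-1) m * τ (-N+1) (-N) 0 m))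
          /(τ (-N) (-N) (-1) m * τ (-N) (-N) 0 m) := by
      rw [hA, hB, div_sub_div _ _ (hτ (-N) (-N) (-1) m) (hτ (-N) (-N) 0 m)]
      congr 1
      linear_combination S * keyA
    have hDC : z (n+1) (m+1) - z n (m+1)
        = -(Complex.I*c*r)*(S*(τ (-N) (-N-1) (-1) (m+1) * τ (-N) (-N-1) 0 (m+1)))
          /(τ (-N-1) (-N-1) (-1) (m+1) * τ (-N) (-N) 0 (m+1)) := by
      rw [hD, hC, div_sub_div _ _ (hτ (-N-1) (-N-1) (-1) (m+1)) (hτ (-N) (-N) 0 (m+1))]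
      congr 1
      linear_combination (-S) * keyDC
    have hBD : z (n+1) m - z (n+1) (m+1)
        = Complex.I*c*(-S*(τ (-N) (-N-1) (-1) m * τ (-N) (-N-1) 0 (m+1)))
          /(τ (-N) (-N) 0 m * τ (-N-1) (-N-1) (-1) (m+1)) := by
      rw [hB, hD, div_sub_div _ _ (hτ (-N) (-N) 0 m) (hτ (-N-1) (-N-1) (-1) (m+1))]
      congr 1
      linear_combination (-S) * keyBD
    have hCA : z n (m+1) - z n m
        = -(Complex.I*c)*(S*(τ (-N+1) (-N) 0 m * τ (-N) (-N-1) (-1) (m+1)))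
          /(τ (-N) (-N) (-1) m * τ (-N) (-N) 0 (m+1)) := by
      rw [hC, hA, div_sub_div _ _ (hτ (-N) (-N) 0 (m+1)) (hτ (-N) (-N) (-1) m)]
      rw [show τ (-N) (-N) 0 (m+1) * τ (-N) (-N) (-1) m
          = τ (-N) (-N) (-1) m * τ (-N) (-N) 0 (m+1) from by ring]
      congr 1
      linear_combination (-S) * keyCA
    exact cross_key Complex.I c r Complex.I_ne_zero hc hr _ _ _ _ _ _ _ _ _ _ _ _
      (hτ _ _ _ _) (hτ _ _ _ _) (hτ _ _ _ _) (hτ _ _ _ _)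
      (by exact mul_ne_zero (neg_ne_zero.mpr hSne) (mul_ne_zero (hτ _ _ _ _) (hτ _ _ _ _)))
      (mul_ne_zero hSne (mul_ne_zero (hτ _ _ _ _) (hτ _ _ _ _)))
      (by exact mul_ne_zero (neg_ne_zero.mpr hSne) (mul_ne_zero (hτ _ _ _ _) (hτ _ _ _ _)))
      (mul_ne_zero hSne (mul_ne_zero (hτ _ _ _ _) (hτ _ _ _ _)))
      hAB hDC hBD hCA (by ring)
end

section
/- Let z, v, w : ℤ³ → ℂ satisfy, for each i = 1,2,3 and all l = (l₁,l₂,l₃) ∈ ℤ³: z(l+eᵢ) − z(l) = v(l+eᵢ)·w(l), where eᵢ is the i-th standard unit vector. Then z satisfies the discrete Schwarzian KP equation in product form at every point of ℤ³: (z_{l₁+1}−z_{l₁+1,l₂+1})(z_{l₂+1}−z_{l₂+1,l₃+1})(z_{l₃+1}−z_{l₁+1,l₃+1}) = −(z_{l₁+1,l₂+1}−z_{l₂+1})(z_{l₂+1,l₃+1}−z_{l₃+1})(z_{l₁+1,l₃+1}−z_{l₁+1}). -/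
/-- If `z(l+eᵢ) − z(l) = v(l+eᵢ)·w(l)` for `i = 1,2,3`, then `z` satisfies the discrete
Schwarzian KP equation in product form. -/
theorem stmt_13 (z v w : ℤ → ℤ → ℤ → ℂ)
    (h1 : ∀ l₁ l₂ l₃ : ℤ, z (l₁+1) l₂ l₃ - z l₁ l₂ l₃ = v (l₁+1) l₂ l₃ * w l₁ l₂ l₃)
    (h2 : ∀ l₁ l₂ l₃ : ℤ, z l₁ (l₂+1) l₃ - z l₁ l₂ l₃ = v l₁ (l₂+1) l₃ * w l₁ l₂ l₃)
    (h3 : ∀ l₁ l₂ l₃ : ℤ, z l₁ l₂ (l₃+1) - z l₁ l₂ l₃ = v l₁ l₂ (l₃+1) * w l₁ l₂ l₃) :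
    ∀ l₁ l₂ l₃ : ℤ,
      (z (l₁+1) l₂ l₃ - z (l₁+1) (l₂+1) l₃) * (z l₁ (l₂+1) l₃ - z l₁ (l₂+1) (l₃+1))
          * (z l₁ l₂ (l₃+1) - z (l₁+1) l₂ (l₃+1))
        = -((z (l₁+1) (l₂+1) l₃ - z l₁ (l₂+1) l₃) * (z l₁ (l₂+1) (l₃+1) - z l₁ l₂ (l₃+1))
            * (z (l₁+1) l₂ (l₃+1) - z (l₁+1) l₂ l₃)) := by
  intro l₁ l₂ l₃
  have A : z (l₁+1) l₂ l₃ - z (l₁+1) (l₂+1) l₃ = -(v (l₁+1) (l₂+1) l₃ * w (l₁+1) l₂ l₃) := by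
    linear_combination -(h2 (l₁+1) l₂ l₃)
  have B : z l₁ (l₂+1) l₃ - z l₁ (l₂+1) (l₃+1) = -(v l₁ (l₂+1) (l₃+1) * w l₁ (l₂+1) l₃) := by
    linear_combination -(h3 l₁ (l₂+1) l₃)
  have C : z l₁ l₂ (l₃+1) - z (l₁+1) l₂ (l₃+1) = -(v (l₁+1) l₂ (l₃+1) * w l₁ l₂ (l₃+1)) := by
    linear_combination -(h1 l₁ l₂ (l₃+1))
  have D : z (l₁+1) (l₂+1) l₃ - z l₁ (l₂+1) l₃ = v (l₁+1) (l₂+1) l₃ * w l₁ (l₂+1) l₃ :=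
    h1 l₁ (l₂+1) l₃
  have E : z l₁ (l₂+1) (l₃+1) - z l₁ l₂ (l₃+1) = v l₁ (l₂+1) (l₃+1) * w l₁ l₂ (l₃+1) :=
    h2 l₁ l₂ (l₃+1)
  have F : z (l₁+1) l₂ (l₃+1) - z (l₁+1) l₂ l₃ = v (l₁+1) l₂ (l₃+1) * w (l₁+1) l₂ l₃ :=
    h3 (l₁+1) l₂ l₃
  rw [A, B, C, D, E, F]; ring
end

section
/- Let z, u : ℤ² → ℂ and f₁, f₂ : ℤ → ℂ satisfy, for all (l₁,l₂) ∈ ℤ²: z(l₁+1,l₂) − z(l₁,l₂) = f₁(l₁)·u(l₁+1,l₂)·u(l₁,l₂) and z(l₁,l₂+1) − z(l₁,l₂) = f₂(l₂)·u(l₁,l₂+1)·u(l₁,l₂). Then for all (l₁,l₂) ∈ ℤ²: (z(l₁,l₂)−z(l₁+1,l₂))·(z(l₁+1,l₂+1)−z(l₁,l₂+1))·f₂(l₂)² = f₁(l₁)²·(z(l₁+1,l₂)−z(l₁+1,l₂+1))·(z(l₁,l₂+1)−z(l₁,l₂)); that is, z satisfies the discrete Schwarzian KdV equation in product form with λ(l₁)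 = f₁(l₁)² and μ(l₂) = f₂(l₂)². -/
/-- If `z(l₁+1,l₂) − z(l₁,l₂) = f₁(l₁)u(l₁+1,l₂)u(l₁,l₂)` and
`z(l₁,l₂+1) − z(l₁,l₂) = f₂(l₂)u(l₁,l₂+1)u(l₁,l₂)`, then `z` satisfies the discrete
Schwarzian KdV equation in product form with `λ = f₁²` and `μ = f₂²`. -/
theorem stmt_14 (z u : ℤ → ℤ → ℂ) (f₁ f₂ : ℤ → ℂ)
    (h1 : ∀ l₁ l₂ : ℤ, z (l₁+1) l₂ - z l₁ l₂ = f₁ l₁ * u (l₁+1) l₂ * u l₁ l₂)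
    (h2 : ∀ l₁ l₂ : ℤ, z l₁ (l₂+1) - z l₁ l₂ = f₂ l₂ * u l₁ (l₂+1) * u l₁ l₂) :
    ∀ l₁ l₂ : ℤ,
      (z l₁ l₂ - z (l₁+1) l₂) * (z (l₁+1) (l₂+1) - z l₁ (l₂+1)) * f₂ l₂ ^ 2
        = f₁ l₁ ^ 2 * ((z (l₁+1) l₂ - z (l₁+1) (l₂+1)) * (z l₁ (l₂+1) - z l₁ l₂)) := by
  intro l₁ l₂
  have a := h1 l₁ l₂
  have b := h1 l₁ (l₂+1)
  have c := h2 l₁ l₂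
  have d := h2 (l₁+1) l₂
  have e1 : z l₁ l₂ - z (l₁+1) l₂ = -(f₁ l₁ * u (l₁+1) l₂ * u l₁ l₂) := by linear_combination -a
  have e2 : z (l₁+1) (l₂+1) - z l₁ (l₂+1) = f₁ l₁ * u (l₁+1) (l₂+1) * u l₁ (l₂+1) := by
    exact b
  have e3 : z (l₁+1) l₂ - z (l₁+1) (l₂+1) = -(f₂ l₂ * u (l₁+1) (l₂+1) * u (l₁+1) l₂) := by
    linear_combination -d
  rw [e1, e2, e3, c]
  ring
end

section
/- Let b ∈ ℂ, a₁, a₂ : ℤ → ℂ, C ∈ ℂ∖{0}, and let σ : ℤ⁴ → ℂ (arguments (l₁,l₂,m,s)) satisfy, for k = 1,2 and all arguments: (1+a_k(l_k)b)·σ(l+e_k,m+1,s)·σ(l,m,s) − σ(l+e_k,m,s)·σ(l,m+1,s) = a_k(l_k)·b·σ(l+e_k,m,s+1)·σ(l,m+1,s−1), where l = (l₁,l₂), and also σ(l,m+1,s) = C·σ(l,m,s+2) for all (l,m,s). Then for each fixed m, the function σ satisfies, for k = 1,2 and all (l₁,l₂,s): (1+a_k(l_k)b)·σ(l+e_k,m,s+2)·σ(l,m,s)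 − σ(l+e_k,m,s)·σ(l,m,s+2) = a_k(l_k)·b·σ(l+e_k,m,s+1)·σ(l,m,s+1). -/
/-- Reduction of the bilinear discrete two-dimensional Toda lattice equations to the bilinear
form of the discrete Schwarzian KdV equation: the auxiliary `m`-shift is eliminated using the
constraint `σ(l,m+1,s) = C·σ(l,m,s+2)`. -/
theorem stmt_18 (b : ℂ) (a₁ a₂ : ℤ → ℂ) (C : ℂ) (hC : C ≠ 0)
    (σ : ℤ → ℤ → ℤ → ℤ → ℂ)
    (hσ1 : ∀ l₁ l₂ m s : ℤ,
      (1 + a₁ l₁ * b) * σ (l₁+1) l₂ (m+1) s * σ l₁ l₂ m s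
          - σ (l₁+1) l₂ m s * σ l₁ l₂ (m+1) s
        = a₁ l₁ * b * σ (l₁+1) l₂ m (s+1) * σ l₁ l₂ (m+1) (s-1))
    (hσ2 : ∀ l₁ l₂ m s : ℤ,
      (1 + a₂ l₂ * b) * σ l₁ (l₂+1) (m+1) s * σ l₁ l₂ m s
          - σ l₁ (l₂+1) m s * σ l₁ l₂ (m+1) s
        = a₂ l₂ * b * σ l₁ (l₂+1) m (s+1) * σ l₁ l₂ (m+1) (s-1))
    (hred : ∀ l₁ l₂ m s : ℤ, σ l₁ l₂ (m+1) s = C * σ l₁ l₂ m (s+2)) :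
    ∀ m : ℤ, ∀ l₁ l₂ s : ℤ,
      ((1 + a₁ l₁ * b) * σ (l₁+1) l₂ m (s+2) * σ l₁ l₂ m s
          - σ (l₁+1) l₂ m s * σ l₁ l₂ m (s+2)
        = a₁ l₁ * b * σ (l₁+1) l₂ m (s+1) * σ l₁ l₂ m (s+1))
      ∧ ((1 + a₂ l₂ * b) * σ l₁ (l₂+1) m (s+2) * σ l₁ l₂ m s
          - σ l₁ (l₂+1) m s * σ l₁ l₂ m (s+2)
        = a₂ l₂ * b * σ l₁ (l₂+1) m (s+1) * σ l₁ l₂ m (s+1)) := by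
  intro m l₁ l₂ s
  constructor
  · have h := hσ1 l₁ l₂ m s
    rw [hred, hred, hred] at h
    have hs : s - 1 + 2 = s + 1 := by ring
    rw [hs] at h
    apply mul_left_cancel₀ hC
    linear_combination h
  · have h := hσ2 l₁ l₂ m s
    rw [hred, hred, hred] at h
    have hs : s - 1 + 2 = s + 1 := by ring
    rw [hs] at h
    apply mul_left_cancel₀ hC
    linear_combination h
end
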